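/- arXiv:1911.00970 — 12 statements merged into one kernel-verified Lean document; each statement's English description precedes it below -/
import Mathlib

section
/- Let p be an odd prime, q = p^c a power of p, and let m, n be integers with 0 < m < p and m < n ≤ (q + m)/2. Then there exist a field F of characteristic p and an algebra L of type n over F, with a choice of generators, whose sequence (β_i)_{i>n} satisfies the identity (1 − X^q) · Σ_{i>n} β_i X^i = (1 − X^q) · X^{q+m+1−n} (X − 1)^{n−m−1} − X^{q+m+1−n} (X − 1)^{n−1} in the formal power series ring F[[X]]. -/
/-- A witness for an algebra of type `n` over a field of characteristic `p`,
together with a choice of generators, whose sequence `β` has generating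
function `Σ_{i>n} β_i X^i` satisfying the prescribed rational identity
`(1 − X^q)·Σ_{i>n} β_i X^i
   = (1 − X^q)·X^{q+m+1−n}(X−1)^{n−m−1} − X^{q+m+1−n}(X−1)^{n−1}`
in `F⟦X⟧`. -/
structure GenFunTypeNWitness (p n q m : ℕ) : Type 1 where
  F : Type
  [fieldF : Field F]
  [charF : CharP F p]
  L : Type
  [lieRingL : LieRing L]
  [lieAlgebraL : LieAlgebra F L]
  Lc : ℕ → Submodule F L
  internal : DirectSum.IsInternal Lc
  zero_bot : Lc 0 = ⊥
  grade : ∀ i j : ℕ, ∀ x ∈ Lc i, ∀ y ∈ Lc j, ⁅x, y⁆ ∈ Lc (i + j)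
  dim_one : Module.finrank F (Lc 1) = 1
  mid_bot : ∀ i : ℕ, 1 < i → i < n → Lc i = ⊥
  dim_n : ∀ i : ℕ, n ≤ i → Module.finrank F (Lc i) = 1
  gen : ∀ i : ℕ, n ≤ i →
    Lc (i + 1) = Submodule.span F {w : L | ∃ x ∈ Lc i, ∃ u ∈ Lc 1, w = ⁅x, u⁆}
  z : L
  z_mem : z ∈ Lc 1
  z_ne : z ≠ 0
  e : ℕ → L
  e_mem : e n ∈ Lc n
  e_ne : e n ≠ 0
  e_rec : ∀ i : ℕ, n ≤ i → e (i + 1) = ⁅e i, z⁆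
  β : ℕ → F
  bracket_eq : ∀ i : ℕ, n < i → ⁅e i, e n⁆ = β i • e (i + n)
  gen_fun :
    (1 - PowerSeries.X ^ q) * PowerSeries.mk (fun i => if n < i then β i else 0) =
      (1 - PowerSeries.X ^ q) * PowerSeries.X ^ (q + m + 1 - n) *
          (PowerSeries.X - 1) ^ (n - m - 1) -
        PowerSeries.X ^ (q + m + 1 - n) * (PowerSeries.X - 1) ^ (n - 1)

namespace GenFunWitness


open Nat

/-- Trinomial revision in `ℕ` with zero conventions. -/
lemma tri (r u v : ℕ) (hu : u ≤ r) :
    r.choose u * (r - u).choose v = r.choose v * (r - v).choose u := by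
  rcases le_or_gt v r with hv | hv
  · rcases le_or_gt v (r - u) with hvu | hvu
    · have h1 : r.choose u = r.choose (r - u) := (Nat.choose_symm hu).symm
      rw [h1, Nat.choose_mul (n := r) hvu]
      have h2 : r - u - v ≤ r - v := by omega
      have h3 : (r - v) - (r - u - v) = u := by omega
      rw [show (r - u - v) = (r - v) - u by omega]
      rw [Nat.choose_symm (by omega : u ≤ r - v)]
    · rw [Nat.choose_eq_zero_of_lt hvu]
      have : r - v < u := by omega
      rw [Nat.choose_eq_zero_of_lt this, mul_zero, mul_zero]
  · rw [Nat.choose_eq_zero_of_lt (by omega : r - u < v), Nat.choose_eq_zero_of_lt hv,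
      mul_zero, zero_mul]

section Chars

variable {p : ℕ} (hp : p.Prime) {c q : ℕ} (hq : q = p ^ c)

include hp hq

/-- `choose q k = 0` in `ZMod p` for `0 < k < q`. -/
lemma cast_choose_q (k : ℕ) (h0 : k ≠ 0) (h1 : k ≠ q) :
    ((q.choose k : ℕ) : ZMod p) = 0 := by
  rw [ZMod.natCast_eq_zero_iff]
  subst hq
  exact hp.dvd_choose_pow h0 h1

/-- `choose (q-1) d = (-1)^d` in `ZMod p` for `d ≤ q - 1`. -/
lemma choose_q_sub_one (hq1 : 1 ≤ q) (d : ℕ) (hd : d ≤ q - 1) :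
    (((q - 1).choose d : ℕ) : ZMod p) = (-1 : ZMod p) ^ d := by
  induction d with
  | zero => simp
  | succ d ih =>
    have hd' : d ≤ q - 1 := by omega
    have key : q.choose (d + 1) = (q - 1).choose d + (q - 1).choose (d + 1) := by
      obtain ⟨r, hr⟩ : ∃ r, q = r + 1 := ⟨q - 1, by omega⟩
      subst hr
      simp only [Nat.add_sub_cancel]
      rw [Nat.choose_succ_succ']
    have hcast : ((q.choose (d + 1) : ℕ) : ZMod p) = 0 :=
      cast_choose_q hp hq (d + 1) (by omega) (by omega)
    rw [key] at hcast
    push_cast at hcast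
    have := ih hd'
    rw [this] at hcast
    have : (((q - 1).choose (d + 1) : ℕ) : ZMod p) = -((-1 : ZMod p) ^ d) := by
      linear_combination hcast
    rw [this, pow_succ]
    ring

/-- `choose (q-1-A) B = (-1)^B * choose (A+B) A` in `ZMod p` for `A + B ≤ q - 1`. -/
lemma choose_q_sub_one_sub (hq1 : 1 ≤ q) (B A : ℕ) (h : A + B ≤ q - 1) :
    (((q - 1 - A).choose B : ℕ) : ZMod p) = (-1 : ZMod p) ^ B * ((A + B).choose A : ℕ) := by
  induction B generalizing A with
  | zero => simp
  | succ B ihB =>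
    induction A with
    | zero =>
      simpa using choose_q_sub_one hp hq hq1 (B + 1) (by omega)
    | succ A ihA =>
      -- Pascal : choose (q-1-A) (B+1) = choose (q-2-A) B + choose (q-2-A) (B+1)
      have hA : A + (B + 1) ≤ q - 1 := by omega
      have pascal : (q - 1 - A).choose (B + 1)
          = (q - 1 - (A + 1)).choose B + (q - 1 - (A + 1)).choose (B + 1) := by
        obtain ⟨r, hr⟩ : ∃ r, q - 1 - A = r + 1 ∧ q - 1 - (A+1) = r := ⟨q - 2 - A, by omega⟩
        rw [hr.1, hr.2, Nat.choose_succ_succ']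
      have e1 := ihA hA
      have e2 := ihB (A + 1) (by omega)
      rw [pascal] at e1
      push_cast at e1 e2 ⊢
      have e3 : (((q - 1 - (A + 1)).choose (B + 1) : ℕ) : ZMod p)
          = (-1 : ZMod p) ^ (B + 1) * ((A + B + 1).choose A : ℕ)
            - (-1 : ZMod p) ^ B * ((A + 1 + B).choose (A + 1) : ℕ) := by
      -- from e1 : (-1)^{B+1} * choose (A+B+1) A = cast1 + cast2 ; cast1 = e2
        have : ((A + (B + 1)).choose A : ZMod p) = ((A + B + 1).choose A : ℕ) := by
          norm_cast
        rw [this] at e1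
        linear_combination e1 - e2
      rw [e3]
      have hch : (A + 1 + (B + 1)).choose (A + 1)
          = (A + B + 1).choose A + (A + 1 + B).choose (A + 1) := by
        have : A + 1 + (B + 1) = (A + 1 + B) + 1 := by omega
        rw [this, Nat.choose_succ_succ]
        congr 1
        congr 1
        omega
      rw [hch]
      push_cast
      ring

end Chars

-- PART1INCLUDE


/-- structure constant building block. -/
def TT (p q m : ℕ) (i j : ℕ) : ZMod p :=
  if i ≤ q then (-1 : ZMod p) ^ (i + 1) * (((j - (m + 1)) % q).choose (q - i) : ℕ) else 0

/-- the structure constants. -/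
def CC (p q m : ℕ) (i j : ℕ) : ZMod p := TT p q m i j - TT p q m j i

section Main

variable {p : ℕ} (hp : p.Prime) {c q : ℕ} (hq : q = p ^ c) (hodd : Odd p)
variable {m n : ℕ} (hm : 1 ≤ m) (hmn : m < n) (hnq : n + 1 ≤ q)

include hq hodd in
lemma qodd : Odd q := hq ▸ hodd.pow

lemma CC_antisymm (i j : ℕ) : CC p q m i j = - CC p q m j i := by
  simp only [CC]; ring

lemma CC_self (i : ℕ) : CC p q m i i = 0 := by simp [CC]

include hq hodd in
lemma TT_q (j : ℕ) : TT p q m q j = 1 := by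
  have h2 : Even (q + 1) := (qodd hq hodd).add_one
  simp [TT, h2.neg_one_pow]

include hp hq hodd hm hmn hnq in
lemma TT_rec (i j : ℕ) (hi : 1 ≤ i) (hj : m + 1 ≤ j) :
    TT p q m i j = TT p q m i (j + 1) + TT p q m (i + 1) j := by
  have hq2 : 2 ≤ q := by omega
  rcases lt_trichotomy i q with hiq | rfl | hiq
  case inr.inr =>
    simp only [TT, if_neg (by omega : ¬ i ≤ q), if_neg (by omega : ¬ i + 1 ≤ q)]
    ring
  case inr.inl =>
    rw [TT_q hq hodd, TT_q hq hodd]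
    simp only [TT, if_neg (by omega : ¬ i + 1 ≤ i)]
    ring
  · -- i < q
    have hx : j + 1 - (m + 1) = (j - (m + 1)) + 1 := by omega
    set x := j - (m + 1) with hxdef
    have hrlt : x % q < q := Nat.mod_lt _ (by omega)
    simp only [TT, if_pos (by omega : i ≤ q), if_pos (by omega : i + 1 ≤ q), hx]
    rcases eq_or_lt_of_le (by omega : x % q + 1 ≤ q) with hr | hr
    · -- wrap case : x % q = q - 1
      have h1 : (x + 1) % q = 0 := by
        conv_lhs => rw [← Nat.mod_add_mod]
        rw [hr, Nat.mod_self]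
      rw [h1]
      have h0 : (0).choose (q - i) = 0 := Nat.choose_eq_zero_of_lt (by omega)
      rw [h0]
      have hrr : x % q = q - 1 := by omega
      rw [hrr]
      have hd1 : q - i = (q - i - 1) + 1 := by omega
      have e1 := choose_q_sub_one hp hq (by omega) (q - i) (by omega)
      have e2 := choose_q_sub_one hp hq (by omega) (q - (i + 1)) (by omega)
      have hqi : q - (i + 1) = q - i - 1 := by omega
      rw [hqi] at e2
      rw [hqi, e1, e2, hd1, pow_succ]
      push_cast
      ring
    · -- no wrap : (x+1) % q = x % q + 1
      have h1 : (x + 1) % q = x % q + 1 := by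
        conv_lhs => rw [← Nat.mod_add_mod]
        exact Nat.mod_eq_of_lt hr
      rw [h1]
      obtain ⟨d, hd⟩ : ∃ d, q - i = d + 1 := ⟨q - i - 1, by omega⟩
      have hqi : q - (i + 1) = d := by omega
      rw [hd, hqi, Nat.choose_succ_succ' (x % q) d]
      push_cast
      ring

include hp hq hodd hm hmn hnq in
lemma CC_rec (i j : ℕ) (hi : m + 1 ≤ i) (hj : m + 1 ≤ j) :
    CC p q m i j = CC p q m i (j + 1) + CC p q m (i + 1) j := by
  have e1 := TT_rec hp hq hodd hm hmn hnq i j (by omega) hj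
  have e2 := TT_rec hp hq hodd hm hmn hnq j i (by omega) hi
  simp only [CC]
  linear_combination e1 - e2

include hmn hnq in
lemma CC_zero {j k : ℕ} (hj : n ≤ j) (hk : n ≤ k) (hjk : j + k ≤ q + m) :
    CC p q m j k = 0 := by
  have hjq : j < q := by omega
  have hkq : k < q := by omega
  have h1 : (k - (m + 1)) % q = k - (m + 1) := Nat.mod_eq_of_lt (by omega)
  have h2 : (j - (m + 1)) % q = j - (m + 1) := Nat.mod_eq_of_lt (by omega)
  simp only [CC, TT, if_pos (le_of_lt hjq), if_pos (le_of_lt hkq), h1, h2,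
    Nat.choose_eq_zero_of_lt (by omega : k - (m + 1) < q - j),
    Nat.choose_eq_zero_of_lt (by omega : j - (m + 1) < q - k)]
  simp

/-- the key `ℕ`-level symmetry. -/
lemma chooseKey (q r a b : ℕ) (hr : r < q) (ha : 1 ≤ a) (haq : a ≤ q) (hb : 1 ≤ b)
    (hbq : b ≤ q) :
    r.choose (q - b) * ((r + b) % q).choose (q - a)
      = r.choose (q - a) * ((r + a) % q).choose (q - b) := by
  have key : ∀ u v : ℕ, 1 ≤ u → u ≤ q → 1 ≤ v → v ≤ q →
      r.choose (q - u) * ((r + u) % q).choose (q - v)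
        = r.choose (q - v) * (r - (q - v)).choose (q - u) := by
    intro u v hu huq hv hvq
    rcases lt_or_ge r (q - u) with hru | hru
    · rw [Nat.choose_eq_zero_of_lt hru, zero_mul]
      rcases lt_or_ge r (q - v) with hrv | hrv
      · rw [Nat.choose_eq_zero_of_lt hrv, zero_mul]
      · rw [Nat.choose_eq_zero_of_lt (by omega : r - (q - v) < q - u), mul_zero]
    · have hmod : (r + u) % q = r - (q - u) := by
        have h1 : q ≤ r + u := by omega
        have h2 : r + u - q < q := by omega
        rw [Nat.mod_eq_sub_mod h1, Nat.mod_eq_of_lt h2]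
        omega
      rw [hmod]
      exact tri r (q - u) (q - v) hru
  rw [key b a hb hbq ha haq, key a b ha haq hb hbq]
  rcases lt_or_ge r (q - a) with hra | hra
  · rw [Nat.choose_eq_zero_of_lt hra,
      Nat.choose_eq_zero_of_lt (by omega : r - (q - b) < q - a), zero_mul, mul_zero]
  · exact tri r (q - a) (q - b) hra

include hmn hnq in
lemma TT_sym (a b c : ℕ) (ha : n ≤ a) (hb : n ≤ b) (hc : n ≤ c) :
    TT p q m b c * TT p q m a (b + c) = TT p q m a c * TT p q m b (a + c) := by
  by_cases haq : a ≤ q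
  · by_cases hbq : b ≤ q
    · set r := (c - (m + 1)) % q with hrdef
      have hr : r < q := Nat.mod_lt _ (by omega)
      have hbc : (b + c - (m + 1)) % q = (r + b) % q := by
        have h1 : b + c - (m + 1) = (c - (m + 1)) + b := by omega
        rw [h1, hrdef, ← Nat.mod_add_mod]
      have hac : (a + c - (m + 1)) % q = (r + a) % q := by
        have h1 : a + c - (m + 1) = (c - (m + 1)) + a := by omega
        rw [h1, hrdef, ← Nat.mod_add_mod]
      simp only [TT, if_pos haq, if_pos hbq, hbc, hac, ← hrdef]
      have hkey := chooseKey q r a b hr (by omega) haq (by omega) hbq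
      push_cast
      calc (-1 : ZMod p) ^ (b + 1) * (r.choose (q - b) : ℕ) *
            ((-1 : ZMod p) ^ (a + 1) * (((r + b) % q).choose (q - a) : ℕ))
          = (-1 : ZMod p) ^ (a + 1) * (-1 : ZMod p) ^ (b + 1) *
            ((r.choose (q - b) * ((r + b) % q).choose (q - a) : ℕ) : ZMod p) := by
            push_cast; ring
        _ = (-1 : ZMod p) ^ (a + 1) * (-1 : ZMod p) ^ (b + 1) *
            ((r.choose (q - a) * ((r + a) % q).choose (q - b) : ℕ) : ZMod p) := by
            rw [hkey]
        _ = _ := by push_cast; ring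
    · simp only [TT, if_neg hbq, if_neg (by omega : ¬ b + c ≤ q)]
      ring
  · simp only [TT, if_neg haq, if_neg (by omega : ¬ a + c ≤ q)]
    ring

include hmn hnq in
lemma CC_leibniz (i j k : ℕ) (hi : n ≤ i) (hj : n ≤ j) (hk : n ≤ k) :
    CC p q m j k * CC p q m i (j + k)
      = CC p q m i j * CC p q m (i + j) k + CC p q m i k * CC p q m j (i + k) := by
  have k1 : CC p q m j k * TT p q m (j + k) i = 0 := by
    by_cases h : j + k ≤ q
    · rw [CC_zero hmn hnq hj hk (by omega), zero_mul]
    · simp only [TT, if_neg h, mul_zero]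
  have k2 : CC p q m i j * TT p q m (i + j) k = 0 := by
    by_cases h : i + j ≤ q
    · rw [CC_zero hmn hnq hi hj (by omega), zero_mul]
    · simp only [TT, if_neg h, mul_zero]
  have k3 : CC p q m i k * TT p q m (i + k) j = 0 := by
    by_cases h : i + k ≤ q
    · rw [CC_zero hmn hnq hi hk (by omega), zero_mul]
    · simp only [TT, if_neg h, mul_zero]
  have e1 := TT_sym (p := p) hmn hnq i j k hi hj hk
  have e2 := TT_sym (p := p) hmn hnq j k i hj hk hi
  have e3 := TT_sym (p := p) hmn hnq k i j hk hi hj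
  rw [Nat.add_comm k i, Nat.add_comm j i] at e2
  rw [Nat.add_comm k j] at e3
  simp only [CC] at k1 k2 k3 ⊢
  linear_combination e1 + e2 + e3 - k1 - k2 + k3

end Main

-- PARTS12


/-- helper for single-vector identities. -/
lemma single_helper {p : ℕ} {k1 k2 k3 : ℕ} {x y z : ZMod p} (h12 : k2 = k1) (h13 : k3 = k1)
    (hxyz : x = y + z) :
    Finsupp.single k1 x = Finsupp.single k2 y + Finsupp.single k3 z := by
  subst h12; subst h13; rw [← Finsupp.single_add, hxyz]

section Alg

variable (p q m n : ℕ)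

/-- index of the product of basis vectors. -/
def gind : ℕ → ℕ → ℕ
  | 0, 0 => 1
  | 0, b + 1 => b + 2
  | a + 1, 0 => a + 2
  | a + 1, b + 1 => a + b + n + 1

/-- coefficient of the product of basis vectors. -/
def gco : ℕ → ℕ → ZMod p
  | 0, 0 => 0
  | 0, _ + 1 => -1
  | _ + 1, 0 => 1
  | a + 1, b + 1 => CC p q m (a + n) (b + n)

/-- product of basis vectors. -/
noncomputable def gvec (a b : ℕ) : ℕ →₀ ZMod p := Finsupp.single (gind n a b) (gco p q m n a b)

/-- the bracket, as a bilinear map. -/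
noncomputable def brkt : (ℕ →₀ ZMod p) →ₗ[ZMod p] (ℕ →₀ ZMod p) →ₗ[ZMod p] (ℕ →₀ ZMod p) :=
  Finsupp.lsum (ZMod p) fun a => LinearMap.toSpanSingleton (ZMod p) _
    (Finsupp.lsum (ZMod p) fun b => LinearMap.toSpanSingleton (ZMod p) _ (gvec p q m n a b))

lemma brkt_single (a b : ℕ) (α β : ZMod p) :
    brkt p q m n (Finsupp.single a α) (Finsupp.single b β) = (α * β) • gvec p q m n a b := by
  simp [brkt, Finsupp.lsum_single, LinearMap.toSpanSingleton_apply, smul_smul]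

lemma gind_symm (a b : ℕ) : gind n a b = gind n b a := by
  rcases a with _ | a <;> rcases b with _ | b <;> simp [gind] <;> omega

lemma gco_anti (a b : ℕ) : gco p q m n a b = - gco p q m n b a := by
  rcases a with _ | a <;> rcases b with _ | b <;> simp [gco]
  exact CC_antisymm _ _

lemma gvec_anti (a b : ℕ) : gvec p q m n a b = - gvec p q m n b a := by
  rw [gvec, gvec, gind_symm, gco_anti, Finsupp.single_neg]

lemma brkt_anti (x y : ℕ →₀ ZMod p) :
    brkt p q m n x y = - brkt p q m n y x := by
  induction x using Finsupp.induction_linear with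
  | zero => simp
  | add f g hf hg => simp only [map_add, LinearMap.add_apply, hf, hg]; abel
  | single a α =>
    induction y using Finsupp.induction_linear with
    | zero => simp
    | add f g hf hg => simp only [map_add, LinearMap.add_apply, hf, hg]; abel
    | single b β =>
      rw [brkt_single, brkt_single, gvec_anti, smul_neg, mul_comm]

section withHyps

variable {p q} {cc : ℕ} (hp : p.Prime) (hq : q = p ^ cc) (hodd : Odd p)
variable {m n} (hm : 1 ≤ m) (hmn : m < n) (hnq : n + 1 ≤ q)

include hp hq hodd hm hmn hnq in
include hp hq hodd hm hmn hnq in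
/-- the fundamental Jacobi/Leibniz identity on basis products. -/
lemma gjac (a b c : ℕ) :
    gco p q m n b c • gvec p q m n a (gind n b c)
      = gco p q m n a b • gvec p q m n (gind n a b) c
        + gco p q m n a c • gvec p q m n b (gind n a c) := by
  have hrec : ∀ i j, m + 1 ≤ i → m + 1 ≤ j →
      CC p q m i j = CC p q m i (j + 1) + CC p q m (i + 1) j :=
    fun i j hi hj => CC_rec hp hq hodd hm hmn hnq i j hi hj
  rcases a with _ | a <;> rcases b with _ | b <;> rcases c with _ | c
  · -- 0 0 0
    simp [gco, gvec]
  · -- 0 0 (c+1)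
    simp [gind, gco, gvec]
  · -- 0 (b+1) 0
    simp [gind, gco, gvec]
  · -- 0 (b+1) (c+1) : derivation property
    simp only [gind, gco, gvec, Finsupp.smul_single, smul_eq_mul]
    refine single_helper ?_ ?_ ?_
    · omega
    · omega
    have e := hrec (b + n) (c + n) (by omega) (by omega)
    rw [show b + 1 + n = b + n + 1 by omega, show c + 1 + n = c + n + 1 by omega]
    linear_combination -e
  · -- (a+1) 0 0
    simp only [gind, gco, gvec, Finsupp.smul_single, smul_eq_mul, zero_mul,
      Finsupp.single_zero]
    rw [← Finsupp.single_add]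
    norm_num
  · -- (a+1) 0 (c+1)
    simp only [gind, gco, gvec, Finsupp.smul_single, smul_eq_mul]
    refine single_helper ?_ ?_ ?_
    · omega
    · omega
    have e := hrec (a + n) (c + n) (by omega) (by omega)
    rw [show a + 1 + n = a + n + 1 by omega, show c + 1 + n = c + n + 1 by omega]
    linear_combination e
  · -- (a+1) (b+1) 0
    simp only [gind, gco, gvec, Finsupp.smul_single, smul_eq_mul]
    refine single_helper ?_ ?_ ?_
    · omega
    · omega
    have e := hrec (a + n) (b + n) (by omega) (by omega)
    have ha := CC_antisymm (p := p) (q := q) (m := m) (a + n + 1) (b + n)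
    rw [show a + 1 + n = a + n + 1 by omega, show b + 1 + n = b + n + 1 by omega]
    linear_combination -e - ha
  · -- (a+1) (b+1) (c+1) : main Jacobi
    simp only [gind, gco, gvec, Finsupp.smul_single, smul_eq_mul]
    refine single_helper ?_ ?_ ?_
    · omega
    · omega
    have e := CC_leibniz (p := p) (q := q) hmn hnq (a + n) (b + n) (c + n)
      (by omega) (by omega) (by omega)
    rw [show b + c + n + n = b + n + (c + n) by omega,
      show a + b + n + n = a + n + (b + n) by omega,
      show a + c + n + n = a + n + (c + n) by omega]
    linear_combination e

end withHyps

end Alg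

-- PARTS123


section Alg2

variable (p q m n : ℕ)

/-- basis vectors. -/
noncomputable def bas (k : ℕ) : ℕ →₀ ZMod p := Finsupp.single k 1

lemma brkt_bas (a b : ℕ) : brkt p q m n (bas p a) (bas p b) = gvec p q m n a b := by
  rw [bas, bas, brkt_single, one_mul, one_smul]

section withHyps

variable {p q} {cc : ℕ} (hp : p.Prime) (hq : q = p ^ cc) (hodd : Odd p)
variable {m n} (hm : 1 ≤ m) (hmn : m < n) (hnq : n + 1 ≤ q)

include hp hq hodd hm hmn hnq in
lemma brkt_leibniz (x y z : ℕ →₀ ZMod p) :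
    brkt p q m n x (brkt p q m n y z)
      = brkt p q m n (brkt p q m n x y) z + brkt p q m n y (brkt p q m n x z) := by
  induction x using Finsupp.induction_linear with
  | zero => simp
  | add f g hf hg => simp only [map_add, LinearMap.add_apply, hf, hg]; abel
  | single a α =>
  induction y using Finsupp.induction_linear with
  | zero => simp
  | add f g hf hg => simp only [map_add, LinearMap.add_apply, hf, hg]; abel
  | single b β =>
  induction z using Finsupp.induction_linear with
  | zero => simp
  | add f g hf hg => simp only [map_add, LinearMap.add_apply, hf, hg]; abel
  | single c γ =>
    have h := gjac hp hq hodd hm hmn hnq a b c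
    have h' := congrArg (fun w => (α * β * γ) • w) h
    simp only [smul_add, smul_smul] at h'
    rw [brkt_single, brkt_single, brkt_single]
    rw [show gvec p q m n b c = Finsupp.single (gind n b c) (gco p q m n b c) from rfl,
      show gvec p q m n a b = Finsupp.single (gind n a b) (gco p q m n a b) from rfl,
      show gvec p q m n a c = Finsupp.single (gind n a c) (gco p q m n a c) from rfl]
    simp only [map_smul, LinearMap.smul_apply]
    rw [brkt_single, brkt_single, brkt_single]
    rw [smul_smul, smul_smul, smul_smul]
    rw [show β * γ * (α * gco p q m n b c) = α * β * γ * gco p q m n b c by ring,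
      show α * β * (gco p q m n a b * γ) = α * β * γ * gco p q m n a b by ring,
      show α * γ * (β * gco p q m n a c) = α * β * γ * gco p q m n a c by ring]
    exact h'

include hp hq hodd hm hmn hnq in
/-- The Lie ring structure. -/
noncomputable def lieRing : LieRing (ℕ →₀ ZMod p) :=
  { (inferInstance : AddCommGroup (ℕ →₀ ZMod p)) with
    bracket := fun x y => brkt p q m n x y
    add_lie := fun x y z => by simp only [map_add, LinearMap.add_apply]
    lie_add := fun x y z => by simp only [map_add]
    lie_self := fun x => by
      haveI : Fact p.Prime := ⟨hp⟩
      have h := brkt_anti p q m n x x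
      have h2 : (2 : ZMod p) • brkt p q m n x x = 0 := by
        rw [two_smul]
        nth_rewrite 2 [h]
        simp
      rcases smul_eq_zero.mp h2 with h3 | h3
      · exfalso
        have hp2 : p ≠ 2 := by
          rcases hodd with ⟨k, hk⟩; omega
        have : ((2 : ℕ) : ZMod p) = 0 := by exact_mod_cast h3
        rw [ZMod.natCast_eq_zero_iff] at this
        have := (Nat.prime_dvd_prime_iff_eq hp Nat.prime_two).mp this
        exact hp2 this
      · exact h3
    leibniz_lie := fun x y z => brkt_leibniz hp hq hodd hm hmn hnq x y z }

include hp hq hodd hm hmn hnq in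
/-- The Lie algebra structure. -/
noncomputable def lieAlgebra :
    @LieAlgebra (ZMod p) (ℕ →₀ ZMod p) _ (lieRing hp hq hodd hm hmn hnq) :=
  letI := lieRing hp hq hodd hm hmn hnq
  { (inferInstance : Module (ZMod p) (ℕ →₀ ZMod p)) with
    lie_smul := fun t x y => by
      show brkt p q m n x (t • y) = t • brkt p q m n x y
      simp only [map_smul] }

end withHyps

/-- The grading. -/
noncomputable def grading (i : ℕ) : Submodule (ZMod p) (ℕ →₀ ZMod p) :=
  if i = 1 then Submodule.span (ZMod p) {bas p 0}
  else if n ≤ i then Submodule.span (ZMod p) {bas p (i - n + 1)}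
  else ⊥

variable {n}

lemma grading_one : grading p n 1 = Submodule.span (ZMod p) {bas p 0} := if_pos rfl

lemma grading_ge (hn2 : 2 ≤ n) (i : ℕ) (hi : n ≤ i) :
    grading p n i = Submodule.span (ZMod p) {bas p (i - n + 1)} := by
  rw [grading, if_neg (by omega), if_pos hi]

lemma grading_bot (hn2 : 2 ≤ n) (i : ℕ) (hi : i ≠ 1) (hi2 : i < n) : grading p n i = ⊥ := by
  rw [grading, if_neg hi, if_neg (by omega)]

lemma bas_linearIndependent (hp : p.Prime) :
    LinearIndependent (ZMod p) (fun k : ℕ => bas p k) := by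
  haveI : Fact p.Prime := ⟨hp⟩
  have := (Finsupp.basisSingleOne (R := ZMod p) (ι := ℕ)).linearIndependent
  simpa [bas, Finsupp.coe_basisSingleOne] using this

/-- coordinate of a good degree. -/
def κfun (n j : ℕ) : ℕ := if j = 1 then 0 else j - n + 1

lemma κ_inj (hn2 : 2 ≤ n) {i j : ℕ} (hi : i = 1 ∨ n ≤ i) (hj : j = 1 ∨ n ≤ j)
    (hij : i ≠ j) : κfun n i ≠ κfun n j := by
  rcases hi with rfl | hi <;> rcases hj with rfl | hj <;> unfold κfun <;> split_ifs <;> omega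

lemma grading_good (hn2 : 2 ≤ n) {i : ℕ} (hi : i = 1 ∨ n ≤ i) :
    grading p n i = Submodule.span (ZMod p) {bas p (κfun n i)} := by
  rcases hi with rfl | hi
  · rw [grading_one]; rfl
  · rw [grading_ge p hn2 i hi, κfun, if_neg (by omega)]

lemma grading_isInternal (hp : p.Prime) (hn2 : 2 ≤ n) :
    DirectSum.IsInternal (grading p n) := by
  haveI : Fact p.Prime := ⟨hp⟩
  apply DirectSum.isInternal_submodule_of_iSupIndep_of_iSup_eq_top
  · -- independence
    have hI : iSupIndep (fun k : ℕ => Submodule.span (ZMod p) {bas p k}) :=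
      (bas_linearIndependent p hp).iSupIndep_span_singleton
    rw [iSupIndep_def]
    intro i
    by_cases hgood : i = 1 ∨ n ≤ i
    · rw [grading_good p hn2 hgood]
      refine (iSupIndep_def.mp hI (κfun n i)).mono_right ?_
      refine iSup_le fun j => iSup_le fun hji => ?_
      by_cases hjg : j = 1 ∨ n ≤ j
      · rw [grading_good p hn2 hjg]
        exact le_iSup₂ (f := fun (k : ℕ) (_ : k ≠ κfun n i) =>
          Submodule.span (ZMod p) {bas p k}) (κfun n j) (κ_inj hn2 hjg hgood hji)
      · push_neg at hjg
        rw [grading_bot p hn2 j hjg.1 (by omega)]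
        exact bot_le
    · push_neg at hgood
      rw [grading_bot p hn2 i hgood.1 (by omega)]
      exact disjoint_bot_left
  · -- spanning
    rw [eq_top_iff, ← (Finsupp.basisSingleOne (R := ZMod p) (ι := ℕ)).span_eq,
      Submodule.span_le]
    rintro x ⟨k, rfl⟩
    rcases k with _ | k'
    · apply Submodule.mem_iSup_of_mem 1
      rw [grading_one]
      exact Submodule.mem_span_singleton_self _
    · apply Submodule.mem_iSup_of_mem (k' + n)
      rw [grading_ge p hn2 (k' + n) (by omega)]
      have h1 : k' + n - n + 1 = k' + 1 := by omega
      rw [h1]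
      exact Submodule.mem_span_singleton_self _

end Alg2

-- PARTS1234


open PowerSeries

section GenFun

variable {p : ℕ}

lemma negpow_helper (x y : ℕ) (hxy : Even (x + y)) : (-1 : ZMod p) ^ x = (-1 : ZMod p) ^ y := by
  have h1 : (-1 : ZMod p) ^ (x + y) = 1 := hxy.neg_one_pow
  have hyy : Even (y + y) := ⟨y, rfl⟩
  have h2 : (-1 : ZMod p) ^ (y + y) = 1 := hyy.neg_one_pow
  calc (-1 : ZMod p) ^ x = (-1 : ZMod p) ^ x * (-1 : ZMod p) ^ (y + y) := by rw [h2, mul_one]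
    _ = (-1 : ZMod p) ^ (x + y) * (-1 : ZMod p) ^ y := by
        rw [← pow_add, ← pow_add, show x + (y + y) = x + y + y by omega]
    _ = (-1 : ZMod p) ^ y := by rw [h1, one_mul]

lemma coeff_Xsub1 (d t : ℕ) :
    PowerSeries.coeff t ((PowerSeries.X - 1) ^ d)
      = (-1 : ZMod p) ^ (d - t) * (d.choose t : ℕ) := by
  induction d generalizing t with
  | zero =>
    rw [pow_zero, PowerSeries.coeff_one]
    rcases t with _ | s
    · simp
    · simp
  | succ d ih =>
    have hstep : (PowerSeries.X - 1 : (ZMod p)⟦X⟧) ^ (d + 1)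
        = (PowerSeries.X - 1) ^ d * PowerSeries.X - (PowerSeries.X - 1) ^ d := by
      ring
    rw [hstep, map_sub]
    rcases t with _ | s
    · rw [PowerSeries.coeff_zero_mul_X, ih 0]
      simp only [Nat.sub_zero, Nat.choose_zero_right, Nat.cast_one, mul_one, zero_sub, pow_succ]
      ring
    · rw [PowerSeries.coeff_succ_mul_X, ih s, ih (s + 1)]
      rw [Nat.choose_succ_succ d s]
      rcases lt_or_ge s d with hsd | hsd
      · rw [show d - s = (d - (s + 1)) + 1 by omega, show d + 1 - (s + 1) = d - (s + 1) + 1 by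
          omega]
        push_cast
        ring
      · rw [Nat.choose_eq_zero_of_lt (by omega : d < s + 1)]
        push_cast
        ring

section withHyps

variable {cc q m n : ℕ} (hp : p.Prime) (hq : q = p ^ cc) (hodd : Odd p)
variable (hm : 1 ≤ m) (hmn : m < n) (hnq : n + 1 ≤ q) (hn2 : 2 * n ≤ q + m)

include hp hq hodd hm hmn hnq hn2 in
lemma claimA (t : ℕ) :
    (if n < t then TT p q m t n else 0)
      = (if q + m + 1 - n ≤ t then
          PowerSeries.coeff (t - (q + m + 1 - n))
            ((PowerSeries.X - 1 : (ZMod p)⟦X⟧) ^ (n - m - 1)) else 0) := by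
  set N := q + m + 1 - n with hN
  have hnN : n < N := by omega
  have hNq : N ≤ q := by omega
  rcases le_or_gt t n with htn | htn
  · rw [if_neg (by omega), if_neg (by omega)]
  · rw [if_pos htn, TT]
    have hρ : (n - (m + 1)) % q = n - m - 1 := by
      rw [Nat.mod_eq_of_lt (by omega)]
      omega
    rcases le_or_gt t q with htq | htq
    · rw [if_pos htq, hρ]
      rcases le_or_gt N t with hNt | hNt
      · rw [if_pos hNt, coeff_Xsub1]
        rw [show q - t = (n - m - 1) - (t - N) by omega,
          Nat.choose_symm (by omega : t - N ≤ n - m - 1)]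
        have hsgn : (-1 : ZMod p) ^ (t + 1) = (-1 : ZMod p) ^ ((n - m - 1) - (t - N)) := by
          apply negpow_helper
          have hqodd : Odd q := qodd hq hodd
          have h1 : (t + 1) + ((n - m - 1) - (t - N)) = q + 1 := by omega
          rw [h1]
          exact hqodd.add_one
        rw [hsgn]
      · rw [if_neg (by omega), Nat.choose_eq_zero_of_lt (by omega : n - m - 1 < q - t)]
        simp
    · rw [if_neg (by omega), if_pos (by omega)]
      rw [coeff_Xsub1, Nat.choose_eq_zero_of_lt (by omega : n - m - 1 < t - N)]
      simp

include hp hq hodd hm hmn hnq hn2 in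
lemma claimP (t : ℕ) :
    (if n < t then TT p q m n t else 0)
        - (if q ≤ t then (if n < t - q then TT p q m n (t - q) else 0) else 0)
      = (if q + m + 1 - n ≤ t then
          PowerSeries.coeff (t - (q + m + 1 - n))
            ((PowerSeries.X - 1 : (ZMod p)⟦X⟧) ^ (n - 1)) else 0) := by
  set N := q + m + 1 - n with hN
  have hnN : n < N := by omega
  have hNq : N ≤ q := by omega
  have hnq' : n ≤ q := by omega
  rcases le_or_gt t n with htn | htn
  · rw [if_neg (by omega), if_neg (by omega), if_neg (by omega)]
    simp
  · rcases le_or_gt t (q + n) with htqn | htqn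
    · -- middle range : n < t ≤ q + n
      have hz : (if q ≤ t then (if n < t - q then TT p q m n (t - q) else 0) else 0) = 0 := by
        rcases le_or_gt q t with h | h
        · rw [if_pos h, if_neg (by omega)]
        · rw [if_neg (by omega)]
      rw [hz, sub_zero, if_pos htn, TT, if_pos hnq']
      rcases le_or_gt t (q + m) with htqm | htqm
      · have hρ : (t - (m + 1)) % q = t - m - 1 := by
          rw [Nat.mod_eq_of_lt (by omega)]
          omega
        rw [hρ]
        rcases le_or_gt N t with hNt | hNt
        · -- main value case
          rw [if_pos hNt, coeff_Xsub1]
          set w := t - N with hw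
          have hwn : w ≤ n - 1 := by omega
          have h1 : t - m - 1 = q - n + w := by omega
          rw [h1]
          have h2 : (q - n + w).choose (q - n) = (q - n + w).choose w := by
            have h2' := Nat.choose_symm (show w ≤ q - n + w by omega)
            rwa [show q - n + w - w = q - n by omega] at h2'
          rw [h2]
          have h3 := choose_q_sub_one_sub hp hq (by omega) w (n - 1 - w) (by omega)
          rw [show q - 1 - (n - 1 - w) = q - n + w by omega] at h3
          rw [show n - 1 - w + w = n - 1 by omega] at h3
          rw [h3, Nat.choose_symm (by omega : w ≤ n - 1)]
          have hsgn : (-1 : ZMod p) ^ (n + 1) * (-1 : ZMod p) ^ w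
              = (-1 : ZMod p) ^ (n - 1 - w) := by
            rw [← pow_add]
            apply negpow_helper
            have h4 : n + 1 + w + (n - 1 - w) = 2 * n := by omega
            rw [h4]
            exact ⟨n, by ring⟩
          rw [← mul_assoc, hsgn]
        · rw [if_neg (by omega), Nat.choose_eq_zero_of_lt (by omega : t - m - 1 < q - n)]
          simp
      · -- q + m < t ≤ q + n : both sides vanish
        have hρ : (t - (m + 1)) % q = t - m - 1 - q := by
          rw [Nat.mod_eq_sub_mod (by omega), Nat.mod_eq_of_lt (by omega)]
          omega
        rw [hρ, Nat.choose_eq_zero_of_lt (by omega : t - m - 1 - q < q - n)]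
        rw [if_pos (by omega), coeff_Xsub1,
          Nat.choose_eq_zero_of_lt (by omega : n - 1 < t - N)]
        simp
    · -- tail : q + n < t, periodicity
      rw [if_pos (by omega), if_pos (by omega), if_pos (by omega)]
      have hρ : (t - (m + 1)) % q = (t - q - (m + 1)) % q := by
        rw [show t - (m + 1) = (t - q - (m + 1)) + q by omega, Nat.add_mod_right]
      rw [TT, TT, if_pos hnq', hρ, if_pos (by omega), coeff_Xsub1,
        Nat.choose_eq_zero_of_lt (by omega : n - 1 < t - N)]
      simp

include hp hq hodd hm hmn hnq hn2 in
lemma genfun :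
    (1 - PowerSeries.X ^ q) *
        PowerSeries.mk (fun i => if n < i then CC p q m i n else 0) =
      (1 - PowerSeries.X ^ q) * PowerSeries.X ^ (q + m + 1 - n) *
          ((PowerSeries.X : (ZMod p)⟦X⟧) - 1) ^ (n - m - 1) -
        PowerSeries.X ^ (q + m + 1 - n) * ((PowerSeries.X : (ZMod p)⟦X⟧) - 1) ^ (n - 1) := by
  set N := q + m + 1 - n with hN
  have lhs_eq : (1 - PowerSeries.X ^ q) *
      PowerSeries.mk (fun i => if n < i then CC p q m i n else 0)
      = PowerSeries.mk (fun i => if n < i then CC p q m i n else 0)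
        - PowerSeries.X ^ q * PowerSeries.mk (fun i => if n < i then CC p q m i n else 0) := by
    ring
  have rhs_eq : (1 - PowerSeries.X ^ q) * PowerSeries.X ^ N *
        ((PowerSeries.X : (ZMod p)⟦X⟧) - 1) ^ (n - m - 1)
        - PowerSeries.X ^ N * ((PowerSeries.X : (ZMod p)⟦X⟧) - 1) ^ (n - 1)
      = (PowerSeries.X ^ N * ((PowerSeries.X : (ZMod p)⟦X⟧) - 1) ^ (n - m - 1)
          - PowerSeries.X ^ q *
            (PowerSeries.X ^ N * ((PowerSeries.X : (ZMod p)⟦X⟧) - 1) ^ (n - m - 1)))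
        - PowerSeries.X ^ N * ((PowerSeries.X : (ZMod p)⟦X⟧) - 1) ^ (n - 1) := by
    ring
  rw [lhs_eq, rhs_eq]
  ext t
  simp only [map_sub, PowerSeries.coeff_mk, PowerSeries.coeff_X_pow_mul']
  have hA := claimA hp hq hodd hm hmn hnq hn2 (n := n) (m := m)
  have hP := claimP hp hq hodd hm hmn hnq hn2 (t := t)
  have hsplit : ∀ s : ℕ, (if n < s then CC p q m s n else 0)
      = (if n < s then TT p q m s n else 0) - (if n < s then TT p q m n s else 0) := by
    intro s
    split <;> simp [CC]
  rw [hsplit t]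
  rcases le_or_gt q t with hqt | hqt
  · rw [if_pos hqt, if_pos hqt, hsplit (t - q)]
    rw [if_pos hqt] at hP
    have hAt := hA t
    have hAtq := hA (t - q)
    rw [← hN] at hAt hAtq hP
    linear_combination hAt - hAtq - hP
  · rw [if_neg (show ¬ q ≤ t by omega), if_neg (show ¬ q ≤ t by omega)]
    rw [if_neg (show ¬ q ≤ t by omega)] at hP
    have hAt := hA t
    rw [← hN] at hAt hP
    linear_combination hAt - hP

end withHyps

end GenFun

-- PARTS12345


section Assemble

variable {p cc q m n : ℕ} (hp : p.Prime) (hq : q = p ^ cc) (hodd : Odd p)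
variable (hm : 1 ≤ m) (hmn : m < n) (hnq : n + 1 ≤ q)

lemma bas_ne_zero (hp : p.Prime) (k : ℕ) : bas p k ≠ 0 := by
  haveI : Fact p.Prime := ⟨hp⟩
  simp only [bas, ne_eq, Finsupp.single_eq_zero]
  exact one_ne_zero

include hm hmn in
lemma grade_lemma (i j : ℕ) (x : ℕ →₀ ZMod p) (hx : x ∈ grading p n i)
    (y : ℕ →₀ ZMod p) (hy : y ∈ grading p n j) :
    brkt p q m n x y ∈ grading p n (i + j) := by
  have hn2 : 2 ≤ n := by omega
  by_cases hgi : i = 1 ∨ n ≤ i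
  · by_cases hgj : j = 1 ∨ n ≤ j
    · rw [grading_good p hn2 hgi] at hx
      rw [grading_good p hn2 hgj] at hy
      obtain ⟨α, rfl⟩ := Submodule.mem_span_singleton.mp hx
      obtain ⟨γ, rfl⟩ := Submodule.mem_span_singleton.mp hy
      simp only [map_smul, LinearMap.smul_apply, brkt_bas]
      apply Submodule.smul_mem
      apply Submodule.smul_mem
      -- gvec (κ i) (κ j) ∈ grading (i + j)
      rcases hgi with rfl | hi <;> rcases hgj with rfl | hj
      · -- 1 1
        have h0 : κfun n 1 = 0 := by simp [κfun]
        rw [h0]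
        have : gvec p q m n 0 0 = 0 := by
          rw [gvec]
          simp [gind, gco]
        rw [this]
        exact Submodule.zero_mem _
      · -- 1, j ≥ n
        have h0 : κfun n 1 = 0 := by simp [κfun]
        have h1 : κfun n j = (j - n) + 1 := by rw [κfun, if_neg (by omega)]
        rw [h0, h1, gvec]
        simp only [gind, gco]
        rw [grading_ge p hn2 (1 + j) (by omega)]
        rw [show j - n + 2 = 1 + j - n + 1 by omega]
        rw [show Finsupp.single (1 + j - n + 1) (-1 : ZMod p)
            = (-1 : ZMod p) • bas p (1 + j - n + 1) by simp [bas]]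
        exact Submodule.smul_mem _ _ (Submodule.mem_span_singleton_self _)
      · -- i ≥ n, 1
        have h0 : κfun n 1 = 0 := by simp [κfun]
        have h1 : κfun n i = (i - n) + 1 := by rw [κfun, if_neg (by omega)]
        rw [h0, h1, gvec]
        simp only [gind, gco]
        rw [grading_ge p hn2 (i + 1) (by omega)]
        rw [show i - n + 2 = i + 1 - n + 1 by omega]
        exact Submodule.mem_span_singleton_self _
      · -- i, j ≥ n
        have h1 : κfun n i = (i - n) + 1 := by rw [κfun, if_neg (by omega)]
        have h2 : κfun n j = (j - n) + 1 := by rw [κfun, if_neg (by omega)]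
        rw [h1, h2, gvec]
        simp only [gind, gco]
        rw [grading_ge p hn2 (i + j) (by omega)]
        rw [show i - n + n = i by omega, show j - n + n = j by omega,
          show i - n + (j - n) + n + 1 = i + j - n + 1 by omega]
        rw [show Finsupp.single (i + j - n + 1) (CC p q m i j)
            = CC p q m i j • bas p (i + j - n + 1) by simp [bas]]
        exact Submodule.smul_mem _ _ (Submodule.mem_span_singleton_self _)
    · push_neg at hgj
      rw [grading_bot p hn2 j hgj.1 (by omega)] at hy
      rw [(Submodule.mem_bot (ZMod p)).mp hy]
      simp
  · push_neg at hgi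
    rw [grading_bot p hn2 i hgi.1 (by omega)] at hx
    rw [(Submodule.mem_bot (ZMod p)).mp hx]
    simp

include hm hmn in
lemma gen_lemma (i : ℕ) (hi : n ≤ i) :
    grading p n (i + 1) = Submodule.span (ZMod p)
      {w : ℕ →₀ ZMod p | ∃ x ∈ grading p n i, ∃ u ∈ grading p n 1,
        w = brkt p q m n x u} := by
  have hn2 : 2 ≤ n := by omega
  have hkey : brkt p q m n (bas p (i - n + 1)) (bas p 0) = bas p (i - n + 2) := by
    rw [brkt_bas, gvec]
    simp only [gind, gco]
    rw [bas]
  apply le_antisymm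
  · rw [grading_ge p hn2 (i + 1) (by omega), show i + 1 - n + 1 = i - n + 2 by omega]
    rw [Submodule.span_le, Set.singleton_subset_iff]
    apply Submodule.subset_span
    refine ⟨bas p (i - n + 1), ?_, bas p 0, ?_, hkey.symm⟩
    · rw [grading_ge p hn2 i hi]
      exact Submodule.mem_span_singleton_self _
    · rw [grading_one]
      exact Submodule.mem_span_singleton_self _
  · rw [Submodule.span_le]
    rintro w ⟨x, hx, u, hu, rfl⟩
    rw [grading_ge p hn2 i hi] at hx
    rw [grading_one] at hu
    obtain ⟨α, rfl⟩ := Submodule.mem_span_singleton.mp hx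
    obtain ⟨γ, rfl⟩ := Submodule.mem_span_singleton.mp hu
    simp only [map_smul, LinearMap.smul_apply]
    rw [hkey]
    rw [grading_ge p hn2 (i + 1) (by omega), show i + 1 - n + 1 = i - n + 2 by omega]
    exact Submodule.smul_mem _ _ (Submodule.smul_mem _ _
      (Submodule.mem_span_singleton_self _))

include hmn in
lemma e_rec_lemma (i : ℕ) (hi : n ≤ i) :
    bas p (i + 1 - n + 1) = brkt p q m n (bas p (i - n + 1)) (bas p 0) := by
  rw [brkt_bas, gvec]
  simp only [gind, gco]
  rw [bas, show i + 1 - n + 1 = i - n + 2 by omega]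

include hmn in
lemma bracket_eq_lemma (i : ℕ) (hi : n < i) :
    brkt p q m n (bas p (i - n + 1)) (bas p (n - n + 1))
      = CC p q m i n • bas p (i + n - n + 1) := by
  rw [brkt_bas, show n - n + 1 = 0 + 1 by omega, gvec]
  simp only [gind, gco]
  rw [show i - n + n = i by omega, show (0 : ℕ) + n = n by omega,
    show i - n + 0 + n + 1 = i + n - n + 1 by omega, bas, Finsupp.smul_single, smul_eq_mul,
    mul_one]

end Assemble

end GenFunWitness

open GenFunWitness

/-- **Proposition (generating function of the exceptional algebras).**
Let `p` be an odd prime, `q = p^c` a power of `p`, and `0 < m < p`,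
`m < n ≤ (q + m)/2`.  Then there exist a field `F` of characteristic `p` and an
algebra `L` of type `n` over `F`, with a choice of generators, whose sequence
`(β_i)_{i>n}` satisfies
`(1 − X^q)·Σ_{i>n} β_i X^i
   = (1 − X^q)·X^{q+m+1−n}(X−1)^{n−m−1} − X^{q+m+1−n}(X−1)^{n−1}` in `F⟦X⟧`. -/
theorem exists_type_n_with_generating_function
    (p : ℕ) (hp : p.Prime) (hodd : Odd p)
    (c : ℕ) (q : ℕ) (hq : q = p ^ c)
    (m n : ℕ) (hm0 : 0 < m) (hmp : m < p) (hmn : m < n) (hn : 2 * n ≤ q + m) :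
    Nonempty (GenFunTypeNWitness p n q m) := by
  haveI : Fact p.Prime := ⟨hp⟩
  have hnq : n + 1 ≤ q := by omega
  have hn2 : 2 ≤ n := by omega
  have hm : 1 ≤ m := hm0
  refine ⟨{
    F := ZMod p
    fieldF := inferInstance
    charF := ZMod.charP p
    L := ℕ →₀ ZMod p
    lieRingL := lieRing hp hq hodd hm hmn hnq
    lieAlgebraL := lieAlgebra hp hq hodd hm hmn hnq
    Lc := grading p n
    internal := grading_isInternal p hp hn2
    zero_bot := grading_bot p hn2 0 (by omega) (by omega)
    grade := fun i j x hx y hy => grade_lemma hm hmn i j x hx y hy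
    dim_one := by
      rw [grading_one]
      exact finrank_span_singleton (bas_ne_zero hp 0)
    mid_bot := fun i h1 h2 => grading_bot p hn2 i (by omega) h2
    dim_n := fun i hi => by
      rw [grading_ge p hn2 i hi]
      exact finrank_span_singleton (bas_ne_zero hp _)
    gen := fun i hi => gen_lemma hm hmn i hi
    z := bas p 0
    z_mem := by rw [grading_one]; exact Submodule.mem_span_singleton_self _
    z_ne := bas_ne_zero hp 0
    e := fun i => bas p (i - n + 1)
    e_mem := by
      rw [grading_ge p hn2 n le_rfl]
      exact Submodule.mem_span_singleton_self _
    e_ne := bas_ne_zero hp _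
    e_rec := fun i hi => e_rec_lemma hmn i hi
    β := fun i => CC p q m i n
    bracket_eq := fun i hi => bracket_eq_lemma hmn i hi
    gen_fun := genfun hp hq hodd hm hmn hnq hn }⟩
end

section
/- Let F be a field of prime characteristic p, let n and k be integers with 1 < n < p and k > n + 1, and let g(x) ∈ F[x] be a monic polynomial of degree n − 1 such that the coefficient of x^j in (x−1)^k g(x) is zero for every integer j with (k+n)/2 ≤ j < k. If k ≥ 4p, then there exists a power q = p^c of p with q > p such that either k = 2q − n + 1, or q − n < k < q + n. -/
open Polynomial Finset

set_option maxRecDepth 4000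

namespace PCLK
variable {F : Type*} [Field F]

/-- coefficient of f.comp(-X) -/
lemma coeff_comp_neg_X (f : F[X]) (j : ℕ) :
    (f.comp (-X)).coeff j = (-1)^j * f.coeff j := by
  induction f using Polynomial.induction_on' with
  | add p q hp hq => simp [add_comp, hp, hq, mul_add]
  | monomial i a =>
      rw [monomial_comp, show (-X : F[X]) = C (-1) * X by simp, mul_pow, ← C_pow,
        coeff_C_mul, coeff_C_mul, coeff_X_pow, coeff_monomial]
      rcases eq_or_ne i j with rfl | hij
      · simp; ring
      · simp [hij, Ne.symm hij]

/-- L2': multiplying by (1+X)^m doesn't change coeff j if nearby lower coeffs vanish -/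
lemma coeff_one_add_X_pow_mul (m j : ℕ) (P : F[X])
    (h : ∀ u, 1 ≤ u → u ≤ m → u ≤ j → P.coeff (j - u) = 0) :
    ((1 + X)^m * P).coeff j = P.coeff j := by
  rw [coeff_mul]
  rw [Finset.sum_eq_single (0, j)]
  · simp [coeff_one_add_X_pow]
  · rintro ⟨u, v⟩ hmem hne
    rw [Finset.HasAntidiagonal.mem_antidiagonal] at hmem
    have hu : u ≠ 0 := by
      rintro rfl
      have hv : v = j := by simpa using hmem
      exact hne (by rw [hv])
    rw [coeff_one_add_X_pow]
    by_cases hum : u ≤ m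
    · have : P.coeff v = 0 := by
        have : v = j - u := by omega
        rw [this]; exact h u (by omega) hum (by omega)
      rw [this, mul_zero]
    · rw [Nat.choose_eq_zero_of_lt (by omega)]; simp
  · intro h'; exact absurd (Finset.HasAntidiagonal.mem_antidiagonal.2 (by simp)) h'

/-- T4' : uniqueness of splitting at X^N with coefficient vanishing -/
lemma split_eq (N : ℕ) (U₁ V₁ U₂ V₂ : F[X])
    (h : U₁ + X^N * V₁ = U₂ + X^N * V₂)
    (h₁ : ∀ j, N ≤ j → U₁.coeff j = 0)
    (h₂ : ∀ j, N ≤ j → U₂.coeff j = 0) :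
    U₁ = U₂ ∧ V₁ = V₂ := by
  have hV : V₁ = V₂ := by
    ext i
    have := congrArg (fun f => f.coeff (i + N)) h
    simpa [coeff_X_pow_mul, h₁ (i+N) (by omega), h₂ (i+N) (by omega)] using this
  refine ⟨?_, hV⟩
  have := h
  rw [hV] at this
  exact add_right_cancel this

lemma one_add_X_pow_char_pow (p : ℕ) [Fact p.Prime] [CharP F p] (c : ℕ) :
    (1 + X : F[X])^(p^c) = 1 + X^(p^c) := by
  rw [add_pow_char_pow]
  simp

/-- expansion of (X^q+1)^A * G -/
lemma expand_mul (q A : ℕ) (G : F[X]) :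
    (X^q + 1)^A * G
      = ∑ t ∈ Finset.range (A+1), C ((A.choose t : F)) * (X^(q*t) * G) := by
  rw [add_pow, Finset.sum_mul]
  congr 1; ext t
  rw [← pow_mul, ← Polynomial.C_eq_natCast]
  ring

/-- single surviving term coefficient -/
lemma coeff_single (q A t₀ j : ℕ) (G : F[X]) (hdegG : G.natDegree < q)
    (h₀ : q*t₀ ≤ j) (hup : j < q*t₀ + q) (ht₀ : t₀ ≤ A) :
    ((X^q+1)^A * G).coeff j = (A.choose t₀ : F) * G.coeff (j - q*t₀) := by
  rw [expand_mul, finset_sum_coeff]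
  rw [Finset.sum_eq_single t₀]
  · rw [coeff_C_mul, mul_comm (X^(q*t₀)) G, coeff_mul_X_pow', if_pos h₀]
  · intro t ht hne
    rw [coeff_C_mul, mul_comm (X^(q*t)) G, coeff_mul_X_pow']
    rcases lt_or_gt_of_ne hne with hlt | hgt
    · -- t < t₀ : index too big
      have hq : 0 < q := by omega
      have : q*t + q ≤ q * t₀ := by
        have : t + 1 ≤ t₀ := hlt
        calc q*t + q = q*(t+1) := by ring
        _ ≤ q*t₀ := Nat.mul_le_mul_left q this
      rw [if_pos (by omega)]
      rw [coeff_eq_zero_of_natDegree_lt (by omega), mul_zero]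
    · -- t > t₀ : X power too big
      have : q*t₀ + q ≤ q*t := by
        have : t₀ + 1 ≤ t := hgt
        calc q*t₀ + q = q*(t₀+1) := by ring
        _ ≤ q*t := Nat.mul_le_mul_left q this
      rw [if_neg (by omega), mul_zero]
  · intro h'; exact absurd (Finset.mem_range.2 (by omega)) h'

lemma prime_one_add_X : Prime (1 + X : F[X]) := by
  have : (1 + X : F[X]) = X - C (-1) := by simp [sub_neg_eq_add, add_comm]
  rw [this]; exact prime_X_sub_C (-1)

lemma natDegree_one_add_X_pow (m : ℕ) : ((1 + X : F[X])^m).natDegree = m := by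
  rw [natDegree_pow]
  have : (1 + X : F[X]) = X + C 1 := by simp [add_comm]
  rw [this, natDegree_X_add_C, mul_one]

lemma not_one_add_X_dvd (f : F[X]) (h : f.eval (-1) ≠ 0) : ¬ (1 + X : F[X]) ∣ f := by
  rintro ⟨t, rfl⟩
  simp at h


/-- decomposition of P = (1+X)^k * G into low part (window-vanishing) and top part -/
lemma LM_decomp (n k : ℕ) (G : F[X])
    (hw : ∀ j, k + n ≤ 2*j → j < k → ((1+X)^k * G).coeff j = 0) :
    ∃ L M : F[X], L + X^k * M = (1+X)^k * G
      ∧ (∀ j, k + n ≤ 2*j → L.coeff j = 0)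
      ∧ (∀ t, M.coeff t = ((1+X)^k * G).coeff (k + t)) := by
  set P : F[X] := (1+X)^k * G with hP
  have hmon : (X^k : F[X]).Monic := monic_X_pow k
  refine ⟨P %ₘ X^k, P /ₘ X^k, modByMonic_add_div P (X^k), ?_, ?_⟩
  · intro j hj
    have hdeg : (P %ₘ X^k).degree < (X^k : F[X]).degree := degree_modByMonic_lt P hmon
    rw [degree_X_pow] at hdeg
    by_cases hjk : j < k
    · have h2 : (P %ₘ X^k).coeff j + (X^k * (P /ₘ X^k)).coeff j = P.coeff j := by
        rw [← coeff_add, modByMonic_add_div P (X^k)]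
      rw [mul_comm (X^k) _, coeff_mul_X_pow', if_neg (by omega), add_zero] at h2
      rw [h2]
      exact hw j hj hjk
    · apply coeff_eq_zero_of_degree_lt
      exact lt_of_lt_of_le hdeg (by exact_mod_cast Nat.cast_le.2 (by omega))
  · intro t
    have h2 : (P %ₘ X^k).coeff (k+t) + (X^k * (P /ₘ X^k)).coeff (k+t) = P.coeff (k+t) := by
      rw [← coeff_add, modByMonic_add_div P (X^k)]
    have hdeg : (P %ₘ X^k).degree < (X^k : F[X]).degree := degree_modByMonic_lt P hmon
    rw [degree_X_pow] at hdeg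
    have hmod0 : (P %ₘ X^k).coeff (k+t) = 0 := by
      apply coeff_eq_zero_of_degree_lt
      exact lt_of_lt_of_le hdeg (by exact_mod_cast Nat.cast_le.2 (Nat.le_add_right k t))
    rw [hmod0, zero_add, mul_comm (X^k) _, coeff_mul_X_pow', if_pos (Nat.le_add_right k t),
      Nat.add_sub_cancel_left] at h2
    exact h2

/-- Case 1b : a = 1, n ≤ r ≤ q - n gives contradiction -/
lemma case1b (n k q r : ℕ) (G : F[X]) (hG0 : G ≠ 0) (hGdeg : G.natDegree = n - 1)
    (hn : 2 ≤ n)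
    (hw : ∀ j, k + n ≤ 2*j → j < k → ((1+X)^k * G).coeff j = 0)
    (hfr : (1 + X : F[X])^q = 1 + X^q)
    (hk : k = q + r) (hnr : n ≤ r) (hrq : r + n ≤ q) : False := by
  set H : F[X] := (1+X)^r * G with hH
  have hH0 : H ≠ 0 := mul_ne_zero (pow_ne_zero _ (by
    intro h; simpa using congrArg (fun f => f.coeff 0) h)) hG0
  have hHdeg : H.natDegree = r + (n-1) := by
    rw [hH, natDegree_mul (pow_ne_zero _ (by
      intro h; simpa using congrArg (fun f => f.coeff 0) h)) hG0,
      natDegree_one_add_X_pow, hGdeg]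
  have hPH : (1+X : F[X])^k * G = (X^q+1)^1 * H := by
    rw [hH, hk, pow_add, pow_one, ← mul_assoc, hfr, add_comm (1:F[X]) (X^q)]
  have hcoeffs : ∀ s, s < n → H.coeff s = 0 := by
    intro s hs
    have h1 : ((1+X : F[X])^k * G).coeff (q + s) = 0 := by
      apply hw <;> omega
    rw [hPH] at h1
    rw [coeff_single q 1 1 (q+s) H (by omega) (by omega) (by omega) (by omega)] at h1
    simpa using h1
  have hdvdH : (X : F[X])^n ∣ H := X_pow_dvd_iff.2 (fun d hd => hcoeffs d hd)
  have hnotX : ¬ (X : F[X]) ∣ (1+X)^r := by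
    rw [X_dvd_iff]
    simp [coeff_one_add_X_pow]
  have hdvdG : (X : F[X])^n ∣ G := by
    refine Prime.pow_dvd_of_dvd_mul_left prime_X n hnotX ?_
    rw [← hH]; exact hdvdH
  have := natDegree_le_of_dvd hdvdG hG0
  rw [natDegree_X_pow, hGdeg] at this
  omega

/-- Surgical A3 : a = 2, r + n ≤ q gives (2:F)*lead = 0 -/
lemma caseA3 (n k q r : ℕ) (G : F[X]) (hG0 : G ≠ 0) (hGdeg : G.natDegree = n - 1)
    (hn : 2 ≤ n) (hchar2 : (2:F) ≠ 0)
    (hw : ∀ j, k + n ≤ 2*j → j < k → ((1+X)^k * G).coeff j = 0)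
    (hfr : (1 + X : F[X])^q = 1 + X^q)
    (hk : k = 2*q + r) (hrq : r + n ≤ q) : False := by
  set H : F[X] := (1+X)^r * G with hH
  have hne : (1+X : F[X])^r ≠ 0 := pow_ne_zero _ (by
    intro h; simpa using congrArg (fun f => f.coeff 0) h)
  have hH0 : H ≠ 0 := mul_ne_zero hne hG0
  have hHdeg : H.natDegree = r + (n-1) := by
    rw [hH, natDegree_mul hne hG0, natDegree_one_add_X_pow, hGdeg]
  have hlead : H.coeff (r + (n-1)) ≠ 0 := by
    rw [← hHdeg]; exact leadingCoeff_ne_zero.2 hH0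
  have hPH : (1+X : F[X])^k * G = (X^q+1)^2 * H := by
    rw [hH, hk, two_mul, pow_add, pow_add, hfr, add_comm (1:F[X]) (X^q)]
    ring
  have h1 : ((1+X : F[X])^k * G).coeff (q*1 + (r + (n-1))) = 0 := by
    apply hw <;> omega
  rw [hPH, coeff_single q 2 1 (q*1 + (r + (n-1))) H (by omega) (by omega) (by omega)
    (by omega), Nat.add_sub_cancel_left] at h1
  have hch : (Nat.choose 2 1) = 2 := rfl
  rw [hch] at h1
  rcases mul_eq_zero.1 h1 with h | h
  · exact hchar2 (by exact_mod_cast h)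
  · exact hlead h

/-- coefficient of (1+X)^m' * P vanishes in (shifted) window -/
lemma window_mul_vanish (n k m' j : ℕ) (G : F[X])
    (hw : ∀ j, k + n ≤ 2*j → j < k → ((1+X)^k * G).coeff j = 0)
    (hjk : j < k) (hlow : k + n + 2*m' ≤ 2*j) :
    ((1+X)^m' * ((1+X)^k * G)).coeff j = 0 := by
  rw [coeff_one_add_X_pow_mul]
  · exact hw j (by omega) hjk
  · intro u hu1 hum huj
    exact hw (j - u) (by omega) (by omega)

/-- Step-1 surgical lemma -/
lemma caseS1 (n k q m' a : ℕ) (G : F[X]) (hGdeg : G.natDegree = n - 1) (hn : 2 ≤ n)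
    (hw : ∀ j, k + n ≤ 2*j → j < k → ((1+X)^k * G).coeff j = 0)
    (hfr : (1 + X : F[X])^q = 1 + X^q)
    (hk : k + m' = (a+1)*q) (ha : 2 ≤ a) (hm1 : 1 ≤ m') (hmq : m' + n ≤ q) :
    ((a+1 : ℕ) : F) * G.coeff (n-1) = 0 := by
  have hkk : k + m' = q*a + q := by rw [hk]; ring
  have hq2a : 2*q ≤ q*a := by
    calc 2*q = q*2 := by ring
    _ ≤ q*a := Nat.mul_le_mul_left q ha
  have E1 : (1+X : F[X])^m' * ((1+X)^k * G) = (X^q+1)^(a+1) * G := by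
    rw [← mul_assoc, ← pow_add]
    have hqa1 : q*(a+1) = q*a + q := by ring
    have : m' + k = q*(a+1) := by omega
    rw [this, pow_mul, hfr, add_comm (1:F[X]) (X^q)]
  have E0 : ((1+X : F[X])^m' * ((1+X)^k * G)).coeff (q*a + (n-1)) = 0 := by
    apply window_mul_vanish n k m' _ G hw (by omega) (by omega)
  rw [E1, coeff_single q (a+1) a (q*a + (n-1)) G (by omega) (by omega) (by omega)
    (by omega), Nat.add_sub_cancel_left, Nat.choose_succ_self_right] at E0
  exact E0

/-- j_S surgical lemma (A = s+2 ≥ 4) -/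
lemma caseJS (n k q m' s : ℕ) (G : F[X]) (hGdeg : G.natDegree = n - 1) (hn : 2 ≤ n)
    (hw : ∀ j, k + n ≤ 2*j → j < k → ((1+X)^k * G).coeff j = 0)
    (hfr : (1 + X : F[X])^q = 1 + X^q)
    (hk : k + m' = (s+2)*q) (hs : 2 ≤ s) (hm1 : 1 ≤ m') (hnq : n ≤ q)
    (hm'q : m' ≤ q) (hm : m' + 2 + 2*q ≤ q*s + n) :
    (((s+2).choose s : ℕ) : F) * G.coeff (n-1) = 0 := by
  have hkk : k + m' = q*s + 2*q := by rw [hk]; ring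
  have E1 : (1+X : F[X])^m' * ((1+X)^k * G) = (X^q+1)^(s+2) * G := by
    rw [← mul_assoc, ← pow_add]
    have hqs1 : q*(s+2) = q*s + 2*q := by ring
    have : m' + k = q*(s+2) := by omega
    rw [this, pow_mul, hfr, add_comm (1:F[X]) (X^q)]
  have E0 : ((1+X : F[X])^m' * ((1+X)^k * G)).coeff (q*s + (n-1)) = 0 := by
    apply window_mul_vanish n k m' _ G hw (by omega) (by omega)
  rw [E1, coeff_single q (s+2) s (q*s + (n-1)) G (by omega) (by omega) (by omega)
    (by omega), Nat.add_sub_cancel_left] at E0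
  exact E0

/-- split for A = p : gives X^m' * G = (1+X)^m' * M -/
lemma casePQ (n k m' w : ℕ) (G : F[X]) (hG0 : G ≠ 0) (hGdeg : G.natDegree = n - 1)
    (hn : 2 ≤ n)
    (hw : ∀ j, k + n ≤ 2*j → j < k → ((1+X)^k * G).coeff j = 0)
    (hfr1 : (1 + X : F[X])^w = 1 + X^w) (hk : k + m' = w)
    (hm1 : 1 ≤ m') (hlow : 2*m' + n ≤ k) :
    ∃ M : F[X], M ≠ 0 ∧ X^m' * G = (1+X)^m' * M := by
  obtain ⟨L, M, hLM, hL, -⟩ := LM_decomp n k G hw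
  have E1 : (1+X : F[X])^m' * ((1+X)^k * G) = G + X^k * (X^m' * G) := by
    rw [← mul_assoc, ← pow_add]
    have : m' + k = w := by omega
    rw [this, hfr1, show (X:F[X])^w = X^k * X^m' by rw [← pow_add]; congr 1; omega]
    ring
  have E2 : (1+X : F[X])^m' * ((1+X)^k * G)
      = (1+X)^m' * L + X^k * ((1+X)^m' * M) := by
    rw [← hLM]; ring
  have hsplit := split_eq k G (X^m' * G) ((1+X)^m' * L) ((1+X)^m' * M)
    (by rw [← E1, E2])
    (fun j hj => coeff_eq_zero_of_natDegree_lt (by omega))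
    (fun j hj => by
      rw [coeff_one_add_X_pow_mul]
      · exact hL j (by omega)
      · intro u hu1 hum huj
        exact hL (j - u) (by omega))
  refine ⟨M, ?_, hsplit.2⟩
  intro h
  rw [h, mul_zero] at hsplit
  have := hsplit.2
  exact hG0 (by
    have h2 : (X : F[X])^m' ≠ 0 := pow_ne_zero _ X_ne_zero
    exact (mul_eq_zero.1 this).resolve_left h2)

/-- expansion splitting off the top two terms -/
lemma expand_top_two (q a : ℕ) (G : F[X]) :
    (X^q+1 : F[X])^(a+1) * G
      = (∑ t ∈ Finset.range a, C ((a+1).choose t : F) * (X^(q*t) * G))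
        + X^(q*a) * (C ((a+1 : ℕ) : F) * G + X^q * G) := by
  rw [expand_mul, Finset.sum_range_succ, Finset.sum_range_succ,
    Nat.choose_succ_self_right, Nat.choose_self]
  have h1 : (Nat.cast (1:ℕ) : F) = 1 := Nat.cast_one
  rw [h1, map_one, one_mul]
  have h2 : q*(a+1) = q*a + q := by ring
  rw [h2, pow_add]
  ring

/-- identity extraction for a ≥ 3, r ≤ n-1 -/
lemma caseID (n k q r m' a : ℕ) (G : F[X]) (hG0 : G ≠ 0) (hGdeg : G.natDegree = n - 1)
    (hn : 2 ≤ n)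
    (hw : ∀ j, k + n ≤ 2*j → j < k → ((1+X)^k * G).coeff j = 0)
    (hfr : (1 + X : F[X])^q = 1 + X^q)
    (ha : 3 ≤ a) (hk : k = q*a + r) (hq : q = r + m') (hnq : n ≤ q) :
    ∃ M : F[X], M ≠ 0 ∧ C ((a+1 : ℕ) : F) * G + X^q * G = X^r * ((1+X)^m' * M) := by
  obtain ⟨L, M, hLM, hL, -⟩ := LM_decomp n k G hw
  have h3q : 3*q ≤ q*a := by
    calc 3*q = q*3 := by ring
    _ ≤ q*a := Nat.mul_le_mul_left q ha
  have E1 : (1+X : F[X])^m' * ((1+X)^k * G) = (X^q+1)^(a+1) * G := by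
    rw [← mul_assoc, ← pow_add]
    have : m' + k = q*(a+1) := by rw [hk]; ring_nf; omega
    rw [this, pow_mul, hfr, add_comm (1:F[X]) (X^q)]
  have E2 : (1+X : F[X])^m' * ((1+X)^k * G)
      = (1+X)^m' * L + X^(q*a) * (X^r * ((1+X)^m' * M)) := by
    rw [← hLM, hk, pow_add]
    ring
  rw [expand_top_two] at E1
  have hsplit := split_eq (q*a)
    (∑ t ∈ Finset.range a, C ((a+1).choose t : F) * (X^(q*t) * G))
    (C ((a+1 : ℕ) : F) * G + X^q * G)
    ((1+X)^m' * L) (X^r * ((1+X)^m' * M))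
    (by rw [← E1, E2])
    (by
      intro j hj
      rw [finset_sum_coeff]
      apply Finset.sum_eq_zero
      intro t ht
      rw [Finset.mem_range] at ht
      have hqt : q*t + q ≤ q*a := by
        calc q*t + q = q*(t+1) := by ring
        _ ≤ q*a := Nat.mul_le_mul_left q (by omega)
      rw [coeff_C_mul, mul_comm (X^(q*t)) G, coeff_mul_X_pow', if_pos (by omega),
        coeff_eq_zero_of_natDegree_lt (by omega), mul_zero])
    (by
      intro j hj
      rw [coeff_one_add_X_pow_mul]
      · exact hL j (by omega)
      · intro u hu1 hum huj
        exact hL (j - u) (by omega))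
  refine ⟨M, ?_, hsplit.2⟩
  intro h
  rw [h, mul_zero, mul_zero] at hsplit
  have h2 := hsplit.2
  have h3 := congrArg (fun f => f.coeff ((n-1) + q)) h2
  simp only [coeff_add, coeff_C_mul, coeff_zero] at h3
  rw [coeff_X_pow_mul, coeff_eq_zero_of_natDegree_lt (by omega), mul_zero, zero_add] at h3
  have hlead : G.coeff (n-1) ≠ 0 := by
    rw [← hGdeg]; exact leadingCoeff_ne_zero.2 hG0
  exact hlead h3

lemma modXpow_coeff_zero (f : F[X]) (q j : ℕ) (hqj : q ≤ j) : (f %ₘ X^q).coeff j = 0 := by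
  apply coeff_eq_zero_of_degree_lt
  have hdeg := degree_modByMonic_lt f (monic_X_pow (R:=F) (n:=q))
  rw [degree_X_pow] at hdeg
  exact lt_of_lt_of_le hdeg (by exact_mod_cast Nat.cast_le.2 hqj)

lemma one_add_X_ne_zero : (1 + X : F[X]) ≠ 0 := by
  intro h; simpa using congrArg (fun f => f.coeff 0) h

/-- Case 1d : a = 1, 1 ≤ m ≤ n-2 gives contradiction -/
lemma case1d (n k q r m : ℕ) (G : F[X]) (hG0 : G ≠ 0) (hGdeg : G.natDegree = n - 1)
    (hchar2 : (2:F) ≠ 0)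
    (hw : ∀ j, k + n ≤ 2*j → j < k → ((1+X)^k * G).coeff j = 0)
    (hfr : (1 + X : F[X])^q = 1 + X^q)
    (hq : q = r + m) (hk : k = q + r) (hm1 : 1 ≤ m) (hmn : m + 2 ≤ n)
    (hnmq : n + m ≤ q) (hkbig : n + 2*m ≤ k) : False := by
  obtain ⟨L, M, hLM, hL, hMc⟩ := LM_decomp n k G hw
  -- (1) low coefficients of M vanish
  have hM0 : ∀ t, t < m → M.coeff t = 0 := by
    intro t
    induction t using Nat.strong_induction_on with
    | _ t IH =>
      intro htm
      have E2 : (1+X:F[X])^m * ((1+X)^k * G) = (X^q+1)^2 * G := by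
        rw [← mul_assoc, ← pow_add]
        have : m + k = q*2 := by omega
        rw [this, pow_mul, hfr, add_comm (1:F[X]) (X^q)]
      have hE2 : ((X^q+1:F[X])^2 * G).coeff (k + t) = 0 := by
        rw [coeff_single q 2 1 (k+t) G (by omega) (by omega) (by omega) (by omega),
          coeff_eq_zero_of_natDegree_lt (by omega), mul_zero]
      have hE1 : ((1+X:F[X])^m * ((1+X)^k * G)).coeff (k+t)
          = ((1+X:F[X])^k * G).coeff (k+t) := by
        apply coeff_one_add_X_pow_mul
        intro u hu1 hum huj
        by_cases hut : u ≤ t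
        · have he : k + t - u = k + (t - u) := by omega
          rw [he, ← hMc (t-u)]
          exact IH (t-u) (by omega) (by omega)
        · exact hw (k+t-u) (by omega) (by omega)
      have : ((1+X:F[X])^k * G).coeff (k+t) = 0 := by
        rw [← hE1, E2]; exact hE2
      rw [hMc t, this]
  have hdvdM : (X:F[X])^m ∣ M := X_pow_dvd_iff.2 (fun d hd => hM0 d hd)
  obtain ⟨M₁, hM₁⟩ := hdvdM
  -- (3) H block decomposition
  set H : F[X] := (1+X)^r * G with hH
  have hne : (1+X : F[X])^r ≠ 0 := pow_ne_zero _ one_add_X_ne_zero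
  have hH0 : H ≠ 0 := mul_ne_zero hne hG0
  have hHdeg : H.natDegree = r + (n-1) := by
    rw [hH, natDegree_mul hne hG0, natDegree_one_add_X_pow, hGdeg]
  set A₀ : F[X] := H %ₘ X^q with hA₀
  set B : F[X] := H /ₘ X^q with hB
  have hAB : A₀ + X^q * B = H := modByMonic_add_div H (X^q)
  have vanishA₀ : ∀ j, q ≤ j → A₀.coeff j = 0 := fun j hj => modXpow_coeff_zero H q j hj
  have hBdeg : B.natDegree ≤ n - 1 - m := by
    rw [hB, natDegree_divByMonic H (monic_X_pow q), natDegree_X_pow, hHdeg]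
    omega
  have vanishB : ∀ j, n - m ≤ j → B.coeff j = 0 := fun j hj =>
    coeff_eq_zero_of_natDegree_lt (by omega)
  -- (4,5,6) split at 2q
  have hP1 : (1+X:F[X])^k * G = (X^q + 1) * H := by
    rw [hH, hk, pow_add, ← mul_assoc, hfr, add_comm (1:F[X]) (X^q)]
  have h2q : (X:F[X])^(2*q) = X^q * X^q := by rw [← pow_add]; congr 1; omega
  have h2q' : (X:F[X])^(2*q) = X^k * X^m := by rw [← pow_add]; congr 1; omega
  have hPdecomp : (1+X:F[X])^k * G = (A₀ + X^q * (A₀ + B)) + X^(2*q) * B := by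
    rw [hP1, ← hAB, h2q]; ring
  have hPdecomp2 : (1+X:F[X])^k * G = L + X^(2*q) * M₁ := by
    rw [← hLM, hM₁, h2q']; ring
  have hsplit := split_eq (2*q) (A₀ + X^q * (A₀ + B)) B L M₁
    (by rw [← hPdecomp, hPdecomp2])
    (by
      intro j hj
      rw [coeff_add, vanishA₀ j (by omega), mul_comm (X^q) _, coeff_mul_X_pow',
        if_pos (by omega), coeff_add, vanishA₀ _ (by omega), vanishB _ (by omega)]
      norm_num)
    (fun j hj => hL j (by omega))
  have hU : A₀ + X^q * (A₀ + B) = L := hsplit.1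
  -- (7)
  have hL₁ : ∀ s, n ≤ m + 2*s → (A₀ + B).coeff s = 0 := by
    intro s hs
    have h1 : L.coeff (s + q) = 0 := hL _ (by omega)
    rw [← hU, coeff_add, coeff_X_pow_mul, vanishA₀ _ (by omega), zero_add] at h1
    exact h1
  -- (8)
  have vanishA₀' : ∀ j, n - m ≤ j → A₀.coeff j = 0 := by
    intro j hj
    have h1 := hL₁ j (by omega)
    have h2 := vanishB j hj
    rw [coeff_add, h2, add_zero] at h1
    exact h1
  -- (9) final split at q
  have F1 : (1+X:F[X])^m * H = G + X^q * G := by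
    rw [hH, ← mul_assoc, ← pow_add, show m + r = q by omega, hfr]; ring
  have F2 : (1+X:F[X])^m * H = (1+X)^m * A₀ + X^q * ((1+X)^m * B) := by
    rw [← hAB]; ring
  have hsplit2 := split_eq q G G ((1+X:F[X])^m * A₀) ((1+X)^m * B)
    (by rw [← F1, F2])
    (fun j hj => coeff_eq_zero_of_natDegree_lt (by omega))
    (by
      intro j hj
      rw [coeff_one_add_X_pow_mul]
      · exact vanishA₀' j (by omega)
      · intro u hu1 hum huj
        exact vanishA₀' (j - u) (by omega))
  have hGA : G = (1+X:F[X])^m * A₀ := hsplit2.1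
  have hGB : G = (1+X:F[X])^m * B := hsplit2.2
  -- (10)
  have hA₀B : A₀ = B := mul_left_cancel₀ (pow_ne_zero m one_add_X_ne_zero)
    (hGA.symm.trans hGB)
  -- (11)
  have hB0 : B ≠ 0 := by
    intro h
    rw [h, mul_zero] at hGB
    exact hG0 hGB
  have hBdeg' : B.natDegree = n - 1 - m := by
    have := hGB
    have h2 : G.natDegree = m + B.natDegree := by
      rw [hGB, natDegree_mul (pow_ne_zero m one_add_X_ne_zero) hB0,
        natDegree_one_add_X_pow]
    omega
  have hleadB : B.coeff (n-1-m) ≠ 0 := by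
    rw [← hBdeg']; exact leadingCoeff_ne_zero.2 hB0
  -- (12)
  have hfin := hL₁ (n-1-m) (by omega)
  rw [hA₀B, coeff_add, ← two_mul] at hfin
  rcases mul_eq_zero.1 hfin with h | h
  · exact hchar2 h
  · exact hleadB h
end PCLK

open PCLK

/-- **Theorem (polynomial result, assertion (a)).**
Let `F` have prime characteristic `p`, `1 < n < p`, `k > n + 1`, and let
`g ∈ F[x]` be monic of degree `n − 1` with `[x^j] (x−1)^k g(x) = 0` for
`(k+n)/2 ≤ j < k`.  If `k ≥ 4p` then there is a power `q = p^c` of `p` with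
`q > p` such that either `k = 2q − n + 1` or `q − n < k < q + n`. -/
theorem polynomial_constraint_large_k
    (p : ℕ) (hp : p.Prime)
    {F : Type*} [Field F] [CharP F p]
    (n k : ℕ) (hn1 : 1 < n) (hnp : n < p) (hk : n + 1 < k)
    (g : Polynomial F) (hmonic : g.Monic) (hdeg : g.natDegree = n - 1)
    (hcoeff : ∀ j : ℕ, k + n ≤ 2 * j → j < k →
      ((Polynomial.X - 1) ^ k * g).coeff j = 0)
    (hk4p : 4 * p ≤ k) :
    ∃ c : ℕ, p < p ^ c ∧
      (k + n = 2 * p ^ c + 1 ∨ (p ^ c < k + n ∧ k < p ^ c + n)) := by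
  haveI := Fact.mk hp
  have hn2 : 2 ≤ n := hn1
  have hp3 : 3 ≤ p := by omega
  have hpodd : Odd p := hp.odd_of_ne_two (by omega)
  have hchar2 : (2:F) ≠ 0 := by
    intro h
    have h2 : ((2:ℕ):F) = 0 := by exact_mod_cast h
    rw [CharP.cast_eq_zero_iff F p] at h2
    have := Nat.le_of_dvd (by norm_num) h2
    omega
  -- transfer to G = g.comp(-X)
  set G : Polynomial F := g.comp (-X) with hGdef
  have hGcoeff : ∀ j, G.coeff j = (-1)^j * g.coeff j := fun j => coeff_comp_neg_X g j
  have hglead : g.coeff (n-1) = 1 := by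
    rw [← hdeg]; exact hmonic.coeff_natDegree
  have hGlead : G.coeff (n-1) ≠ 0 := by
    rw [hGcoeff, hglead, mul_one]
    exact pow_ne_zero _ (by norm_num)
  have hG0 : G ≠ 0 := fun h => hGlead (by rw [h, coeff_zero])
  have hGdeg : G.natDegree = n - 1 := by
    apply le_antisymm
    · rw [natDegree_le_iff_coeff_eq_zero]
      intro N hN
      rw [hGcoeff, coeff_eq_zero_of_natDegree_lt (by omega), mul_zero]
    · exact le_natDegree_of_ne_zero hGlead
  have hw : ∀ j, k + n ≤ 2*j → j < k → ((1+X : Polynomial F)^k * G).coeff j = 0 := by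
    intro j h1 h2
    have hcompP : ((X - 1 : Polynomial F)^k * g).comp (-X)
        = (-1:Polynomial F)^k * ((1+X)^k * G) := by
      rw [mul_comp, pow_comp, sub_comp, X_comp, one_comp]
      have he : (-X - 1 : Polynomial F) = -(1 + X) := by ring
      rw [he, neg_pow]
      ring
    have h3 := coeff_comp_neg_X ((X-1 : Polynomial F)^k * g) j
    rw [hcompP, hcoeff j h1 h2, mul_zero] at h3
    have h4 : ((-1:Polynomial F)^k) = C ((-1:F)^k) := by
      rw [map_pow, map_neg, map_one]
    rw [h4, coeff_C_mul] at h3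
    have h5 : ((-1:F)^k) ≠ 0 := pow_ne_zero _ (by norm_num)
    exact (mul_eq_zero.1 h3).resolve_left h5
  -- arithmetic setup
  have hk0 : k ≠ 0 := by omega
  obtain ⟨c, q, hqdef, hc1, hq_le, hk_lt⟩ :
      ∃ c q, q = p^c ∧ 1 ≤ c ∧ q ≤ k ∧ k < q * p := by
    refine ⟨Nat.log p k, p ^ Nat.log p k, rfl, Nat.log_pos hp.one_lt (by omega),
      Nat.pow_log_le_self p hk0, ?_⟩
    have h1 := Nat.lt_pow_succ_log_self hp.one_lt k
    rw [pow_succ] at h1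
    exact h1
  have hq_pos : 0 < q := by rw [hqdef]; exact pow_pos hp.pos c
  have hpq : p ≤ q := by
    rw [hqdef]
    calc p = p^1 := (pow_one p).symm
    _ ≤ p^c := Nat.pow_le_pow_right (by omega) hc1
  have hfr : (1+X : Polynomial F)^q = 1 + X^q := by
    rw [hqdef]; exact one_add_X_pow_char_pow p c
  obtain ⟨a, r, hdiv, hr, ha1, hap⟩ :
      ∃ a r, q * a + r = k ∧ r < q ∧ 1 ≤ a ∧ a < p := by
    refine ⟨k / q, k % q, Nat.div_add_mod k q, Nat.mod_lt k hq_pos,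
      (Nat.one_le_div_iff hq_pos).2 hq_le,
      (Nat.div_lt_iff_lt_mul hq_pos).2 (by rw [Nat.mul_comm]; exact hk_lt)⟩
  obtain ⟨m', hm'q, hm'1⟩ : ∃ m', r + m' = q ∧ 1 ≤ m' := ⟨q - r, by omega, by omega⟩
  have hqp2 : p < q → p*p ≤ q := by
    intro h
    have h2 : 2 ≤ c := by
      by_contra hh
      have hcc : c = 1 := by omega
      rw [hqdef, hcc, pow_one] at h
      omega
    rw [hqdef]
    calc p*p = p^2 := by ring
    _ ≤ p^c := Nat.pow_le_pow_right (by omega) h2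
  have hnp2 : (n+1)*(n+1) ≤ p*p := Nat.mul_le_mul (by omega) (by omega)
  have hnn1 : 1*1 ≤ n*n := Nat.mul_le_mul (by omega) (by omega)
  have hnsq : (n+1)*(n+1) = n*n + 2*n + 1 := by ring
  -- C3 helper
  have hC3 : a + 1 = p → m' ≤ n - 1 → ∃ c' : ℕ, p < p ^ c' ∧
      (k + n = 2 * p ^ c' + 1 ∨ (p ^ c' < k + n ∧ k < p ^ c' + n)) := by
    intro hAp hm'le
    have hpc1 : p^(c+1) = q*p := by rw [pow_succ, ← hqdef]
    have hqa1 : q*(a+1) = q*a + q := by ring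
    have hkm : k + m' = q*p := by
      rw [← hAp]
      omega
    have hpp : p < p*p := by
      calc p = 1*p := (one_mul p).symm
      _ < p*p := Nat.mul_lt_mul_of_lt_of_le (by omega) (le_refl p) (by omega)
    have hqp' : p*p ≤ q*p := Nat.mul_le_mul_right p hpq
    refine ⟨c+1, ?_, Or.inr ⟨?_, ?_⟩⟩ <;> omega
  by_cases hA1 : a = 1
  · -- a = 1
    have hkeq : k = q + r := by
      have : q * a = q := by rw [hA1, mul_one]
      omega
    have hqbig : p*p ≤ q := hqp2 (by omega)
    by_cases hr_small : r + 1 ≤ n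
    · refine ⟨c, ?_, Or.inr ⟨?_, ?_⟩⟩ <;> rw [← hqdef] <;> omega
    · by_cases hrq : r + n ≤ q
      · exfalso
        clear hC3
        exact case1b n k q r G hG0 hGdeg hn2 hw hfr hkeq (by omega) hrq
      · by_cases hm'e : m' = n - 1
        · refine ⟨c, ?_, Or.inl ?_⟩ <;> rw [← hqdef] <;> omega
        · exfalso
          clear hC3
          exact case1d n k q r m' G hG0 hGdeg hchar2 hw hfr (by omega) hkeq
            (by omega) (by omega) (by omega) (by omega)
  · -- a ≥ 2
    have ha2 : 2 ≤ a := by omega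
    have hqa : q*2 ≤ q*a := Nat.mul_le_mul_left q ha2
    by_cases hmq : m' + n ≤ q
    · by_cases hAp : a + 1 = p
      · -- casePQ route, conclusion C3
        have hpc1 : p^(c+1) = q*p := by rw [pow_succ, ← hqdef]
        have hqa1 : q*(a+1) = q*a + q := by ring
        have hkm : k + m' = p^(c+1) := by
          rw [hpc1, ← hAp]
          omega
        obtain ⟨M, hM0, hXM⟩ := casePQ n k m' (p^(c+1)) G hG0 hGdeg hn2 hw
          (one_add_X_pow_char_pow p (c+1)) hkm hm'1 (by omega)
        have hdvd : (X : Polynomial F)^m' ∣ (1+X)^m' * M := by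
          rw [← hXM]
          exact Dvd.intro G rfl
        have hXM' : (X : Polynomial F)^m' ∣ M := by
          apply Prime.pow_dvd_of_dvd_mul_left prime_X m' ?_ hdvd
          rw [X_dvd_iff]
          simp [coeff_one_add_X_pow]
        have hMdeg : M.natDegree = n - 1 := by
          have h1 : ((X : Polynomial F)^m' * G).natDegree = m' + (n-1) := by
            rw [natDegree_mul (pow_ne_zero _ X_ne_zero) hG0, natDegree_X_pow, hGdeg]
          have h2 : ((1+X : Polynomial F)^m' * M).natDegree = m' + M.natDegree := by
            rw [natDegree_mul (pow_ne_zero _ one_add_X_ne_zero) hM0,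
              natDegree_one_add_X_pow]
          rw [hXM, h2] at h1
          omega
        have hm'le : m' ≤ n - 1 := by
          have h3 := natDegree_le_of_dvd hXM' hM0
          rw [natDegree_X_pow, hMdeg] at h3
          exact h3
        exact hC3 hAp hm'le
      · -- caseS1, contradiction
        exfalso
        clear hC3
        have hqa1 : (a+1)*q = q*a + q := by ring
        have hS1 := caseS1 n k q m' a G hGdeg hn2 hw hfr (by omega) ha2 hm'1 hmq
        have hcast : ((a+1:ℕ):F) = 0 := (mul_eq_zero.1 hS1).resolve_right hGlead
        rw [CharP.cast_eq_zero_iff F p] at hcast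
        have := Nat.le_of_dvd (by omega) hcast
        omega
    · -- q < m' + n, i.e. r < n
      have hqrm : q = r + m' := by omega
      by_cases ha2e : a = 2
      · exfalso
        clear hC3
        have hqa2 : q*a = q*2 := by rw [ha2e]
        have hqbig : p*p ≤ q := hqp2 (by omega)
        exact caseA3 n k q r G hG0 hGdeg hn2 hchar2 hw hfr (by omega) (by omega)
      · have ha3 : 3 ≤ a := by omega
        obtain ⟨M, hM0, hid⟩ := caseID n k q r m' a G hG0 hGdeg hn2 hw hfr ha3
          (by omega) hqrm (by omega)
        have hqodd : Odd q := by rw [hqdef]; exact hpodd.pow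
        have heval0 : (C ((a+1:ℕ):F) + X^q).eval (-1) ≠ 0 := by
          rw [eval_add, eval_C, eval_pow, eval_X, hqodd.neg_one_pow]
          intro h
          have hcast : ((a:ℕ):F) = 0 := by push_cast at h ⊢; linear_combination h
          rw [CharP.cast_eq_zero_iff F p] at hcast
          have := Nat.le_of_dvd (by omega) hcast
          omega
        have hdvdG : (1+X : Polynomial F)^m' ∣ G := by
          apply Prime.pow_dvd_of_dvd_mul_left prime_one_add_X m'
            (not_one_add_X_dvd _ heval0)
          have he : (C ((a+1:ℕ):F) + X^q) * G = (1+X)^m' * (X^r * M) := by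
            rw [show (1+X:Polynomial F)^m' * (X^r * M) = X^r * ((1+X)^m' * M) by ring,
              ← hid]
            ring
          rw [he]
          exact Dvd.intro _ rfl
        have hm'le : m' ≤ n - 1 := by
          have h3 := natDegree_le_of_dvd hdvdG hG0
          rw [natDegree_one_add_X_pow, hGdeg] at h3
          exact h3
        by_cases hAp : a + 1 = p
        · exact hC3 hAp hm'le
        · have hap1 : a + 1 < p := by omega
          by_cases hlast : a = 3 ∧ m' = n - 1
          · -- gamma case
            exfalso
            clear hC3
            obtain ⟨ha3e, hm'e⟩ := hlast
            obtain ⟨t, ht⟩ := hdvdG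
            have ht0 : t ≠ 0 := by
              intro h
              rw [h, mul_zero] at ht
              exact hG0 ht
            have htdeg : t.natDegree = 0 := by
              have h2 : G.natDegree = m' + t.natDegree := by
                rw [ht, natDegree_mul (pow_ne_zero _ one_add_X_ne_zero) ht0,
                  natDegree_one_add_X_pow]
              omega
            have hid2 : (C ((a+1:ℕ):F) + X^q) * t = X^r * M := by
              apply mul_left_cancel₀ (pow_ne_zero m' (one_add_X_ne_zero (F:=F)))
              calc (1+X:Polynomial F)^m' * ((C ((a+1:ℕ):F) + X^q) * t)
                  = (C ((a+1:ℕ):F) + X^q) * ((1+X)^m' * t) := by ring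
                _ = (C ((a+1:ℕ):F) + X^q) * G := by rw [← ht]
                _ = C ((a+1:ℕ):F) * G + X^q * G := by ring
                _ = X^r * ((1+X)^m' * M) := hid
                _ = (1+X)^m' * (X^r * M) := by ring
            have hr0 : r ≠ 0 := by omega
            have hc0 := congrArg (fun f => f.eval 0) hid2
            simp only [eval_mul, eval_add, eval_C, eval_pow, eval_X] at hc0
            rw [zero_pow (by omega : q ≠ 0), zero_pow hr0, add_zero, zero_mul] at hc0
            rcases mul_eq_zero.1 hc0 with h | h
            · rw [CharP.cast_eq_zero_iff F p] at h
              have := Nat.le_of_dvd (by omega) h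
              omega
            · have hteq : t = C (t.coeff 0) := eq_C_of_natDegree_eq_zero htdeg
              have ht00 : t.coeff 0 = 0 := by rw [hteq, eval_C] at h; exact h
              rw [ht00, map_zero] at hteq
              exact ht0 hteq
          · -- caseJS
            exfalso
            clear hC3
            have hs2 : 2 ≤ a - 1 := by omega
            have hq3a : q*3 ≤ q*a → True := fun _ => trivial
            have hkm : k + m' = ((a-1)+2)*q := by
              have h1 : ((a-1)+2)*q = q*a + q := by
                have : (a-1)+2 = a+1 := by omega
                rw [this]; ring
              omega
            have harith : m' + 2 + 2*q ≤ q*(a-1) + n := by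
              by_cases ha3e : a = 3
              · have hm'n2 : m' + 2 ≤ n := by
                  have : ¬ (m' = n - 1) := fun h => hlast ⟨ha3e, h⟩
                  omega
                have : q*(a-1) = q*2 := by rw [ha3e]
                omega
              · have h4 : 4 ≤ a := by omega
                have h3 : q*3 ≤ q*(a-1) := Nat.mul_le_mul_left q (by omega)
                omega
            have hJS := caseJS n k q m' (a-1) G hGdeg hn2 hw hfr hkm hs2 hm'1
              (by omega) (by omega) harith
            have hcast : ((((a-1)+2).choose (a-1) : ℕ):F) = 0 :=
              (mul_eq_zero.1 hJS).resolve_right hGlead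
            rw [CharP.cast_eq_zero_iff F p] at hcast
            have hch : ((a-1)+2).choose (a-1) = (a+1).choose 2 := by
              have h1 : (a-1)+2 = a+1 := by omega
              rw [h1, ← Nat.choose_symm (by omega : 2 ≤ a+1)]
              congr 1
            rw [hch] at hcast
            have h2c : 2 * ((a+1).choose 2) = (a+1) * a := by
              rw [Nat.choose_two_right]
              have heven : 2 ∣ (a+1) * a := by
                rcases Nat.even_or_odd a with h | h
                · exact Dvd.dvd.mul_left h.two_dvd (a+1)
                · have hev : Even (a+1) := h.add_one
                  exact Dvd.dvd.mul_right hev.two_dvd a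
              have he2 : (a+1) * ((a+1) - 1) = (a+1) * a := by
                rw [Nat.add_sub_cancel]
              rw [he2]
              exact Nat.mul_div_cancel' heven
            have hpdvd : p ∣ (a+1) * a := by
              have := Dvd.dvd.mul_left hcast 2
              rw [h2c] at this
              exact this
            rcases (Nat.Prime.dvd_mul hp).1 hpdvd with h | h
            · have := Nat.le_of_dvd (by omega) h
              omega
            · have := Nat.le_of_dvd (by omega) h
              omega
end

section
/- Let F be a field of prime characteristic p, let n and k be integers with 1 < n < p and k > n + 1, and let g(x) ∈ F[x] be a monic polynomial of degree n − 1 such that the coefficient of x^j in (x−1)^k g(x) is zero for every integer j with (k+n)/2 ≤ j < k. If k = 2q − n + 1 for some power q = p^c of p with q > p, then g(x) = (x − 1)^{n−1}. -/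
open Polynomial in
/-- **Theorem (polynomial result, assertion (c)).**
Let `F` have prime characteristic `p`, `1 < n < p`, `k > n + 1`, and let
`g ∈ F[x]` be monic of degree `n − 1` with `[x^j] (x−1)^k g(x) = 0` for
`(k+n)/2 ≤ j < k`.  If `k = 2q − n + 1` for some power `q = p^c` of `p` with
`q > p`, then `g(x) = (x − 1)^{n−1}`. -/
theorem polynomial_constraint_case_2q
    (p : ℕ) (hp : p.Prime)
    {F : Type*} [Field F] [CharP F p]
    (n k : ℕ) (hn1 : 1 < n) (hnp : n < p) (hk : n + 1 < k)
    (g : Polynomial F) (hmonic : g.Monic) (hdeg : g.natDegree = n - 1)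
    (hcoeff : ∀ j : ℕ, k + n ≤ 2 * j → j < k →
      ((Polynomial.X - 1) ^ k * g).coeff j = 0)
    (c : ℕ) (q : ℕ) (hq : q = p ^ c) (hqp : p < q)
    (hkq : k + n = 2 * q + 1) :
    g = (Polynomial.X - 1) ^ (n - 1) := by
  haveI : Fact p.Prime := ⟨hp⟩
  haveI : CharP (Polynomial F) p :=
    charP_of_injective_algebraMap' (A := Polynomial F) F p
  -- q ≥ p^2 hence q ≥ 2n+1
  have hc2 : 2 ≤ c := by
    by_contra h
    interval_cases c <;> simp_all <;> omega
  have hqn : 2 * n + 1 ≤ q := by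
    have h1 : p ^ 2 ≤ p ^ c := Nat.pow_le_pow_right hp.pos hc2
    have h2 : (n+1)^2 ≤ p^2 := Nat.pow_le_pow_left (by omega) 2
    nlinarith [hq ▸ h1]
  set f : Polynomial F := (X - 1) ^ k * g with hf
  -- key identity in char p
  have hXq : ((X : Polynomial F) - 1) ^ q = X ^ q - 1 := by
    rw [hq, sub_pow_char_pow, one_pow]
  have key : f * (X - 1) ^ (n - 1) = ((X : Polynomial F) ^ q - 1) ^ 2 * g := by
    rw [hf, mul_comm _ g, mul_assoc, ← pow_add, ← hXq, ← pow_mul']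
    rw [show k + (n-1) = q * 2 by omega]
    ring
  set B : Polynomial F := f /ₘ (X ^ k) with hB
  set A : Polynomial F := f %ₘ (X ^ k) with hA
  have hfAB : f = X ^ k * B + A := by
    conv_lhs => rw [← modByMonic_add_div f (X ^ k)]
    ring
  have hAdegk : A.degree < k := by
    simpa using degree_modByMonic_lt f (monic_X_pow k)
  have hAcoeff : ∀ j, q < j → A.coeff j = 0 := by
    intro j hj
    rcases lt_or_ge j k with hjk | hjk
    · have h1 : A.coeff j = f.coeff j - (X ^ k * B).coeff j := by
        rw [hfAB]; simp
      rw [h1, coeff_X_pow_mul', if_neg (by omega), hcoeff j (by omega) hjk, sub_zero]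
    · exact coeff_eq_zero_of_degree_lt (lt_of_lt_of_le hAdegk (by exact_mod_cast hjk))
  have hAdeg : A.natDegree ≤ q := natDegree_le_iff_coeff_eq_zero.2 hAcoeff
  -- the crucial cancellation
  have hD : B * (X - 1) ^ (n - 1) - X ^ (n - 1) * g = 0 := by
    set D : Polynomial F := B * (X - 1) ^ (n - 1) - X ^ (n - 1) * g with hDdef
    set R : Polynomial F := (1 - 2 * X ^ q) * g - A * (X - 1) ^ (n - 1) with hRdef
    have hXD : X ^ k * D = R := by
      have e2 : (X : Polynomial F) ^ k * X ^ (n - 1) = (X ^ q) ^ 2 := by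
        rw [← pow_add, ← pow_mul]; congr 1; omega
      have hfA : X ^ k * B = f - A := by rw [hfAB]; ring
      rw [hDdef, hRdef, mul_sub, ← mul_assoc, hfA, ← mul_assoc, e2]
      linear_combination key
    have hRdeg : R.natDegree < k := by
      have hX1 : ((X : Polynomial F) - 1).natDegree ≤ 1 := by
        simpa using natDegree_sub_le (X : Polynomial F) 1
      have h1 : (((1 : Polynomial F) - 2 * X ^ q) * g).natDegree ≤ q + (n - 1) := by
        refine natDegree_mul_le.trans (add_le_add ?_ (le_of_eq hdeg))
        refine (natDegree_sub_le _ _).trans ?_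
        have : ((2 : Polynomial F) * X ^ q).natDegree ≤ q := by
          refine natDegree_mul_le.trans ?_
          simp
        simpa using this
      have h2 : (A * (X - 1) ^ (n - 1)).natDegree ≤ q + (n - 1) := by
        refine natDegree_mul_le.trans (add_le_add hAdeg ?_)
        exact natDegree_pow_le.trans (by nlinarith)
      have := natDegree_sub_le ((1 - 2 * X ^ q) * g) (A * (X - 1) ^ (n - 1))
      rw [← hRdef] at this
      omega
    by_contra hDne
    have hco : (X ^ k * D).coeff (D.natDegree + k) = D.leadingCoeff := by
      rw [coeff_X_pow_mul]; rfl
    rw [hXD, coeff_eq_zero_of_natDegree_lt (by omega)] at hco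
    exact hDne (leadingCoeff_eq_zero.1 hco.symm)
  have hBg : B * (X - 1) ^ (n - 1) = X ^ (n - 1) * g := sub_eq_zero.1 hD
  -- coprimality and conclusion
  have hmonXm1 : ((X : Polynomial F) - 1).Monic := by
    simpa using monic_X_sub_C (1 : F)
  have hcop : IsCoprime (((X : Polynomial F) - 1) ^ (n - 1)) ((X : Polynomial F) ^ (n - 1)) :=
    IsCoprime.pow ⟨-1, 1, by ring⟩
  have hdvd : ((X : Polynomial F) - 1) ^ (n - 1) ∣ g * X ^ (n - 1) := by
    refine ⟨B, ?_⟩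
    rw [mul_comm g _, ← hBg]; ring
  have hdvdg : ((X : Polynomial F) - 1) ^ (n - 1) ∣ g :=
    hcop.dvd_of_dvd_mul_right hdvd
  have hdegXm1 : (((X : Polynomial F) - 1) ^ (n - 1)).natDegree = n - 1 := by
    rw [natDegree_pow]
    simp [show ((X : Polynomial F) - 1) = X - C 1 by simp]
  exact eq_of_monic_of_dvd_of_natDegree_le (hmonXm1.pow _) hmonic hdvdg
    (by rw [hdeg, hdegXm1])
end

section
/- Let F be a field of prime characteristic p, let n and k be integers with 1 < n < p and k > n + 1, and let g(x) ∈ F[x] be a monic polynomial of degree n − 1 such that the coefficient of x^j in (x−1)^k g(x) is zero for every integer j with (k+n)/2 ≤ j < k. If k = q − p + k0 for some power q = p^c of p with q > p and some integer k0 with p − n < k0 < p, then (x − 1)^{p−k0} divides g(x). -/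
open Polynomial


/-- **Theorem (polynomial result, assertion (d)).**
Let `F` have prime characteristic `p`, `1 < n < p`, `k > n + 1`, and let
`g ∈ F[x]` be monic of degree `n − 1` with `[x^j] (x−1)^k g(x) = 0` for
`(k+n)/2 ≤ j < k`.  If `k = q − p + k0` for some power `q = p^c` of `p` with
`q > p` and some `k0` with `p − n < k0 < p`, then `(x − 1)^{p−k0}` divides `g`. -/
theorem polynomial_constraint_case_below_q
    (p : ℕ) (hp : p.Prime)
    {F : Type*} [Field F] [CharP F p]
    (n k : ℕ) (hn1 : 1 < n) (hnp : n < p) (hk : n + 1 < k)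
    (g : Polynomial F) (hmonic : g.Monic) (hdeg : g.natDegree = n - 1)
    (hcoeff : ∀ j : ℕ, k + n ≤ 2 * j → j < k →
      ((Polynomial.X - 1) ^ k * g).coeff j = 0)
    (c : ℕ) (q : ℕ) (hq : q = p ^ c) (hqp : p < q)
    (k0 : ℕ) (hk0 : p - n < k0) (hk0' : k0 < p)
    (hkq : k + p = q + k0) :
    (Polynomial.X - 1) ^ (p - k0) ∣ g := by
  classical
  haveI : Fact p.Prime := ⟨hp⟩
  have hX1 : (Polynomial.X - 1 : Polynomial F) = X - C 1 := by rw [Polynomial.C_1]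
  set m := g.rootMultiplicity 1 with hm
  by_cases hcase : p - k0 ≤ m
  · refine dvd_trans (pow_dvd_pow _ hcase) ?_
    rw [hX1]; exact Polynomial.pow_rootMultiplicity_dvd g 1
  push_neg at hcase
  exfalso
  set e := p - k0 - m with he
  have he1 : 1 ≤ e := by omega
  have hepk : e ≤ n - 1 := by omega
  set h := g /ₘ (X - C 1) ^ m with hh
  have hg0 : g ≠ 0 := hmonic.ne_zero
  have hgh : (Polynomial.X - 1) ^ m * h = g := by
    rw [hX1]; exact Polynomial.pow_mul_divByMonic_rootMultiplicity_eq g 1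
  have hh1 : h.eval 1 ≠ 0 :=
    Polynomial.eval_divByMonic_pow_rootMultiplicity_ne_zero 1 hg0
  have hh0 : h ≠ 0 := fun hz => hh1 (by simp [hz])
  set f := (Polynomial.X - 1 : Polynomial F) ^ k * g with hf
  -- q ≥ p^2
  have hc2 : 2 ≤ c := by
    by_contra hc
    interval_cases c <;> simp_all <;> omega
  have hq2 : p * p ≤ q := by
    calc p * p = p ^ 2 := (sq p).symm
      _ ≤ p ^ c := Nat.pow_le_pow_right hp.one_lt.le hc2
      _ = q := hq.symm
  have h4 : n * n + 2 * n + 1 ≤ q := by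
    calc n * n + 2 * n + 1 = (n + 1) * (n + 1) := by ring
      _ ≤ p * p := Nat.mul_le_mul (by omega) (by omega)
      _ ≤ q := hq2
  have h3 : 2 * n ≤ n * n := Nat.mul_le_mul_right n hn1
  have hqn : 4 * n + 1 ≤ q := by linarith
  have hkbig : 3 * n + 1 ≤ k := by omega
  -- key identity
  have key : (Polynomial.X - 1 : Polynomial F) ^ e * f = (X ^ q - 1) * h := by
    have hfrob : (Polynomial.X - 1 : Polynomial F) ^ q = X ^ q - 1 := by
      subst hq; simpa using sub_pow_char_pow (Polynomial.X : Polynomial F) 1 c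
    rw [hf, ← hgh, ← hfrob, show q = e + k + m by omega]
    ring
  -- truncation A
  set A := f %ₘ (X ^ k : Polynomial F) with hA
  have hmonX : (X ^ k : Polynomial F).Monic := monic_X_pow k
  have hfAD : A + X ^ k * (f /ₘ X ^ k) = f := Polynomial.modByMonic_add_div f (X ^ k)
  have hAdegk : A.degree < (k : WithBot ℕ) := by
    have := Polynomial.degree_modByMonic_lt f hmonX
    simpa [Polynomial.degree_X_pow] using this
  have hAcoeff : ∀ j < k, A.coeff j = f.coeff j := by
    intro j hj
    have hz : ((X : Polynomial F) ^ k * (f /ₘ X ^ k)).coeff j = 0 :=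
      Polynomial.X_pow_dvd_iff.mp (dvd_mul_right _ _) j hj
    have h2 : A.coeff j + ((X : Polynomial F) ^ k * (f /ₘ X ^ k)).coeff j = f.coeff j := by
      rw [← Polynomial.coeff_add, hfAD]
    rw [hz, add_zero] at h2; exact h2
  have hAdegM : A.degree < (((k + n + 1) / 2 : ℕ) : WithBot ℕ) := by
    rw [Polynomial.degree_lt_iff_coeff_zero]
    intro j hj
    by_cases hjk : j < k
    · rw [hAcoeff j hjk]; exact hcoeff j (by omega) hjk
    · refine Polynomial.coeff_eq_zero_of_degree_lt (lt_of_lt_of_le hAdegk ?_)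
      exact_mod_cast Nat.not_lt.mp hjk
  -- degree of h
  have hXm1 : ((Polynomial.X : Polynomial F) - 1).natDegree = 1 := by
    rw [hX1]; exact Polynomial.natDegree_X_sub_C 1
  have hX1ne : ((Polynomial.X : Polynomial F) - 1) ≠ 0 := by
    rw [hX1]; exact Polynomial.X_sub_C_ne_zero 1
  have hhdeg : h.natDegree < k := by
    have hmul : ((Polynomial.X - 1 : Polynomial F) ^ m * h).natDegree
        = m * 1 + h.natDegree := by
      rw [Polynomial.natDegree_mul (pow_ne_zero _ hX1ne) hh0,
        Polynomial.natDegree_pow, hXm1]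
    rw [hgh, hdeg] at hmul
    omega
  have hhdegk : h.degree < (k : WithBot ℕ) := by
    rcases eq_or_ne h 0 with h0 | h0
    · exact absurd h0 hh0
    · exact (Polynomial.natDegree_lt_iff_degree_lt h0).mp hhdeg
  -- degree of (X-1)^e * A
  have hQdeg : ((Polynomial.X - 1 : Polynomial F) ^ e * A).degree < (k : WithBot ℕ) := by
    rcases eq_or_ne A 0 with h0 | h0
    · simp [h0]
    · rw [← Polynomial.natDegree_lt_iff_degree_lt
        (mul_ne_zero (pow_ne_zero _ hX1ne) h0)]
      have hb : ((Polynomial.X - 1 : Polynomial F) ^ e * A).natDegree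
          ≤ e * 1 + A.natDegree := by
        calc ((Polynomial.X - 1 : Polynomial F) ^ e * A).natDegree
            ≤ ((Polynomial.X - 1 : Polynomial F) ^ e).natDegree + A.natDegree :=
              Polynomial.natDegree_mul_le
          _ = e * 1 + A.natDegree := by rw [Polynomial.natDegree_pow, hXm1]
      have hAn : A.natDegree < (k + n + 1) / 2 :=
        (Polynomial.natDegree_lt_iff_degree_lt h0).mpr hAdegM
      omega
  -- P = 0
  set P := (Polynomial.X - 1 : Polynomial F) ^ e * A + h with hP
  have hPcoeff : ∀ j < k, P.coeff j = 0 := by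
    intro j hjk
    have hjq : j < q := by omega
    have c1 : ((Polynomial.X - 1 : Polynomial F) ^ e * A).coeff j
        = ((Polynomial.X - 1 : Polynomial F) ^ e * f).coeff j := by
      conv_rhs => rw [← hfAD]
      rw [mul_add, Polynomial.coeff_add, mul_left_comm]
      have hz : ((X : Polynomial F) ^ k * ((Polynomial.X - 1) ^ e * (f /ₘ X ^ k))).coeff j = 0 :=
        Polynomial.X_pow_dvd_iff.mp (dvd_mul_right _ _) j hjk
      rw [hz, add_zero]
    have c2 : (((X : Polynomial F) ^ q - 1) * h).coeff j = - h.coeff j := by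
      rw [sub_mul, one_mul, Polynomial.coeff_sub,
        Polynomial.X_pow_dvd_iff.mp (dvd_mul_right _ _) j hjq, zero_sub]
    rw [hP, Polynomial.coeff_add, c1, key, c2]
    ring
  have hP0 : P = 0 := by
    ext j
    rcases lt_or_ge j k with hjk | hjk
    · simpa using hPcoeff j hjk
    · have : P.degree < (j : WithBot ℕ) := by
        have h1 : P.degree < (k : WithBot ℕ) :=
          lt_of_le_of_lt (Polynomial.degree_add_le _ _) (max_lt hQdeg hhdegk)
        refine lt_of_lt_of_le h1 ?_
        exact_mod_cast hjk
      simpa using Polynomial.coeff_eq_zero_of_degree_lt this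
  have : P.eval 1 = 0 := by rw [hP0]; simp
  rw [hP] at this
  simp only [Polynomial.eval_add, Polynomial.eval_mul, Polynomial.eval_pow,
    Polynomial.eval_sub, Polynomial.eval_X, Polynomial.eval_one, sub_self,
    zero_pow (by omega : e ≠ 0), zero_mul, zero_add] at this
  exact hh1 this
end

section
/- Let F be a field of prime characteristic p, let n and k be integers with 1 < n < p and k > n + 1, and let g(x) ∈ F[x] be a monic polynomial of degree n − 1 such that the coefficient of x^j in (x−1)^k g(x) is zero for every integer j with (k+n)/2 ≤ j < k. If k = q + k0 for some power q = p^c of p with q > p and some integer k0 with 0 < k0 < n, then x^{k0} divides g(x). -/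
/-- **Theorem (polynomial result, assertion (e)).**
Let `F` have prime characteristic `p`, `1 < n < p`, `k > n + 1`, and let
`g ∈ F[x]` be monic of degree `n − 1` with `[x^j] (x−1)^k g(x) = 0` for
`(k+n)/2 ≤ j < k`.  If `k = q + k0` for some power `q = p^c` of `p` with
`q > p` and some `k0` with `0 < k0 < n`, then `x^{k0}` divides `g`. -/
theorem polynomial_constraint_case_above_q
    (p : ℕ) (hp : p.Prime)
    {F : Type*} [Field F] [CharP F p]
    (n k : ℕ) (hn1 : 1 < n) (hnp : n < p) (hk : n + 1 < k)
    (g : Polynomial F) (hmonic : g.Monic) (hdeg : g.natDegree = n - 1)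
    (hcoeff : ∀ j : ℕ, k + n ≤ 2 * j → j < k →
      ((Polynomial.X - 1) ^ k * g).coeff j = 0)
    (c : ℕ) (q : ℕ) (hq : q = p ^ c) (hqp : p < q)
    (k0 : ℕ) (hk0 : 0 < k0) (hk0' : k0 < n)
    (hkq : k = q + k0) :
    Polynomial.X ^ k0 ∣ g := by
  haveI : Fact p.Prime := ⟨hp⟩
  -- q ≥ p^2, hence q ≥ k0 + n
  have hc2 : 2 ≤ c := by
    by_contra hc
    interval_cases c <;> simp_all <;> omega
  have hq2 : p ^ 2 ≤ q := by
    rw [hq]; exact Nat.pow_le_pow_right hp.pos hc2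
  have hqbig : k0 + n ≤ q := by
    have h1 : k0 + n ≤ 2 * p := by omega
    have h2 : 2 * p ≤ p ^ 2 := by nlinarith [hp.two_le]
    omega
  set h : Polynomial F := (Polynomial.X - 1) ^ k0 * g with hh
  have hXm : (Polynomial.X - (1 : Polynomial F)).natDegree = 1 := by
    simpa using Polynomial.natDegree_X_sub_C (1 : F)
  have hhdeg : h.natDegree ≤ k0 + (n - 1) := by
    refine le_trans (Polynomial.natDegree_mul_le) ?_
    have : ((Polynomial.X - 1 : Polynomial F) ^ k0).natDegree ≤ k0 := by
      refine le_trans (Polynomial.natDegree_pow_le) (by rw [hXm]; omega)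
    omega
  -- (X-1)^q = X^q - 1
  have hfrob : (Polynomial.X - 1 : Polynomial F) ^ q =
      Polynomial.X ^ q - 1 := by
    rw [hq]
    have := sub_pow_char_pow (R := Polynomial F) (p := p) Polynomial.X 1 (n := c)
    simpa using this
  have hsplit : (Polynomial.X - 1 : Polynomial F) ^ k * g =
      (Polynomial.X ^ q) * h - h := by
    rw [hkq, pow_add, hfrob, hh]; ring
  -- key: coefficients of h below k0 vanish
  have hcz : ∀ i < k0, h.coeff i = 0 := by
    intro i hi
    have h1 : k + n ≤ 2 * (q + i) := by omega
    have h2 : q + i < k := by omega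
    have := hcoeff (q + i) h1 h2
    rw [hsplit] at this
    rw [Polynomial.coeff_sub] at this
    have e1 : (Polynomial.X ^ q * h).coeff (q + i) = h.coeff i := by
      have := Polynomial.coeff_X_pow_mul h q i
      simpa [Nat.add_comm] using this
    have e2 : h.coeff (q + i) = 0 := by
      apply Polynomial.coeff_eq_zero_of_natDegree_lt
      omega
    rw [e1, e2] at this
    simpa using this
  have hdvdh : Polynomial.X ^ k0 ∣ h := by
    rw [Polynomial.X_pow_dvd_iff]
    exact hcz
  have hcop : IsCoprime (Polynomial.X ^ k0) ((Polynomial.X - 1 : Polynomial F) ^ k0) := by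
    apply IsCoprime.pow
    exact ⟨1, -1, by ring⟩
  exact hcop.dvd_of_dvd_mul_left (by rwa [hh] at hdvdh)
end

section
/- Let F be a field of prime characteristic p, let a ∈ F, and let k > 1 be a natural number. Suppose that the coefficient of x^j in (x−1)^k (x−a) ∈ F[x] is zero for every integer j with k/2 + 1 ≤ j ≤ k (equivalently, k + 2 ≤ 2j ≤ 2k). Then one of the following holds: k = 2 and a = −2; or k = 3 and a = −3; or there is a power q = p^c of p such that (k = q − 1 and a = 1), or (k = q and a = 0), or (k = 2q − 1 and a = 1). -/
open Polynomial

/-- `C(u*p^c, p^c) ≡ u (mod p)`. -/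
lemma lucas_aux1 (p : ℕ) [Fact p.Prime] (c u : ℕ) :
    ((u * p ^ c).choose (p ^ c) : ZMod p) = (u : ZMod p) := by
  induction c with
  | zero => simp
  | succ c ih =>
      have hp : 0 < p := (Fact.out : p.Prime).pos
      have e1 : u * p ^ (c+1) = p * (u * p ^ c) + 0 := by ring
      have e2 : p ^ (c+1) = p * p ^ c + 0 := by ring
      rw [e1, e2]
      have h := (ZMod.natCast_eq_natCast_iff _ _ _).mpr
        (Choose.choose_modEq_choose_mod_mul_choose_div_nat
          (p := p) (n := p * (u * p ^ c) + 0) (k := p * p ^ c + 0))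
      rw [Nat.mul_add_mod, Nat.mul_add_mod, Nat.mul_add_div hp, Nat.mul_add_div hp] at h
      simpa [ih] using h

/-- `C(v*p^c - 1, p^c) ≡ v - 1 (mod p)` for `v ≥ 1`. -/
lemma lucas_aux2 (p : ℕ) [Fact p.Prime] (c v : ℕ) (hv : 1 ≤ v) :
    ((v * p ^ c - 1).choose (p ^ c) : ZMod p) = ((v - 1 : ℕ) : ZMod p) := by
  induction c with
  | zero => simp [Nat.choose_one_right]
  | succ c ih =>
      have hp : 0 < p := (Fact.out : p.Prime).pos
      have hA : 1 ≤ v * p ^ c := Nat.one_le_iff_ne_zero.mpr (by positivity)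
      have hAp : p ≤ v * p ^ c * p := Nat.le_mul_of_pos_left _ (by positivity)
      have e1 : v * p ^ (c+1) - 1 = p * (v * p ^ c - 1) + (p - 1) := by
        have h' : v * p ^ (c+1) = v * p ^ c * p := by ring
        have h'' : p * (v * p ^ c - 1) = v * p ^ c * p - p := by
          rw [mul_comm, Nat.sub_mul, one_mul]
        rw [h', h'']
        omega
      have e2 : p ^ (c+1) = p * p ^ c + 0 := by ring
      rw [e1, e2]
      have h := (ZMod.natCast_eq_natCast_iff _ _ _).mpr
        (Choose.choose_modEq_choose_mod_mul_choose_div_nat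
          (p := p) (n := p * (v * p ^ c - 1) + (p - 1)) (k := p * p ^ c + 0))
      rw [Nat.mul_add_mod, Nat.mul_add_mod, Nat.mul_add_div hp, Nat.mul_add_div hp,
        Nat.mod_eq_of_lt (show p - 1 < p by omega), Nat.div_eq_of_lt (show p - 1 < p by omega)] at h
      simpa [ih] using h

/-- The key number-theoretic classification. -/
lemma main_classification (p : ℕ) (hp : p.Prime) (k : ℕ) (hk4 : 4 ≤ k)
    (H : ∀ i, 2 * i ≤ k → ((k.choose i : ZMod p)) = (k : ZMod p) ^ i) :
    ∃ c : ℕ, k = p ^ c - 1 ∨ k = p ^ c ∨ k = 2 * p ^ c - 1 := by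
  haveI : Fact p.Prime := ⟨hp⟩
  set K : ZMod p := (k : ZMod p) with hKdef
  -- Step 1 : K = 0 or K = -1
  have h2d : 2 ∣ k * (k - 1) := by
    rcases Nat.even_or_odd k with h | h
    · exact Dvd.dvd.mul_right h.two_dvd _
    · exact Dvd.dvd.mul_left (Nat.Odd.sub_odd h odd_one).two_dvd _
  have hZ2 := H 2 (by omega)
  rw [Nat.choose_two_right] at hZ2
  have e : ((k * (k - 1) / 2 * 2 : ℕ) : ZMod p) = K ^ 2 * 2 := by
    push_cast
    rw [hZ2]
  rw [Nat.div_mul_cancel h2d] at e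
  have e' : K * (K - 1) = K ^ 2 * 2 := by
    have h1 : ((k - 1 : ℕ) : ZMod p) = K - 1 := by
      have : (1:ℕ) ≤ k := by omega
      push_cast [this]
      ring
    rw [Nat.cast_mul, h1] at e
    exact e
  have hK0 : K * (K + 1) = 0 := by linear_combination (-1 : ZMod p) * e'
  rcases mul_eq_zero.mp hK0 with hK | hK
  · -- Case A : p ∣ k, show k = p^c
    have hdvd : p ∣ k := (ZMod.natCast_eq_zero_iff _ _).mp hK
    set c := k.factorization p with hc
    have hcpos : 0 < c := hp.factorization_pos_of_dvd (by omega) hdvd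
    have hqd : p ^ c ∣ k := Nat.ordProj_dvd k p
    set u := k / p ^ c with hu
    have hku : k = u * p ^ c := by
      rw [hu, Nat.div_mul_cancel hqd]
    have hnu : ¬ p ∣ u := Nat.not_dvd_ordCompl hp (by omega)
    have hu1 : 1 ≤ u := by
      rcases Nat.eq_zero_or_pos u with h | h
      · rw [h, zero_mul] at hku; omega
      · exact h
    rcases eq_or_lt_of_le hu1 with h1 | h1
    · exact ⟨c, Or.inr (Or.inl (by rw [hku, ← h1, one_mul]))⟩
    · exfalso
      have hqk : 2 * p ^ c ≤ k := by
        have h2' : 2 * p ^ c ≤ u * p ^ c := Nat.mul_le_mul_right _ (by omega)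
        omega
      have hH := H (p ^ c) hqk
      rw [hku, lucas_aux1] at hH
      rw [hK, zero_pow (pow_pos hp.pos c).ne'] at hH
      exact hnu ((ZMod.natCast_eq_zero_iff _ _).mp hH)
  · -- Case B : p ∣ k + 1, show k = p^c - 1 or 2p^c - 1
    have hK1 : K = -1 := eq_neg_of_add_eq_zero_left hK
    have hdvd : p ∣ k + 1 := by
      have : ((k + 1 : ℕ) : ZMod p) = 0 := by push_cast; rw [← hKdef, hK1]; ring
      exact (ZMod.natCast_eq_zero_iff _ _).mp this
    set c := (k+1).factorization p with hc
    have hqd : p ^ c ∣ k + 1 := Nat.ordProj_dvd (k+1) p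
    set v := (k + 1) / p ^ c with hv
    have hkv : k + 1 = v * p ^ c := by
      rw [hv, Nat.div_mul_cancel hqd]
    have hnv : ¬ p ∣ v := Nat.not_dvd_ordCompl hp (by omega)
    have hv1 : 1 ≤ v := by
      rcases Nat.eq_zero_or_pos v with h | h
      · rw [h, zero_mul] at hkv; omega
      · exact h
    have hq1 : 1 ≤ p ^ c := Nat.one_le_pow _ _ hp.pos
    rcases Nat.lt_or_ge v 3 with h3 | h3
    · -- v = 1 or v = 2
      interval_cases v
      · exact ⟨c, Or.inl (by omega)⟩
      · exact ⟨c, Or.inr (Or.inr (by omega))⟩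
    · exfalso
      have hqk : 2 * p ^ c ≤ k := by
        have h3' : 3 * p ^ c ≤ v * p ^ c := Nat.mul_le_mul_right _ h3
        omega
      have hH := H (p ^ c) hqk
      have hkeq : k = v * p ^ c - 1 := by omega
      rw [hkeq, lucas_aux2 p c v hv1] at hH
      rw [hK1] at hH
      -- hH : ((v - 1 : ℕ) : ZMod p) = (-1) ^ p ^ c
      have hcast : ((v - 1 : ℕ) : ZMod p) = (v : ZMod p) - 1 := by
        push_cast [hv1]; ring
      rw [hcast] at hH
      have hvz : (v : ZMod p) = 0 := by
        rcases hp.eq_two_or_odd' with h2 | hodd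
        · have h20 : ((2 : ℕ) : ZMod p) = 0 := by rw [← h2]; exact ZMod.natCast_self p
          have h2' : (2 : ZMod p) = 0 := by exact_mod_cast h20
          have hne : (-1 : ZMod p) = 1 := by linear_combination -h2'
          rw [hne, one_pow] at hH
          linear_combination hH + h2' 
        · have hoddq : Odd (p ^ c) := hodd.pow
          rw [hoddq.neg_one_pow] at hH
          linear_combination hH
      exact hnv ((ZMod.natCast_eq_zero_iff _ _).mp hvz)

/-- **Lemma (on `(x−1)^k (x−a)`, first variant).**
Let `F` have prime characteristic `p`, `a ∈ F`, `k > 1`, and suppose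
`[x^j] (x−1)^k (x−a) = 0` for all `j` with `k/2 + 1 ≤ j ≤ k` (that is,
`k + 2 ≤ 2j` and `j ≤ k`).  Then `(k, a)` is one of `(2, −2)`, `(3, −3)`,
`(q−1, 1)`, `(q, 0)`, `(2q−1, 1)` for a power `q = p^c` of `p`. -/
theorem vanishing_coeffs_linear_factor
    (p : ℕ) (hp : p.Prime)
    {F : Type*} [Field F] [CharP F p]
    (a : F) (k : ℕ) (hk : 1 < k)
    (hcoeff : ∀ j : ℕ, k + 2 ≤ 2 * j → j ≤ k →
      ((Polynomial.X - 1) ^ k * (Polynomial.X - Polynomial.C a)).coeff j = 0) :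
    (k = 2 ∧ a = -2) ∨ (k = 3 ∧ a = -3) ∨
      ∃ c : ℕ, (k = p ^ c - 1 ∧ a = 1) ∨ (k = p ^ c ∧ a = 0) ∨
        (k = 2 * p ^ c - 1 ∧ a = 1) := by
  have hXone : (X - 1 : F[X]) = X + C (-1 : F) := by rw [map_neg, map_one]; ring
  have hb : ∀ j : ℕ, ((X - 1 : F[X]) ^ k).coeff j = (-1 : F) ^ (k - j) * k.choose j := by
    intro j; rw [hXone, coeff_X_add_C_pow]
  -- the key linear relation between consecutive binomial coefficients
  have key : ∀ i : ℕ, 2 * (i + 1) ≤ k →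
      ((k.choose (i+1) : F)) = -a * (k.choose i : F) := by
    intro i hi
    have h0 := hcoeff (k - i) (by omega) (by omega)
    have e1 : k - i = (k - i - 1) + 1 := by omega
    rw [mul_sub, Polynomial.coeff_sub, e1, coeff_mul_X, coeff_mul_C, hb, hb] at h0
    have e3 : (k - i - 1) + 1 = k - i := by omega
    rw [e3] at h0
    have e2 : k - (k - i - 1) = i + 1 := by omega
    have e4 : k - (k - i) = i := by omega
    rw [e2, e4] at h0
    have e5 : k - i - 1 = k - (i + 1) := by omega
    rw [e5, Nat.choose_symm (show i + 1 ≤ k by omega),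
      Nat.choose_symm (show i ≤ k by omega)] at h0
    have hs : ((-1 : F) ^ i) * ((-1 : F) ^ i) = 1 := by
      rw [← pow_add]; exact Even.neg_one_pow ⟨i, rfl⟩
    linear_combination (-((-1 : F) ^ i)) * h0 -
      (((k.choose (i+1) : F)) + a * (k.choose i : F)) * hs
  -- the value of a
  have ha : a = -(k : F) := by
    have h0 := key 0 (by omega)
    simp [Nat.choose_one_right] at h0
    linear_combination h0
  have hrec : ∀ i : ℕ, 2 * (i + 1) ≤ k →
      ((k.choose (i+1) : F)) = (k : F) * (k.choose i : F) := by
    intro i hi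
    rw [key i hi, ha, neg_neg]
  have hpow : ∀ i : ℕ, 2 * i ≤ k → ((k.choose i : F)) = (k : F) ^ i := by
    intro i
    induction i with
    | zero => intro _; simp
    | succ n ih =>
        intro h
        rw [hrec n h, ih (by omega), pow_succ]
        ring
  -- transfer to ZMod p
  have hZ : ∀ i : ℕ, 2 * i ≤ k → ((k.choose i : ZMod p)) = (k : ZMod p) ^ i := by
    intro i hi
    have h1 : ((k.choose i : ℕ) : F) = ((k ^ i : ℕ) : F) := by
      push_cast; exact hpow i hi
    have h2 : k.choose i ≡ k ^ i [MOD p] := (CharP.natCast_eq_natCast F p).mp h1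
    have h3 := (ZMod.natCast_eq_natCast_iff _ _ _).mpr h2
    push_cast at h3
    exact h3
  rcases Nat.lt_or_ge k 4 with h4 | h4
  · interval_cases k
    · left; refine ⟨rfl, ?_⟩; rw [ha]; norm_num
    · right; left; refine ⟨rfl, ?_⟩; rw [ha]; norm_num
  · obtain ⟨c, hcase⟩ := main_classification p hp k h4 hZ
    have hpF : (p : F) = 0 := CharP.cast_eq_zero F p
    right; right
    refine ⟨c, ?_⟩
    rcases hcase with hkc | hkc | hkc
    · left
      refine ⟨hkc, ?_⟩
      have hq1 : 1 ≤ p ^ c := Nat.one_le_pow _ _ hp.pos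
      have hc0 : c ≠ 0 := by rintro rfl; simp at hkc; omega
      have hq0 : ((p ^ c : ℕ) : F) = 0 := by push_cast; rw [hpF]; exact zero_pow hc0
      rw [ha, hkc, Nat.cast_sub hq1, hq0]
      norm_num
    · right; left
      refine ⟨hkc, ?_⟩
      have hc0 : c ≠ 0 := by rintro rfl; simp at hkc; omega
      have hq0 : ((p ^ c : ℕ) : F) = 0 := by push_cast; rw [hpF]; exact zero_pow hc0
      rw [ha, hkc, hq0]
      norm_num
    · right; right
      refine ⟨hkc, ?_⟩
      have hq1 : 1 ≤ 2 * p ^ c := by have := Nat.one_le_pow c p hp.pos; omega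
      have hc0 : c ≠ 0 := by rintro rfl; simp at hkc; omega
      have hq0 : ((p ^ c : ℕ) : F) = 0 := by push_cast; rw [hpF]; exact zero_pow hc0
      rw [ha, hkc, Nat.cast_sub hq1, Nat.cast_mul, hq0]
      norm_num
end

section
/- Let F be a field of prime characteristic p, let a ∈ F, and let k > 1 be a natural number. Suppose that the coefficient of x^j in (x−1)^k (x−a) ∈ F[x] is zero for every integer j with (k+1)/2 ≤ j ≤ k (equivalently, k + 1 ≤ 2j ≤ 2k). Then one of the following holds: k = 2 and a = −2; or there is a power q = p^c of p such that (k = q − 1 and a = 1) or (k = q and a = 0). -/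
/-- If the "middle" binomial coefficients of `u` all vanish mod `p`, then `u` is a
power of `p`. -/
private lemma lemA (p : ℕ) (hp : p.Prime) : ∀ u : ℕ, 1 ≤ u →
    (∀ b : ℕ, 1 ≤ b → 2 * b ≤ u → (u.choose b : ZMod p) = 0) → ∃ c, u = p ^ c := by
  haveI : Fact p.Prime := ⟨hp⟩
  intro u
  induction u using Nat.strong_induction_on with
  | _ u ih =>
    intro hu h
    have hp2 := hp.two_le
    rcases eq_or_lt_of_le hu with h1 | h2
    · exact ⟨0, by rw [pow_zero]; omega⟩
    · have hdvd : p ∣ u := by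
        have h1 := h 1 le_rfl (by omega)
        simpa [ZMod.natCast_eq_zero_iff] using h1
      obtain ⟨u', rfl⟩ := hdvd
      have hu' : 1 ≤ u' := by
        rcases Nat.eq_zero_or_pos u' with rfl | hpos
        · omega
        · exact hpos
      have hlt : u' < p * u' := by nlinarith
      obtain ⟨c, hc⟩ := ih u' hlt hu' (fun b hb hb2 => by
        have key := Choose.choose_modEq_choose_mod_mul_choose_div_nat
          (p := p) (n := p * u') (k := p * b)
        rw [Nat.mul_mod_right, Nat.mul_mod_right, Nat.mul_div_cancel_left _ hp.pos,
          Nat.mul_div_cancel_left _ hp.pos] at key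
        have hz := h (p * b) (by nlinarith) (by nlinarith)
        have hcast := (ZMod.natCast_eq_natCast_iff _ _ _).mpr key
        rw [hz] at hcast
        have : ((Nat.choose 0 0 * Nat.choose u' b : ℕ) : ZMod p) = 0 := hcast.symm
        simpa using this)
      exact ⟨c + 1, by rw [hc, pow_succ]; ring⟩

/-- If the "lower-middle" binomial coefficients of `u` are all `(-1)^b` mod `p`,
then `u + 1` is a power of `p`. -/
private lemma lemB (p : ℕ) (hp : p.Prime) : ∀ u : ℕ, 1 ≤ u →
    (∀ b : ℕ, 2 * b ≤ u + 1 → (u.choose b : ZMod p) = (-1) ^ b) → ∃ c, u + 1 = p ^ c := by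
  haveI : Fact p.Prime := ⟨hp⟩
  intro u
  induction u using Nat.strong_induction_on with
  | _ u ih =>
    intro hu h
    have hp2 := hp.two_le
    have hdvd : p ∣ u + 1 := by
      have h1 := h 1 (by omega)
      rw [Nat.choose_one_right] at h1
      have : ((u + 1 : ℕ) : ZMod p) = 0 := by push_cast; rw [h1]; ring
      exact (ZMod.natCast_eq_zero_iff _ _).mp this
    by_cases hup : u < p
    · refine ⟨1, ?_⟩
      have hle := Nat.le_of_dvd (Nat.succ_pos u) hdvd
      rw [pow_one]; omega
    · push_neg at hup
      obtain ⟨m, hm⟩ := hdvd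
      have hm1 : 1 ≤ m := by
        rcases Nat.eq_zero_or_pos m with rfl | hpos
        · omega
        · exact hpos
      obtain ⟨m', rfl⟩ : ∃ m', m = m' + 1 := ⟨m - 1, by omega⟩
      have hmu : u = p * m' + (p - 1) := by
        have : u + 1 = p * m' + p := by rw [hm]; ring
        omega
      have hmod : u % p = p - 1 := by
        rw [hmu, Nat.mul_add_mod]
        exact Nat.mod_eq_of_lt (by omega)
      have hdiv : u / p = m' := by
        rw [hmu, Nat.mul_add_div hp.pos, Nat.div_eq_of_lt (by omega)]
        omega
      have hm'1 : 1 ≤ m' := by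
        rcases Nat.eq_zero_or_pos m' with rfl | hpos
        · omega
        · exact hpos
      have hm'lt : m' < u := by nlinarith
      obtain ⟨c, hc⟩ := ih m' hm'lt hm'1 (fun b hb => by
        have key := Choose.choose_modEq_choose_mod_mul_choose_div_nat
          (p := p) (n := u) (k := p * b)
        rw [Nat.mul_mod_right, Nat.mul_div_cancel_left _ hp.pos, hmod, hdiv,
          Nat.choose_zero_right, one_mul] at key
        have hz := h (p * b) (by nlinarith [hm])
        have hcast := (ZMod.natCast_eq_natCast_iff _ _ _).mpr key
        rw [hz] at hcast
        rw [← hcast]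
        rcases hp.eq_two_or_odd' with h2 | hodd
        · subst h2
          have hneg : (-1 : ZMod 2) = 1 := CharTwo.neg_eq 1
          rw [hneg, one_pow, one_pow]
        · rw [pow_mul, Odd.neg_one_pow hodd])
      exact ⟨c + 1, by rw [hm, hc, pow_succ]; ring⟩

/-- Main number-theoretic lemma: if `C(k,i) ≡ k^i (mod p)` for all `2i ≤ k+1`
and `k ≥ 3`, then `k+1` or `k` is a power of `p`. -/
private lemma mainNat (p : ℕ) (hp : p.Prime) (k : ℕ) (hk : 3 ≤ k)
    (h : ∀ i : ℕ, 2 * i ≤ k + 1 → (k.choose i : ZMod p) = (k : ZMod p) ^ i) :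
    (∃ c, k + 1 = p ^ c) ∨ (∃ c, k = p ^ c) := by
  haveI : Fact p.Prime := ⟨hp⟩
  by_cases h0 : (k : ZMod p) = 0
  · right
    refine lemA p hp k (by omega) fun b hb hb2 => ?_
    rw [h b (by omega), h0, zero_pow (by omega)]
  · left
    have hm1 : (k : ZMod p) = -1 := by
      have h2 := h 2 (by omega)
      have hnat : 2 * k.choose 2 = k * (k - 1) := by
        rw [Nat.choose_two_right]
        exact Nat.mul_div_cancel' (Nat.even_mul_pred_self k).two_dvd
      have hcast := congrArg (Nat.cast : ℕ → ZMod p) hnat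
      push_cast [Nat.cast_sub (by omega : 1 ≤ k)] at hcast
      rw [h2] at hcast
      have hz : (k : ZMod p) * ((k : ZMod p) + 1) = 0 := by linear_combination hcast
      rcases mul_eq_zero.mp hz with hz | hz
      · exact absurd hz h0
      · linear_combination hz
    refine lemB p hp k (by omega) fun b hb => ?_
    rw [h b hb, hm1]

/-- **Lemma (on `(x−1)^k (x−a)`, second variant).**
Let `F` have prime characteristic `p`, `a ∈ F`, `k > 1`, and suppose
`[x^j] (x−1)^k (x−a) = 0` for all `j` with `(k+1)/2 ≤ j ≤ k` (that is,
`k + 1 ≤ 2j` and `j ≤ k`).  Then `(k, a)` is one of `(2, −2)`,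
`(q−1, 1)`, `(q, 0)` for a power `q = p^c` of `p`. -/
theorem vanishing_coeffs_linear_factor_strong
    (p : ℕ) (hp : p.Prime)
    {F : Type*} [Field F] [CharP F p]
    (a : F) (k : ℕ) (hk : 1 < k)
    (hcoeff : ∀ j : ℕ, k + 1 ≤ 2 * j → j ≤ k →
      ((Polynomial.X - 1) ^ k * (Polynomial.X - Polynomial.C a)).coeff j = 0) :
    (k = 2 ∧ a = -2) ∨
      ∃ c : ℕ, (k = p ^ c - 1 ∧ a = 1) ∨ (k = p ^ c ∧ a = 0) := by
  classical
  have hXC : (Polynomial.X - 1 : Polynomial F) = Polynomial.X + Polynomial.C (-1) := by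
    rw [Polynomial.C_neg, Polynomial.C_1, ← sub_eq_add_neg]
  -- Step 1: the coefficient relation
  have hC : ∀ j : ℕ, k + 1 ≤ 2 * j → j ≤ k →
      (k.choose (j - 1) : F) + a * (k.choose j : F) = 0 := by
    intro j hj1 hj2
    obtain ⟨m, rfl⟩ : ∃ m, j = m + 1 := ⟨j - 1, by omega⟩
    have hco := hcoeff (m + 1) hj1 hj2
    rw [hXC, Polynomial.coeff_mul_X_sub_C, Polynomial.coeff_X_add_C_pow,
      Polynomial.coeff_X_add_C_pow] at hco
    have hks : k - m = (k - (m + 1)) + 1 := by omega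
    rw [hks, pow_succ] at hco
    have h2 : (-1 : F) ^ (k - (m + 1)) *
        ((k.choose (m + 1 - 1) : F) + a * (k.choose (m + 1) : F)) = 0 := by
      simp only [Nat.add_sub_cancel]
      linear_combination -hco
    exact (mul_eq_zero.mp h2).resolve_left
      (pow_ne_zero _ (neg_ne_zero.mpr one_ne_zero))
  -- Step 2: a = -k
  have ha : a = -(k : F) := by
    have h1 := hC k (by omega) le_rfl
    have hck : k.choose (k - 1) = k := by
      rw [show k - 1 = k - 1 from rfl, Nat.choose_symm (by omega : 1 ≤ k),
        Nat.choose_one_right]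
    rw [hck, Nat.choose_self] at h1
    push_cast at h1
    linear_combination h1
  -- Step 3: binomials are powers of k, in F
  have hF : ∀ i : ℕ, 2 * i ≤ k + 1 → (k.choose i : F) = (k : F) ^ i := by
    intro i
    induction i with
    | zero => simp
    | succ i ihi =>
      intro hle
      have h1 : 2 * i ≤ k + 1 := by omega
      have hCj := hC (k - i) (by omega) (by omega)
      have e1 : k - i - 1 = k - (i + 1) := by omega
      rw [e1, Nat.choose_symm (by omega : i + 1 ≤ k),
        Nat.choose_symm (by omega : i ≤ k)] at hCj
      rw [ihi h1, ha] at hCj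
      linear_combination hCj
  -- Step 4: transfer to ZMod p
  have hZ : ∀ i : ℕ, 2 * i ≤ k + 1 → (k.choose i : ZMod p) = (k : ZMod p) ^ i := by
    intro i hi
    have h2 : (k.choose i : F) = ((k ^ i : ℕ) : F) := by push_cast; exact hF i hi
    have h3 : k.choose i ≡ k ^ i [MOD p] := (CharP.natCast_eq_natCast F p).mp h2
    have h4 := (ZMod.natCast_eq_natCast_iff _ _ _).mpr h3
    push_cast at h4
    exact h4
  -- Step 5: conclude
  by_cases hk2 : k = 2
  · left
    refine ⟨hk2, ?_⟩
    rw [ha, hk2]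
    push_cast
    ring
  · right
    have hk3 : 3 ≤ k := by omega
    rcases mainNat p hp k hk3 hZ with ⟨c, hc⟩ | ⟨c, hc⟩
    · refine ⟨c, Or.inl ⟨by omega, ?_⟩⟩
      have hc1 : c ≠ 0 := by rintro rfl; simp at hc; omega
      have hzero : ((k : F) + 1) = 0 := by
        have h5 : ((k + 1 : ℕ) : F) = ((p ^ c : ℕ) : F) := by rw [hc]
        push_cast at h5
        rw [h5, CharP.cast_eq_zero F p, zero_pow hc1]
      rw [ha]
      linear_combination -hzero
    · refine ⟨c, Or.inr ⟨hc, ?_⟩⟩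
      have hc1 : c ≠ 0 := by rintro rfl; rw [pow_zero] at hc; omega
      have hzero : (k : F) = 0 := by
        have h5 : ((k : ℕ) : F) = ((p ^ c : ℕ) : F) := by rw [hc]
        push_cast at h5
        rw [h5, CharP.cast_eq_zero F p, zero_pow hc1]
      rw [ha, hzero, neg_zero]
end

section
/- Let p be a prime and let q = p^c be a power of p. Then for all non-negative integers a and b with a < q and b < q, the congruence C(a, q−1−b) ≡ (−1)^{a+b} C(b, q−1−a) (mod p) holds, where C(·,·) denotes the binomial coefficient. -/
private lemma sign_aux (p : ℕ) (hp : p.Prime) (n : ℕ) :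
    ((-1 : ZMod p)) ^ (p * n) = (-1 : ZMod p) ^ n := by
  rcases hp.eq_two_or_odd' with h2 | hodd
  · subst h2
    have hone : (-1 : ZMod 2) = 1 := rfl
    rw [hone, one_pow, one_pow]
  · rw [pow_mul, Odd.neg_one_pow hodd]

/-- One-digit reflection lemma, case without carry. -/
private lemma one_digit_nocarry (p : ℕ) (hp : p.Prime) :
    ∀ k x : ℕ, x + k ≤ p - 1 →
      ((p - 1 - x).choose k : ZMod p) = (-1 : ZMod p) ^ k * ((x + k).choose k : ZMod p) := by
  haveI : Fact p.Prime := ⟨hp⟩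
  intro k
  induction k with
  | zero => intro x _; simp
  | succ k ih =>
    intro x h
    have hp2 := hp.two_le
    have hk1 : k + 1 < p := by omega
    have hk1ne : ((k + 1 : ℕ) : ZMod p) ≠ 0 := by
      rw [Ne, ZMod.natCast_eq_zero_iff]
      intro hdvd
      exact absurd (Nat.le_of_dvd (by omega) hdvd) (by omega)
    apply mul_right_cancel₀ hk1ne
    have e1 : (p - 1 - x).choose (k + 1) * (k + 1) = (p - 1 - x).choose k * (p - 1 - x - k) :=
      Nat.choose_succ_right_eq _ _
    have e2 : (x + (k + 1)).choose (k + 1) * (k + 1) = (x + k + 1) * (x + k).choose k := by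
      rw [show x + (k + 1) = (x + k) + 1 from by omega]
      exact (Nat.add_one_mul_choose_eq (x + k) k).symm
    have ihx := ih x (by omega)
    have hcast1 : ((p - 1 - x - k : ℕ) : ZMod p) = -((x + k + 1 : ℕ) : ZMod p) := by
      have hsum : (p - 1 - x - k) + (x + k + 1) = p := by omega
      have hcast := congrArg (fun m => ((m : ℕ) : ZMod p)) hsum
      push_cast at hcast ⊢
      have hp0 : ((p : ℕ) : ZMod p) = 0 := ZMod.natCast_self p
      rw [hp0] at hcast
      linear_combination hcast
    calc ((p - 1 - x).choose (k + 1) : ZMod p) * ((k + 1 : ℕ) : ZMod p)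
        = (((p - 1 - x).choose (k + 1) * (k + 1) : ℕ) : ZMod p) := by push_cast; ring
      _ = (((p - 1 - x).choose k * (p - 1 - x - k) : ℕ) : ZMod p) := by rw [e1]
      _ = ((p - 1 - x).choose k : ZMod p) * ((p - 1 - x - k : ℕ) : ZMod p) := by push_cast; ring
      _ = ((-1 : ZMod p) ^ k * ((x + k).choose k : ZMod p)) * (-((x + k + 1 : ℕ) : ZMod p)) := by
          rw [ihx, hcast1]
      _ = (-1 : ZMod p) ^ (k + 1) * (((x + k + 1) * (x + k).choose k : ℕ) : ZMod p) := by
          push_cast; ring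
      _ = (-1 : ZMod p) ^ (k + 1) * (((x + (k + 1)).choose (k + 1) * (k + 1) : ℕ) : ZMod p) := by
          rw [e2]
      _ = (-1 : ZMod p) ^ (k + 1) * ((x + (k + 1)).choose (k + 1) : ZMod p)
            * ((k + 1 : ℕ) : ZMod p) := by push_cast; ring

/-- One-digit reflection lemma. -/
private lemma one_digit (p : ℕ) (hp : p.Prime) (x k : ℕ) (hx : x < p) (hk : k < p) :
    ((p - 1 - x).choose k : ZMod p) = (-1 : ZMod p) ^ k * ((x + k).choose k : ZMod p) := by
  by_cases h : x + k ≤ p - 1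
  · exact one_digit_nocarry p hp k x h
  · have h1 : (p - 1 - x).choose k = 0 := Nat.choose_eq_zero_of_lt (by omega)
    have h2 : p ∣ (x + k).choose k := by
      have hd := Nat.Prime.dvd_choose_add hp hx hk (by omega)
      have heq : (x + k).choose k = (x + k).choose x := by
        have hsy := Nat.choose_symm (Nat.le_add_right x k)
        rwa [Nat.add_sub_cancel_left] at hsy
      rwa [heq]
    have h2' : ((x + k).choose k : ZMod p) = 0 := by
      rwa [ZMod.natCast_eq_zero_iff]
    rw [h1, h2']
    simp

/-- Multi-digit reflection lemma via Lucas. -/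
private lemma multi_digit (p : ℕ) (hp : p.Prime) :
    ∀ c x k : ℕ, x < p ^ c → k < p ^ c →
      ((p ^ c - 1 - x).choose k : ZMod p) = (-1 : ZMod p) ^ k * ((x + k).choose k : ZMod p) := by
  haveI : Fact p.Prime := ⟨hp⟩
  have hp2 := hp.two_le
  intro c
  induction c with
  | zero =>
    intro x k hx hk
    rw [pow_zero] at hx hk
    have hx0 : x = 0 := by omega
    have hk0 : k = 0 := by omega
    subst hx0; subst hk0; simp
  | succ c ih =>
    intro x k hx hk
    have hppos : 0 < p := by omega
    set x₀ := x % p with hx0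
    set x₁ := x / p with hx1
    set k₀ := k % p with hk0
    set k₁ := k / p with hk1
    have hx0p : x₀ < p := Nat.mod_lt _ hppos
    have hk0p : k₀ < p := Nat.mod_lt _ hppos
    have hxd : x = x₀ + p * x₁ := by rw [hx0, hx1]; exact (Nat.mod_add_div x p).symm
    have hkd : k = k₀ + p * k₁ := by rw [hk0, hk1]; exact (Nat.mod_add_div k p).symm
    have hpc1 : 1 ≤ p ^ c := Nat.one_le_pow _ _ hppos
    have hpc1' : p ^ (c + 1) = p * p ^ c := by ring
    have hx' : x < p * p ^ c := by rw [← hpc1']; exact hx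
    have hk' : k < p * p ^ c := by rw [← hpc1']; exact hk
    have hx1p : x₁ < p ^ c := by
      rw [hx1]; exact Nat.div_lt_of_lt_mul hx'
    have hk1p : k₁ < p ^ c := by
      rw [hk1]; exact Nat.div_lt_of_lt_mul hk'
    have hApc : p * x₁ + p ≤ p * p ^ c := by
      have h := Nat.mul_le_mul_left p (show x₁ + 1 ≤ p ^ c from hx1p)
      rw [Nat.mul_add, Nat.mul_one] at h; exact h
    -- decomposition of p^(c+1) - 1 - x
    have hdec : p ^ (c + 1) - 1 - x = (p - 1 - x₀) + p * (p ^ c - 1 - x₁) := by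
      have h2 : p * (p ^ c - 1 - x₁) = p * p ^ c - p - p * x₁ := by
        rw [Nat.mul_sub, Nat.mul_sub, Nat.mul_one]
      rw [hpc1', h2]
      omega
    have hmod : (p ^ (c + 1) - 1 - x) % p = p - 1 - x₀ := by
      rw [hdec, Nat.add_mul_mod_self_left, Nat.mod_eq_of_lt (by omega)]
    have hdiv : (p ^ (c + 1) - 1 - x) / p = p ^ c - 1 - x₁ := by
      rw [hdec, Nat.add_mul_div_left _ _ hppos, Nat.div_eq_of_lt (by omega), Nat.zero_add]
    have lucas1 : ((p ^ (c + 1) - 1 - x).choose k : ZMod p) =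
        ((p - 1 - x₀).choose k₀ : ZMod p) * ((p ^ c - 1 - x₁).choose k₁ : ZMod p) := by
      have hl := (Choose.choose_modEq_choose_mod_mul_choose_div_nat
        (n := p ^ (c + 1) - 1 - x) (k := k) (p := p))
      rw [hmod, hdiv] at hl
      have hl' := (ZMod.natCast_eq_natCast_iff _ _ _).mpr hl
      rw [hl']; push_cast; ring
    by_cases hcarry : x₀ + k₀ ≤ p - 1
    · -- no carry at the low digit
      have hmulsum : p * (x₁ + k₁) = p * x₁ + p * k₁ := Nat.mul_add _ _ _
      have hsum : x + k = (x₀ + k₀) + p * (x₁ + k₁) := by omega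
      have hsmod : (x + k) % p = x₀ + k₀ := by
        rw [hsum, Nat.add_mul_mod_self_left, Nat.mod_eq_of_lt (by omega)]
      have hsdiv : (x + k) / p = x₁ + k₁ := by
        rw [hsum, Nat.add_mul_div_left _ _ hppos, Nat.div_eq_of_lt (by omega), Nat.zero_add]
      have lucas2 : ((x + k).choose k : ZMod p) =
          ((x₀ + k₀).choose k₀ : ZMod p) * ((x₁ + k₁).choose k₁ : ZMod p) := by
        have hl := (Choose.choose_modEq_choose_mod_mul_choose_div_nat
          (n := x + k) (k := k) (p := p))
        rw [hsmod, hsdiv] at hl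
        have hl' := (ZMod.natCast_eq_natCast_iff _ _ _).mpr hl
        rw [hl']; push_cast; ring
      rw [lucas1, one_digit p hp x₀ k₀ hx0p hk0p, ih x₁ k₁ hx1p hk1p, lucas2]
      have hsign : (-1 : ZMod p) ^ k = (-1 : ZMod p) ^ k₀ * (-1 : ZMod p) ^ k₁ := by
        rw [hkd, pow_add, sign_aux p hp]
      rw [hsign]; ring
    · -- carry: both sides vanish
      have h1 : (p - 1 - x₀).choose k₀ = 0 := Nat.choose_eq_zero_of_lt (by omega)
      have h2 : ((x + k).choose k : ZMod p) = 0 := by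
        have hmulsum : p * (x₁ + k₁ + 1) = p * x₁ + p * k₁ + p := by ring
        have hsum : x + k = (x₀ + k₀ - p) + p * (x₁ + k₁ + 1) := by omega
        have hsmod : (x + k) % p = x₀ + k₀ - p := by
          rw [hsum, Nat.add_mul_mod_self_left, Nat.mod_eq_of_lt (by omega)]
        have hchoose0 : ((x + k) % p).choose (k % p) = 0 := by
          rw [hsmod, ← hk0]
          exact Nat.choose_eq_zero_of_lt (by omega)
        have hl := (Choose.choose_modEq_choose_mod_mul_choose_div_nat
          (n := x + k) (k := k) (p := p))
        rw [hchoose0, Nat.zero_mul] at hl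
        have hl' := (ZMod.natCast_eq_natCast_iff _ _ _).mpr hl
        simpa using hl'
      rw [lucas1, h1, h2]
      simp

/-- **Lemma (symmetry of binomial coefficients modulo `p`).**
Let `p` be a prime and `q = p^c` a power of `p`.  For all `a, b < q` we have
`C(a, q−1−b) ≡ (−1)^{a+b} C(b, q−1−a) (mod p)`. -/
theorem choose_symmetry_mod_p
    (p : ℕ) (hp : p.Prime) (c : ℕ) (q : ℕ) (hq : q = p ^ c)
    (a b : ℕ) (ha : a < q) (hb : b < q) :
    (Nat.choose a (q - 1 - b) : ZMod p) =
      (-1 : ZMod p) ^ (a + b) * (Nat.choose b (q - 1 - a) : ZMod p) := by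
  have hq1 : 1 ≤ q := by omega
  have hA : q - 1 - (q - 1 - a) = a := by omega
  have hB : q - 1 - (q - 1 - b) = b := by omega
  have hxa : q - 1 - a < q := by omega
  have hxb : q - 1 - b < q := by omega
  have h1 := multi_digit p hp c (q - 1 - a) (q - 1 - b) (hq ▸ hxa) (hq ▸ hxb)
  have h2 := multi_digit p hp c (q - 1 - b) (q - 1 - a) (hq ▸ hxb) (hq ▸ hxa)
  rw [← hq] at h1 h2
  rw [hA] at h1
  rw [hB] at h2
  set s := (q - 1 - a) + (q - 1 - b) with hs
  have hsymm : s.choose (q - 1 - a) = s.choose (q - 1 - b) := by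
    have hd : s - (q - 1 - b) = q - 1 - a := by omega
    rw [← hd, Nat.choose_symm (by omega)]
  rw [show (q - 1 - b) + (q - 1 - a) = s from by omega] at h2
  rw [hsymm] at h2
  rw [h1, h2]
  have hsign : (-1 : ZMod p) ^ (q - 1 - b) =
      (-1 : ZMod p) ^ (a + b) * (-1 : ZMod p) ^ (q - 1 - a) := by
    rw [← pow_add]
    have hexp : (a + b) + (q - 1 - a) = (q - 1 - b) + 2 * b := by omega
    rw [hexp, pow_add, pow_mul, neg_one_sq, one_pow, mul_one]
  rw [hsign]; ring
end

section
/- Let p be an odd prime, q = p^c a power of p, t a positive odd integer with q − 2p < t < q − 1 and t ≠ q − p (so that u := (q−t)/2 is a positive integer less than p and t is invertible modulo p), and let s be an integer with 2 ≤ s < p. Set N = 2⌊s/2⌋ − 1. Then for elements γ_0, γ_1, …, γ_N of the field with p elements, the following two conditions are equivalent: (i) Σ_{g=0}^{2j+1} (−1)^g C(t+2j, g) γ_{2j+1−g} = −γ_{2j+1} for every j with 0 ≤ 2j ≤ s−2, and Σ_{g=0}^{2j} (−1)^g C(t+2j, g) γ_{2j−g} = (1 + 4j·t^{−1}) γ_{2j}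 for every j with 0 < 2j ≤ s−2; (ii) γ_i = (−1)^i C(u, i) γ_0 for every i with 0 ≤ i ≤ N. -/
open Finset

private lemma lucas_digit {p : ℕ} (hp : p.Prime) (n : ℕ) {k : ℕ} (hk : k < p) :
    ((n.choose k : ℕ) : ZMod p) = ((n % p).choose k : ZMod p) := by
  haveI : Fact p.Prime := ⟨hp⟩
  have h := Choose.choose_modEq_choose_mod_mul_choose_div (n := n) (k := k) (p := p)
  rw [Nat.mod_eq_of_lt hk, Nat.div_eq_of_lt hk, Nat.choose_zero_right] at h
  simp only [Nat.cast_one, mul_one] at h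
  have h2 := (ZMod.intCast_eq_intCast_iff _ _ _).mpr h
  exact_mod_cast h2

private lemma descFactorial_cast {p : ℕ} (hp : p.Prime) (a : ℕ) :
    ∀ n : ℕ, a + n ≤ p →
      (((p - a).descFactorial n : ℕ) : ZMod p) = (-1) ^ n * (a.ascFactorial n : ZMod p)
  | 0, _ => by simp
  | n + 1, h => by
    have hn : a + n ≤ p := by omega
    rw [Nat.descFactorial_succ, Nat.ascFactorial_succ]
    push_cast
    rw [descFactorial_cast hp a n hn]
    have hc : ((p - a - n : ℕ) : ZMod p) = -((a : ZMod p) + (n : ZMod p)) := by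
      have h1 : p - a - n = p - (a + n) := by omega
      rw [h1, Nat.cast_sub hn]
      push_cast
      simp [ZMod.natCast_self]
    rw [hc]
    ring

private lemma neg_choose {p : ℕ} (hp : p.Prime) {a n : ℕ} (ha : 1 ≤ a) (h : a + n ≤ p) :
    (((p - a).choose n : ℕ) : ZMod p) = (-1) ^ n * ((a + n - 1).choose n : ZMod p) := by
  haveI : Fact p.Prime := ⟨hp⟩
  have hfact : ((Nat.factorial n : ℕ) : ZMod p) ≠ 0 := by
    rw [Ne, ZMod.natCast_eq_zero_iff]
    intro hdvd
    have := (Nat.Prime.dvd_factorial hp).mp hdvd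
    omega
  have h3 := descFactorial_cast hp a n h
  rw [Nat.descFactorial_eq_factorial_mul_choose, Nat.ascFactorial_eq_factorial_mul_choose'] at h3
  push_cast at h3
  apply mul_left_cancel₀ hfact
  linear_combination h3

private lemma vandermonde_range (b u n : ℕ) :
    (b + u).choose n = ∑ g ∈ range (n + 1), b.choose g * u.choose (n - g) :=
  (Nat.add_choose_eq b u n).trans (Finset.Nat.sum_antidiagonal_eq_sum_range_succ_mk _ n)

private lemma choose_absorb (v k : ℕ) (hv : 1 ≤ v) (hk : 1 ≤ k) :
    v * Nat.choose (v - 1) k + k * Nat.choose v k = v * Nat.choose v k := by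
  obtain ⟨v', rfl⟩ := Nat.exists_eq_add_of_le hv
  obtain ⟨k', rfl⟩ := Nat.exists_eq_add_of_le hk
  simp only [Nat.add_sub_cancel_left]
  rw [Nat.add_comm 1 v', Nat.add_comm 1 k']
  have h1 := Nat.add_one_mul_choose_eq v' k'
  have h2 := Nat.choose_succ_succ v' k'
  rw [h2] at h1 ⊢
  zify at h1 ⊢
  linear_combination -h1

/-- **Lemma (the linear system).**
Let `p` be an odd prime, `q = p^c`, `t` a positive odd integer with
`q − 2p < t < q − 1` and `t ≠ q − p`, and `2 ≤ s < p`; set `N = 2⌊s/2⌋ − 1`.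
For `γ_0, …, γ_N` in the field with `p` elements, the system
`Σ_{g=0}^{2j+1} (−1)^g C(t+2j, g) γ_{2j+1−g} = −γ_{2j+1}` (for `0 ≤ 2j ≤ s−2`) and
`Σ_{g=0}^{2j} (−1)^g C(t+2j, g) γ_{2j−g} = (1 + 4j·t⁻¹) γ_{2j}` (for `0 < 2j ≤ s−2`)
is equivalent to `γ_i = (−1)^i C((q−t)/2, i) γ_0` for `0 ≤ i ≤ N`. -/
theorem linear_system_equivalence
    (p : ℕ) (hp : p.Prime) (hodd : Odd p)
    (c : ℕ) (q : ℕ) (hq : q = p ^ c)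
    (t : ℕ) (htpos : 0 < t) (htodd : Odd t)
    (htlow : (q : ℤ) - 2 * p < (t : ℤ)) (hthigh : t < q - 1)
    (htne : (t : ℤ) ≠ (q : ℤ) - p)
    (s : ℕ) (hs2 : 2 ≤ s) (hsp : s < p)
    (γ : ℕ → ZMod p) :
    ((∀ j : ℕ, 2 * j + 2 ≤ s →
        ∑ g ∈ Finset.range (2 * j + 2),
          (-1 : ZMod p) ^ g * ((t + 2 * j).choose g : ZMod p) * γ (2 * j + 1 - g) =
          -γ (2 * j + 1)) ∧
      (∀ j : ℕ, 0 < j → 2 * j + 2 ≤ s →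
        ∑ g ∈ Finset.range (2 * j + 1),
          (-1 : ZMod p) ^ g * ((t + 2 * j).choose g : ZMod p) * γ (2 * j - g) =
          (1 + ((4 * j : ℕ) : ZMod p) * (t : ZMod p)⁻¹) * γ (2 * j))) ↔
      (∀ i : ℕ, i ≤ 2 * (s / 2) - 1 →
        γ i = (-1 : ZMod p) ^ i * (((q - t) / 2).choose i : ZMod p) * γ 0) := by
  haveI : Fact p.Prime := ⟨hp⟩
  set u := (q - t) / 2 with hu_def
  have hp3 : 3 ≤ p := by
    rcases hodd with ⟨k, hk⟩
    have := hp.two_le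
    omega
  have hq3 : t + 2 ≤ q := by omega
  have hc : 1 ≤ c := by
    rcases Nat.eq_zero_or_pos c with h0 | h1
    · subst h0; simp at hq; omega
    · exact h1
  have hqodd : Odd q := by rw [hq]; exact hodd.pow
  have h2u : q = t + 2 * u := by
    have hdvd : 2 ∣ q - t := (Nat.Odd.sub_odd hqodd htodd).two_dvd
    have := Nat.mul_div_cancel' hdvd
    omega
  have hu1 : 1 ≤ u := by omega
  have hup : u < p := by omega
  have hpq : p ∣ q := by rw [hq]; exact dvd_pow_self p (by omega)
  have hq0 : (q : ZMod p) = 0 := by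
    rw [ZMod.natCast_eq_zero_iff]; exact hpq
  have ht_cast : (t : ZMod p) = -(2 * (u : ZMod p)) := by
    have h0 : ((t + 2 * u : ℕ) : ZMod p) = 0 := by rw [← h2u]; exact hq0
    push_cast at h0
    linear_combination h0
  have hu0 : (u : ZMod p) ≠ 0 := by
    rw [Ne, ZMod.natCast_eq_zero_iff]
    intro hd
    have := Nat.le_of_dvd (by omega) hd
    omega
  have h2ne : (2 : ZMod p) ≠ 0 := by
    have h2 : ((2 : ℕ) : ZMod p) ≠ 0 := by
      rw [Ne, ZMod.natCast_eq_zero_iff]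
      intro hd
      have := Nat.le_of_dvd (by norm_num) hd
      omega
    exact_mod_cast h2
  have ht0 : (t : ZMod p) ≠ 0 := by
    rw [ht_cast, neg_ne_zero]
    exact mul_ne_zero h2ne hu0
  have hM : ∀ j : ℕ, 2 * j < p →
      (t + 2 * j + u) % p = if u ≤ 2 * j then 2 * j - u else p - (u - 2 * j) := by
    intro j hj
    obtain ⟨m, hm⟩ := hpq
    have hm1 : 1 ≤ m := by nlinarith [hp.two_le]
    by_cases hc2 : u ≤ 2 * j
    · rw [if_pos hc2]
      have he : t + 2 * j + u = p * m + (2 * j - u) := by omega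
      rw [he, Nat.mul_add_mod]
      exact Nat.mod_eq_of_lt (by omega)
    · rw [if_neg hc2]
      push_neg at hc2
      obtain ⟨m', rfl⟩ : ∃ m', m = m' + 1 := ⟨m - 1, by omega⟩
      have hq' : q = p * m' + p := by rw [hm]; ring
      have he : t + 2 * j + u = p * m' + (p - (u - 2 * j)) := by omega
      rw [he, Nat.mul_add_mod]
      exact Nat.mod_eq_of_lt (by omega)
  have hsum : ∀ j n : ℕ, n < p →
      (∑ g ∈ Finset.range (n + 1),
        ((t + 2 * j).choose g : ZMod p) * (u.choose (n - g) : ZMod p)) =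
      (((t + 2 * j + u) % p).choose n : ZMod p) := by
    intro j n hn
    have step1 : ∀ g ∈ Finset.range (n + 1),
        ((t + 2 * j).choose g : ZMod p) * (u.choose (n - g) : ZMod p) =
        (((t + 2 * j) % p).choose g : ZMod p) * (u.choose (n - g) : ZMod p) := by
      intro g hg
      rw [Finset.mem_range] at hg
      rw [lucas_digit hp _ (show g < p by omega)]
    rw [Finset.sum_congr rfl step1]
    have step2 : (∑ g ∈ Finset.range (n + 1),
        (((t + 2 * j) % p).choose g : ZMod p) * (u.choose (n - g) : ZMod p)) =
        ((((t + 2 * j) % p + u).choose n : ℕ) : ZMod p) := by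
      rw [vandermonde_range]
      push_cast
      rfl
    rw [step2, lucas_digit hp _ hn, Nat.mod_add_mod]
  have hodd_eval : ∀ j : ℕ, 2 * j + 2 ≤ s →
      (((t + 2 * j + u) % p).choose (2 * j + 1) : ZMod p) =
        -(u.choose (2 * j + 1) : ZMod p) := by
    intro j hj
    rw [hM j (by omega)]
    by_cases hc2 : u ≤ 2 * j
    · rw [if_pos hc2, Nat.choose_eq_zero_of_lt (by omega), Nat.choose_eq_zero_of_lt (by omega)]
      simp
    · rw [if_neg hc2]
      push_neg at hc2
      rw [neg_choose hp (show 1 ≤ u - 2 * j by omega) (show (u - 2 * j) + (2 * j + 1) ≤ p by omega)]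
      rw [show (u - 2 * j) + (2 * j + 1) - 1 = u by omega]
      rw [Odd.neg_one_pow ⟨j, by ring⟩]
      ring
  have heven_eval : ∀ j : ℕ, 0 < j → 2 * j + 2 ≤ s →
      (((t + 2 * j + u) % p).choose (2 * j) : ZMod p) =
        (1 + ((4 * j : ℕ) : ZMod p) * (t : ZMod p)⁻¹) * (u.choose (2 * j) : ZMod p) := by
    intro j hj0 hj
    have key : (u : ZMod p) * (((t + 2 * j + u) % p).choose (2 * j) : ZMod p) =
        ((u : ZMod p) - ((2 * j : ℕ) : ZMod p)) * (u.choose (2 * j) : ZMod p) := by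
      rw [hM j (by omega)]
      by_cases hc2 : u ≤ 2 * j
      · rw [if_pos hc2, Nat.choose_eq_zero_of_lt (show 2 * j - u < 2 * j by omega)]
        rcases eq_or_lt_of_le hc2 with heq | hlt
        · have : ((u : ℕ) : ZMod p) = ((2 * j : ℕ) : ZMod p) := by rw [heq]
          rw [this]
          simp
        · rw [Nat.choose_eq_zero_of_lt hlt]
          simp
      · rw [if_neg hc2]
        push_neg at hc2
        rw [neg_choose hp (show 1 ≤ u - 2 * j by omega) (show (u - 2 * j) + (2 * j) ≤ p by omega)]
        rw [show (u - 2 * j) + (2 * j) - 1 = u - 1 by omega]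
        rw [Even.neg_one_pow ⟨j, by ring⟩, one_mul]
        have hnat := choose_absorb u (2 * j) hu1 (by omega)
        have hcast := congrArg (fun x : ℕ => (x : ZMod p)) hnat
        push_cast at hcast ⊢
        linear_combination hcast
    have hcoeff : (u : ZMod p) * (1 + ((4 * j : ℕ) : ZMod p) * (t : ZMod p)⁻¹) =
        (u : ZMod p) - ((2 * j : ℕ) : ZMod p) := by
      rw [ht_cast]
      have h2u : (2 : ZMod p) * (u : ZMod p) ≠ 0 := mul_ne_zero h2ne hu0
      have hneg : -((2 : ZMod p) * (u : ZMod p)) ≠ 0 := neg_ne_zero.mpr h2u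
      push_cast
      field_simp
      ring
    apply mul_left_cancel₀ hu0
    linear_combination key - (u.choose (2 * j) : ZMod p) * hcoeff
  have ver_odd : ∀ j : ℕ, 2 * j + 2 ≤ s →
      ∑ g ∈ Finset.range (2 * j + 2),
        (-1 : ZMod p) ^ g * ((t + 2 * j).choose g : ZMod p) *
          ((-1 : ZMod p) ^ (2 * j + 1 - g) * (u.choose (2 * j + 1 - g) : ZMod p) * γ 0) =
      -((-1 : ZMod p) ^ (2 * j + 1) * (u.choose (2 * j + 1) : ZMod p) * γ 0) := by
    intro j hj
    have step : ∀ g ∈ Finset.range (2 * j + 2),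
        (-1 : ZMod p) ^ g * ((t + 2 * j).choose g : ZMod p) *
          ((-1 : ZMod p) ^ (2 * j + 1 - g) * (u.choose (2 * j + 1 - g) : ZMod p) * γ 0) =
        ((-1 : ZMod p) ^ (2 * j + 1) * γ 0) *
          (((t + 2 * j).choose g : ZMod p) * (u.choose (2 * j + 1 - g) : ZMod p)) := by
      intro g hg
      rw [Finset.mem_range] at hg
      have hsign : (-1 : ZMod p) ^ g * (-1 : ZMod p) ^ (2 * j + 1 - g) =
          (-1 : ZMod p) ^ (2 * j + 1) := by
        rw [← pow_add]
        congr 1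
        omega
      calc (-1 : ZMod p) ^ g * ((t + 2 * j).choose g : ZMod p) *
            ((-1 : ZMod p) ^ (2 * j + 1 - g) * (u.choose (2 * j + 1 - g) : ZMod p) * γ 0)
          = ((-1 : ZMod p) ^ g * (-1 : ZMod p) ^ (2 * j + 1 - g)) * γ 0 *
            (((t + 2 * j).choose g : ZMod p) * (u.choose (2 * j + 1 - g) : ZMod p)) := by ring
        _ = ((-1 : ZMod p) ^ (2 * j + 1) * γ 0) *
            (((t + 2 * j).choose g : ZMod p) * (u.choose (2 * j + 1 - g) : ZMod p)) := by
            rw [hsign]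
    rw [Finset.sum_congr rfl step, ← Finset.mul_sum,
      show 2 * j + 2 = (2 * j + 1) + 1 by omega, hsum j (2 * j + 1) (by omega),
      hodd_eval j hj]
    ring
  have ver_even : ∀ j : ℕ, 0 < j → 2 * j + 2 ≤ s →
      ∑ g ∈ Finset.range (2 * j + 1),
        (-1 : ZMod p) ^ g * ((t + 2 * j).choose g : ZMod p) *
          ((-1 : ZMod p) ^ (2 * j - g) * (u.choose (2 * j - g) : ZMod p) * γ 0) =
      (1 + ((4 * j : ℕ) : ZMod p) * (t : ZMod p)⁻¹) *
        ((-1 : ZMod p) ^ (2 * j) * (u.choose (2 * j) : ZMod p) * γ 0) := by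
    intro j hj0 hj
    have step : ∀ g ∈ Finset.range (2 * j + 1),
        (-1 : ZMod p) ^ g * ((t + 2 * j).choose g : ZMod p) *
          ((-1 : ZMod p) ^ (2 * j - g) * (u.choose (2 * j - g) : ZMod p) * γ 0) =
        ((-1 : ZMod p) ^ (2 * j) * γ 0) *
          (((t + 2 * j).choose g : ZMod p) * (u.choose (2 * j - g) : ZMod p)) := by
      intro g hg
      rw [Finset.mem_range] at hg
      have hsign : (-1 : ZMod p) ^ g * (-1 : ZMod p) ^ (2 * j - g) =
          (-1 : ZMod p) ^ (2 * j) := by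
        rw [← pow_add]
        congr 1
        omega
      calc (-1 : ZMod p) ^ g * ((t + 2 * j).choose g : ZMod p) *
            ((-1 : ZMod p) ^ (2 * j - g) * (u.choose (2 * j - g) : ZMod p) * γ 0)
          = ((-1 : ZMod p) ^ g * (-1 : ZMod p) ^ (2 * j - g)) * γ 0 *
            (((t + 2 * j).choose g : ZMod p) * (u.choose (2 * j - g) : ZMod p)) := by ring
        _ = ((-1 : ZMod p) ^ (2 * j) * γ 0) *
            (((t + 2 * j).choose g : ZMod p) * (u.choose (2 * j - g) : ZMod p)) := by
            rw [hsign]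
    rw [Finset.sum_congr rfl step, ← Finset.mul_sum, hsum j (2 * j) (by omega),
      heven_eval j hj0 hj]
    ring
  constructor
  · rintro ⟨h1, h2⟩
    intro i
    induction i using Nat.strong_induction_on with
    | _ i IH =>
      intro hiN
      rcases Nat.even_or_odd i with ⟨j, hij⟩ | ⟨j, hij⟩
      · -- even case : i = 2 * j
        have hi2 : i = 2 * j := by omega
        subst hi2
        rcases Nat.eq_zero_or_pos j with rfl | hj0
        · simp
        · have hjs : 2 * j + 2 ≤ s := by omega
          have hγeq := h2 j hj0 hjs
          have hδeq := ver_even j hj0 hjs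
          rw [Finset.sum_range_succ'] at hγeq hδeq
          have hSS : ∑ g ∈ Finset.range (2 * j),
              (-1 : ZMod p) ^ (g + 1) * ((t + 2 * j).choose (g + 1) : ZMod p) *
                γ (2 * j - (g + 1)) =
              ∑ g ∈ Finset.range (2 * j),
              (-1 : ZMod p) ^ (g + 1) * ((t + 2 * j).choose (g + 1) : ZMod p) *
                ((-1 : ZMod p) ^ (2 * j - (g + 1)) *
                  (u.choose (2 * j - (g + 1)) : ZMod p) * γ 0) := by
            refine Finset.sum_congr rfl fun g hg => ?_
            rw [Finset.mem_range] at hg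
            rw [IH (2 * j - (g + 1)) (by omega) (by omega)]
          rw [hSS] at hγeq
          simp only [pow_zero, Nat.choose_zero_right, Nat.cast_one, one_mul, mul_one,
            Nat.sub_zero] at hγeq hδeq
          have hc_ne : ((4 * j : ℕ) : ZMod p) * (t : ZMod p)⁻¹ ≠ 0 := by
            apply mul_ne_zero
            · have h4 : ((4 * j : ℕ) : ZMod p) = 2 * 2 * ((j : ℕ) : ZMod p) := by
                push_cast; ring
              rw [h4]
              refine mul_ne_zero (mul_ne_zero h2ne h2ne) ?_
              rw [Ne, ZMod.natCast_eq_zero_iff]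
              intro hd
              have := Nat.le_of_dvd (by omega) hd
              omega
            · exact inv_ne_zero ht0
          have hkey : (((4 * j : ℕ) : ZMod p) * (t : ZMod p)⁻¹) *
              (γ (2 * j) - (-1 : ZMod p) ^ (2 * j) * (u.choose (2 * j) : ZMod p) * γ 0) = 0 := by
            linear_combination hδeq - hγeq
          rcases mul_eq_zero.mp hkey with h | h
          · exact absurd h hc_ne
          · linear_combination h
      · -- odd case : i = 2 * j + 1
        subst hij
        have hjs : 2 * j + 2 ≤ s := by omega
        have hγeq := h1 j hjs
        have hδeq := ver_odd j hjs
        rw [show 2 * j + 2 = (2 * j + 1) + 1 by omega, Finset.sum_range_succ'] at hγeq hδeq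
        have hSS : ∑ g ∈ Finset.range (2 * j + 1),
            (-1 : ZMod p) ^ (g + 1) * ((t + 2 * j).choose (g + 1) : ZMod p) *
              γ (2 * j + 1 - (g + 1)) =
            ∑ g ∈ Finset.range (2 * j + 1),
            (-1 : ZMod p) ^ (g + 1) * ((t + 2 * j).choose (g + 1) : ZMod p) *
              ((-1 : ZMod p) ^ (2 * j + 1 - (g + 1)) *
                (u.choose (2 * j + 1 - (g + 1)) : ZMod p) * γ 0) := by
          refine Finset.sum_congr rfl fun g hg => ?_
          rw [Finset.mem_range] at hg
          rw [IH (2 * j + 1 - (g + 1)) (by omega) (by omega)]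
        rw [hSS] at hγeq
        simp only [pow_zero, Nat.choose_zero_right, Nat.cast_one, one_mul, mul_one,
          Nat.sub_zero] at hγeq hδeq
        have hkey : (2 : ZMod p) * (γ (2 * j + 1) -
            (-1 : ZMod p) ^ (2 * j + 1) * (u.choose (2 * j + 1) : ZMod p) * γ 0) = 0 := by
          linear_combination hγeq - hδeq
        rcases mul_eq_zero.mp hkey with h | h
        · exact absurd h h2ne
        · linear_combination h
  · intro h
    constructor
    · intro j hj
      have hb : ∀ k, k ≤ 2 * j + 1 →
          γ k = (-1 : ZMod p) ^ k * (u.choose k : ZMod p) * γ 0 := by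
        intro k hk
        apply h
        omega
      calc ∑ g ∈ Finset.range (2 * j + 2),
            (-1 : ZMod p) ^ g * ((t + 2 * j).choose g : ZMod p) * γ (2 * j + 1 - g)
          = ∑ g ∈ Finset.range (2 * j + 2),
            (-1 : ZMod p) ^ g * ((t + 2 * j).choose g : ZMod p) *
              ((-1 : ZMod p) ^ (2 * j + 1 - g) * (u.choose (2 * j + 1 - g) : ZMod p) * γ 0) := by
            refine Finset.sum_congr rfl fun g hg => ?_
            rw [hb (2 * j + 1 - g) (by omega)]
        _ = -((-1 : ZMod p) ^ (2 * j + 1) * (u.choose (2 * j + 1) : ZMod p) * γ 0) :=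
            ver_odd j hj
        _ = -γ (2 * j + 1) := by rw [hb (2 * j + 1) le_rfl]
    · intro j hj0 hj
      have hb : ∀ k, k ≤ 2 * j →
          γ k = (-1 : ZMod p) ^ k * (u.choose k : ZMod p) * γ 0 := by
        intro k hk
        apply h
        omega
      calc ∑ g ∈ Finset.range (2 * j + 1),
            (-1 : ZMod p) ^ g * ((t + 2 * j).choose g : ZMod p) * γ (2 * j - g)
          = ∑ g ∈ Finset.range (2 * j + 1),
            (-1 : ZMod p) ^ g * ((t + 2 * j).choose g : ZMod p) *
              ((-1 : ZMod p) ^ (2 * j - g) * (u.choose (2 * j - g) : ZMod p) * γ 0) := by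
            refine Finset.sum_congr rfl fun g hg => ?_
            rw [hb (2 * j - g) (by omega)]
        _ = (1 + ((4 * j : ℕ) : ZMod p) * (t : ZMod p)⁻¹) *
            ((-1 : ZMod p) ^ (2 * j) * (u.choose (2 * j) : ZMod p) * γ 0) :=
            ver_even j hj0 hj
        _ = (1 + ((4 * j : ℕ) : ZMod p) * (t : ZMod p)⁻¹) * γ (2 * j) := by
            rw [hb (2 * j) le_rfl]
end

section
/- Let p be an odd prime, F a field of characteristic p, and n an integer with 1 < n < p. Let L be an algebra of type n over F with nonzero sequence (β_i), first constituent length ℓ > 4p with ℓ = q + k0 + n − 1 for a power q = p^c of p and an integer k0 with 2 ≤ k0 ≤ n − 2, and second constituent length ℓ₂ equal to q or q − 1. Let s be an integer with k0 ≤ s ≤ n − 1 such that β_{q+s} ≠ 0 and β_i = 0 for all i with q + s < i < q + k0 + ℓ₂. Then the integer t := k0 + ℓ₂ − s − n + 1 is odd, satisfies q − 2p < t < q − 1, and t ≠ q − p; in particular (q − t)/2 is a positive integer. -/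
/-- Vandermonde + `p ∣ (p^c).choose a` for `0 < a < p^c`: casting a binomial
coefficient `(p^c + s).choose r` to a field of characteristic `p` kills all
middle terms, leaving `s.choose r`, provided `r < p^c`. -/
lemma choose_pow_add_cast {F : Type*} [Field F] (p : ℕ) [CharP F p] (hp : p.Prime)
    (c s r : ℕ) (hr : r < p ^ c) :
    (((p ^ c + s).choose r : ℕ) : F) = ((s.choose r : ℕ) : F) := by
  rw [Nat.add_choose_eq]
  push_cast
  rw [Finset.sum_eq_single ((0 : ℕ), r)]
  · simp
  · rintro ⟨a, b⟩ hab hne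
    have hab' : a + b = r := Finset.HasAntidiagonal.mem_antidiagonal.mp hab
    have ha : a ≠ 0 := by
      rintro rfl
      exact hne (by simp [hab'.symm])
    have hd : p ∣ (p ^ c).choose a :=
      Nat.Prime.dvd_choose_pow hp ha (by omega)
    have hz : (((p ^ c).choose a : ℕ) : F) = 0 := (CharP.cast_eq_zero_iff F p _).mpr hd
    rw [hz, zero_mul]
  · intro h
    exact absurd (Finset.HasAntidiagonal.mem_antidiagonal.mpr (by simp)) h

/-- **Lemma (properties of `t`).**
In an algebra of type `n` over a field of odd characteristic `p` (`1 < n < p`) with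
nonzero sequence, first constituent length `ℓ > 4p` with `ℓ = q + k0 + n − 1`
(`q = p^c`, `2 ≤ k0 ≤ n − 2`), second constituent length `ℓ₂ ∈ {q, q−1}`, and
`s` with `k0 ≤ s ≤ n − 1` such that `β (q+s) ≠ 0` and `β i = 0` for
`q + s < i < q + k0 + ℓ₂`:  the integer `t := k0 + ℓ₂ − s − n + 1` is odd, satisfies
`q − 2p < t < q − 1` and `t ≠ q − p`; in particular `(q − t)/2` is a positive integer. -/
theorem t_is_odd_and_bounded
    (p : ℕ) (hp : p.Prime) (hodd : Odd p)
    (n : ℕ) (hn1 : 1 < n) (hnp : n < p)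
    {F : Type*} [Field F] [CharP F p]
    {L : Type*} [LieRing L] [LieAlgebra F L]
    (Lc : ℕ → Submodule F L)
    (hinternal : DirectSum.IsInternal Lc)
    (h0 : Lc 0 = ⊥)
    (hgrade : ∀ i j : ℕ, ∀ x ∈ Lc i, ∀ y ∈ Lc j, ⁅x, y⁆ ∈ Lc (i + j))
    (hdim1 : Module.finrank F (Lc 1) = 1)
    (hmid : ∀ i : ℕ, 1 < i → i < n → Lc i = ⊥)
    (hdimn : ∀ i : ℕ, n ≤ i → Module.finrank F (Lc i) = 1)
    (hgen : ∀ i : ℕ, n ≤ i →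
      Lc (i + 1) = Submodule.span F {w : L | ∃ x ∈ Lc i, ∃ u ∈ Lc 1, w = ⁅x, u⁆})
    (z : L) (hz : z ∈ Lc 1) (hz0 : z ≠ 0)
    (e : ℕ → L) (hen : e n ∈ Lc n) (hen0 : e n ≠ 0)
    (hrec : ∀ i : ℕ, n ≤ i → e (i + 1) = ⁅e i, z⁆)
    (β : ℕ → F) (hβ : ∀ i : ℕ, n < i → ⁅e i, e n⁆ = β i • e (i + n))
    (hne : ∃ i : ℕ, n < i ∧ β i ≠ 0)
    (ℓ : ℕ) (hℓ2n : 2 * n ≤ ℓ)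
    (hfz : ∀ i : ℕ, n < i → i + n ≤ ℓ → β i = 0)
    (hfl : β (ℓ - n + 1) ≠ 0)
    (hbig : 4 * p < ℓ)
    (c : ℕ) (q : ℕ) (hq : q = p ^ c)
    (k0 : ℕ) (hk0 : 2 ≤ k0) (hk0' : k0 + 2 ≤ n)
    (hℓval : ℓ + 1 = q + k0 + n)
    (ℓ₂ : ℕ) (hℓ₂n : n ≤ ℓ₂)
    (hsz : ∀ j : ℕ, 0 < j → j + n ≤ ℓ₂ → β (ℓ + j) = 0)
    (hsl : β (ℓ + ℓ₂ - n + 1) ≠ 0)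
    (hℓ₂val : ℓ₂ = q ∨ ℓ₂ = q - 1)
    (s : ℕ) (hs1 : k0 ≤ s) (hs2 : s ≤ n - 1)
    (hstrail : β (q + s) ≠ 0)
    (hszero : ∀ i : ℕ, q + s < i → i < q + k0 + ℓ₂ → β i = 0)
    (t : ℤ) (ht : t = (k0 : ℤ) + ℓ₂ - s - n + 1) :
    Odd t ∧ (q : ℤ) - 2 * p < t ∧ t < (q : ℤ) - 1 ∧ t ≠ (q : ℤ) - p ∧
      ∃ u : ℤ, 0 < u ∧ (q : ℤ) - t = 2 * u := by
  -- Basic arithmetic facts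
  have hp2 : 2 ≤ p := hp.two_le
  have hpodd : p % 2 = 1 := Nat.odd_iff.mp hodd
  have hqodd : q % 2 = 1 := by
    rw [hq]; exact Nat.odd_iff.mp hodd.pow
  have hq2p : 2 * p < q := by omega
  have hℓ₂q : ℓ₂ ≤ q := by omega
  have hsn : s ≤ n - 1 := hs2
  have h2F : (2 : F) ≠ 0 := by
    intro h2
    have : ((2 : ℕ) : F) = 0 := by push_cast; exact h2
    have hd := (CharP.cast_eq_zero_iff F p 2).mp this
    have := Nat.le_of_dvd (by norm_num) hd
    omega
  -- structure: e i is a nonzero element of Lc i for all i ≥ n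
  have span_eq : ∀ (i : ℕ) (v : L), v ∈ Lc i → v ≠ 0 →
      Module.finrank F (Lc i) = 1 → Lc i = Submodule.span F {v} := by
    intro i v hv hv0 hdim
    haveI : FiniteDimensional F (Lc i) := .of_finrank_eq_succ hdim
    refine (Submodule.eq_of_le_of_finrank_le ?_ ?_).symm
    · exact (Submodule.span_le).2 (Set.singleton_subset_iff.2 hv)
    · rw [hdim, finrank_span_singleton hv0]
  have hstruct : ∀ i : ℕ, n ≤ i → e i ∈ Lc i ∧ e i ≠ 0 := by
    intro i hi
    induction i, hi using Nat.le_induction with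
    | base => exact ⟨hen, hen0⟩
    | succ i hi IH =>
      have hmem : e (i + 1) ∈ Lc (i + 1) := by
        rw [hrec i hi]
        exact hgrade i 1 (e i) IH.1 z hz
      refine ⟨hmem, ?_⟩
      intro h0e
      have hbzero : ⁅e i, z⁆ = (0 : L) := by rw [← hrec i hi, h0e]
      have hLci : Lc i = Submodule.span F {e i} := span_eq i (e i) IH.1 IH.2 (hdimn i hi)
      have hLc1 : Lc 1 = Submodule.span F {z} := span_eq 1 z hz hz0 hdim1
      have hbot : Lc (i + 1) = ⊥ := by
        rw [hgen i hi]
        rw [Submodule.span_eq_bot]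
        rintro w ⟨x, hx, u, hu, rfl⟩
        rw [hLci, Submodule.mem_span_singleton] at hx
        rw [hLc1, Submodule.mem_span_singleton] at hu
        obtain ⟨a, rfl⟩ := hx
        obtain ⟨b, rfl⟩ := hu
        rw [smul_lie, lie_smul, hbzero, smul_zero, smul_zero]
      have := hdimn (i + 1) (by omega)
      rw [hbot] at this
      simp at this
  -- extended sequence and structure constants
  set B : ℕ → F := fun i => if i = n then 0 else β i with hB
  have hBn : B n = 0 := by simp [hB]
  have hBne : ∀ i : ℕ, i ≠ n → B i = β i := by intro i h; simp [hB, h]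
  set cf : ℕ → ℕ → F :=
    fun i j => ∑ r ∈ Finset.range (j - n + 1),
      ((-1 : F) ^ r * (((j - n).choose r : ℕ) : F)) * B (i + r) with hcf
  have hcn : ∀ i : ℕ, cf i n = B i := by
    intro i
    simp [hcf, Nat.sub_self]
  -- key finite-difference identity for alternating binomial sums
  have key : ∀ (f : ℕ → F) (J : ℕ),
      (∑ r ∈ Finset.range (J + 2), (-1 : F) ^ r * (((J + 1).choose r : ℕ) : F) * f r)
        = (∑ r ∈ Finset.range (J + 1), (-1 : F) ^ r * ((J.choose r : ℕ) : F) * f r)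
          - ∑ r ∈ Finset.range (J + 1), (-1 : F) ^ r * ((J.choose r : ℕ) : F) * f (r + 1) := by
    intro f J
    rw [Finset.sum_range_succ'
      (fun r => (-1 : F) ^ r * (((J + 1).choose r : ℕ) : F) * f r) (J + 1)]
    have h1 : ∀ r : ℕ, (-1 : F) ^ (r + 1) * (((J + 1).choose (r + 1) : ℕ) : F) * f (r + 1)
        = -((-1 : F) ^ r * ((J.choose r : ℕ) : F) * f (r + 1))
          + (-1 : F) ^ (r + 1) * ((J.choose (r + 1) : ℕ) : F) * f (r + 1) := by
      intro r
      rw [Nat.choose_succ_succ]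
      push_cast
      ring
    rw [Finset.sum_congr rfl fun r _ => h1 r, Finset.sum_add_distrib]
    have h2 : (∑ r ∈ Finset.range (J + 1),
          (-1 : F) ^ (r + 1) * ((J.choose (r + 1) : ℕ) : F) * f (r + 1))
        = (∑ r ∈ Finset.range (J + 2), (-1 : F) ^ r * ((J.choose r : ℕ) : F) * f r)
            - (-1 : F) ^ 0 * ((J.choose 0 : ℕ) : F) * f 0 := by
      rw [Finset.sum_range_succ' (fun r => (-1 : F) ^ r * ((J.choose r : ℕ) : F) * f r) (J + 1)]
      ring
    rw [h2, Finset.sum_range_succ (fun r => (-1 : F) ^ r * ((J.choose r : ℕ) : F) * f r) (J + 1),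
        Nat.choose_eq_zero_of_lt (Nat.lt_succ_self J)]
    simp only [pow_zero, Nat.choose_zero_right, Nat.cast_one, Nat.cast_zero, one_mul,
      mul_zero, zero_mul, add_zero]
    rw [Finset.sum_neg_distrib]
    ring
  -- the finite-difference recurrence for cf
  have hrecc : ∀ i j : ℕ, n ≤ j → cf i (j + 1) = cf i j - cf (i + 1) j := by
    intro i j hj
    have hJ : j + 1 - n = (j - n) + 1 := by omega
    simp only [hcf, hJ]
    have hkey := key (fun r => B (i + r)) (j - n)
    rw [hkey]
    congr 1
    apply Finset.sum_congr rfl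
    intro r _
    have : i + (r + 1) = i + 1 + r := by omega
    rw [this]
  -- master bracket formula
  have hbrk : ∀ j : ℕ, n ≤ j → ∀ i : ℕ, n ≤ i → ⁅e i, e j⁆ = cf i j • e (i + j) := by
    intro j hj
    induction j, hj using Nat.le_induction with
    | base =>
      intro i hi
      rw [hcn]
      rcases eq_or_lt_of_le hi with h | h
      · subst h
        rw [hBn, zero_smul, lie_self]
      · rw [hBne i (by omega)]
        exact hβ i h
    | succ j hj IH =>
      intro i hi
      have h1 : e (j + 1) = ⁅e j, z⁆ := hrec j hj
      have h2 : e (i + 1) = ⁅e i, z⁆ := hrec i hi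
      have h3 : e (i + j + 1) = ⁅e (i + j), z⁆ := hrec (i + j) (by omega)
      rw [h1, leibniz_lie, ← h2, IH i hi, smul_lie, ← h3]
      have h4 : ⁅e j, e (i + 1)⁆ = -⁅e (i + 1), e j⁆ := (lie_skew _ _).symm
      rw [h4, IH (i + 1) (by omega)]
      have h5 : i + 1 + j = i + j + 1 := by omega
      have h6 : i + (j + 1) = i + j + 1 := by omega
      rw [h5, h6, hrecc i j hj, sub_smul]
      abel
  -- antisymmetry of the structure constants
  have hanti : ∀ i j : ℕ, n ≤ i → n ≤ j → cf i j = - cf j i := by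
    intro i j hi hj
    have h1 := hbrk j hj i hi
    have h2 := hbrk i hi j hj
    have h3 : ⁅e i, e j⁆ = -⁅e j, e i⁆ := (lie_skew _ _).symm
    rw [h1, h2] at h3
    have h4 : j + i = i + j := by omega
    rw [h4] at h3
    have h5 : (cf i j + cf j i) • e (i + j) = 0 := by
      rw [add_smul, h3]
      abel
    have h6 := (hstruct (i + j) (by omega)).2
    rcases smul_eq_zero.mp h5 with h | h
    · exact eq_neg_of_add_eq_zero_left h
    · exact absurd h h6
  -- quadratic (Jacobi) relation
  have hquad : ∀ i j : ℕ, n ≤ i → n ≤ j →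
      B j * cf i (j + n) = cf i j * B (i + j) + B i * cf j (i + n) := by
    intro i j hi hj
    have hbn : ∀ k : ℕ, n ≤ k → ⁅e k, e n⁆ = B k • e (k + n) := by
      intro k hk
      have := hbrk n le_rfl k hk
      rwa [hcn] at this
    have e1 : ⁅e i, ⁅e j, e n⁆⁆ = (B j * cf i (j + n)) • e (i + j + n) := by
      rw [hbn j hj, lie_smul, hbrk (j + n) (by omega) i hi, smul_smul]
      congr 2
      omega
    have e2 : ⁅⁅e i, e j⁆, e n⁆ = (cf i j * B (i + j)) • e (i + j + n) := by
      rw [hbrk j hj i hi, smul_lie, hbn (i + j) (by omega), smul_smul]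
    have e3 : ⁅e j, ⁅e i, e n⁆⁆ = (B i * cf j (i + n)) • e (i + j + n) := by
      rw [hbn i hi, lie_smul, hbrk (i + n) (by omega) j hj, smul_smul]
      congr 2
      omega
    have hl := leibniz_lie (e i) (e j) (e n)
    rw [e1, e2, e3] at hl
    have h5 : (B j * cf i (j + n) - (cf i j * B (i + j) + B i * cf j (i + n))) • e (i + j + n)
        = 0 := by
      rw [sub_smul, add_smul, hl]
      abel
    have h6 := (hstruct (i + j + n) (by omega)).2
    rcases smul_eq_zero.mp h5 with h | h
    · exact sub_eq_zero.mp h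
    · exact absurd h h6
  -- single-support window evaluation
  have hev : ∀ i j A : ℕ, n ≤ j → A ≤ j - n →
      (∀ r : ℕ, r ≤ j - n → r ≠ A → B (i + r) = 0) →
      cf i j = ((-1 : F) ^ A * (((j - n).choose A : ℕ) : F)) * B (i + A) := by
    intro i j A hj hA hvan
    simp only [hcf]
    apply Finset.sum_eq_single_of_mem A (Finset.mem_range.mpr (by omega))
    intro b hb hbA
    rw [hvan b (by exact Nat.lt_succ_iff.mp (Finset.mem_range.mp hb)) hbA, mul_zero]
  -- the two key nonvanishing constants
  have hγ : β (q + k0) ≠ 0 := by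
    have hidx : ℓ - n + 1 = q + k0 := by omega
    rwa [hidx] at hfl
  have hδ : β (q + k0 + ℓ₂) ≠ 0 := by
    have hidx : ℓ + ℓ₂ - n + 1 = q + k0 + ℓ₂ := by omega
    rwa [hidx] at hsl
  ----------------------------------------------------------------
  -- STEP 1 : parity of q + k0 - n (via antisymmetry at (n, q+k0))
  ----------------------------------------------------------------
  have hwodd : (q + k0 - n) % 2 = 1 := by
    have hqk : n ≤ q + k0 := by omega
    have ev1 : cf n (q + k0) = ((-1 : F) ^ (q + k0 - n)) * β (q + k0) := by
      have := hev n (q + k0) (q + k0 - n) hqk le_rfl ?_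
      · rw [this]
        have hAA : n + (q + k0 - n) = q + k0 := by omega
        rw [hAA, Nat.choose_self, hBne (q + k0) (by omega)]
        push_cast
        ring
      · intro r hr hrA
        rcases Nat.eq_zero_or_pos r with h | h
        · subst h
          simpa using hBn
        · rw [hBne (n + r) (by omega)]
          exact hfz (n + r) (by omega) (by omega)
    have ev1' : cf (q + k0) n = β (q + k0) := by
      rw [hcn, hBne (q + k0) (by omega)]
    have h := hanti n (q + k0) le_rfl hqk
    rw [ev1, ev1'] at h
    by_contra hpar
    have heven : Even (q + k0 - n) := by
      rcases Nat.even_or_odd (q + k0 - n) with h' | h'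
      · exact h'
      · exact absurd (Nat.odd_iff.mp h') hpar
    rw [heven.neg_one_pow, one_mul] at h
    have h2 : (2 : F) * β (q + k0) = 0 := by linear_combination h
    rcases mul_eq_zero.mp h2 with h' | h'
    · exact h2F h'
    · exact hγ h'
  ----------------------------------------------------------------
  -- STEP 2 : parity of s (via the Jacobi relation at (q+s, k0+ℓ₂-s))
  ----------------------------------------------------------------
  set j₀ : ℕ := k0 + ℓ₂ - s with hj₀
  have hj₀n : n < j₀ := by omega
  have hj₀val : j₀ + s = k0 + ℓ₂ := by omega
  -- β vanishes at j₀
  have hBj₀ : B j₀ = 0 := by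
    rw [hBne j₀ (by omega)]
    exact hfz j₀ (by omega) (by omega)
  -- evaluation of cf (q+s) j₀  (single support at r = 0)
  have ev2 : cf (q + s) j₀ = β (q + s) := by
    have := hev (q + s) j₀ 0 (by omega) (by omega) ?_
    · rw [this]
      simp only [pow_zero, Nat.choose_zero_right, Nat.cast_one, one_mul, Nat.add_zero]
      exact hBne (q + s) (by omega)
    · intro r hr hr0
      rw [hBne (q + s + r) (by omega)]
      exact hszero (q + s + r) (by omega) (by omega)
  -- evaluation of cf j₀ (q+s+n)  (two-point support {s, q+s})
  have hsuppsub : ({s, q + s} : Finset ℕ) ⊆ Finset.range (q + s + 1) := by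
    intro x hx
    simp only [Finset.mem_insert, Finset.mem_singleton] at hx
    rcases hx with rfl | rfl <;> (rw [Finset.mem_range]; omega)
  have ev3 : cf j₀ (q + s + n)
      = ((-1 : F) ^ s * (((q + s).choose s : ℕ) : F)) * B (j₀ + s)
        + ((-1 : F) ^ (q + s)) * β (q + k0 + ℓ₂) := by
    simp only [hcf, show q + s + n - n = q + s from by omega]
    rw [← Finset.sum_subset hsuppsub ?van]
    case van =>
      intro r hr hrnot
      simp only [Finset.mem_insert, Finset.mem_singleton, not_or] at hrnot
      obtain ⟨hrs, hrqs⟩ := hrnot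
      have hrange : r ≤ q + s := by
        have := Finset.mem_range.mp hr
        omega
      rcases lt_trichotomy r s with hlt | heq | hgt
      · -- small r : index below the first interesting point, β = 0 by hfz
        rw [hBne (j₀ + r) (by omega), hfz (j₀ + r) (by omega) (by omega), mul_zero]
      · exact absurd heq hrs
      · rcases le_or_gt r (2 * s + 1) with hle | hbig'
        · -- coefficient vanishes mod p
          have hcast : (((q + s).choose r : ℕ) : F) = ((s.choose r : ℕ) : F) := by
            rw [hq]
            exact choose_pow_add_cast p hp c s r (by omega)
          rw [hcast, Nat.choose_eq_zero_of_lt hgt]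
          push_cast
          ring
        · -- large r : index in the second zero window
          rw [hBne (j₀ + r) (by omega), hszero (j₀ + r) (by omega) (by omega), mul_zero]
    · rw [Finset.sum_pair (by omega : s ≠ q + s)]
      congr 1
      rw [Nat.choose_self]
      have hidx : j₀ + (q + s) = q + k0 + ℓ₂ := by omega
      rw [hidx, hBne (q + k0 + ℓ₂) (by omega)]
      push_cast
      ring
  -- assemble the Jacobi relation
  have hqd := hquad (q + s) j₀ (by omega) (by omega)
  rw [hBj₀, zero_mul, hBne (q + s) (by omega)] at hqd
  have hidx2 : q + s + j₀ = q + k0 + ℓ₂ := by omega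
  rw [hidx2, ev2, ev3, hBne (q + k0 + ℓ₂) (by omega)] at hqd
  -- hqd : 0 = β(q+s) * β(q+k0+ℓ₂) + β(q+s) * ( (-1)^s * C(q+s,s) * B(k0+ℓ₂) + (-1)^{q+s} * β(q+k0+ℓ₂) )
  have hCss : (((q + s).choose s : ℕ) : F) = 1 := by
    rw [hq]
    rw [choose_pow_add_cast p hp c s s (by omega)]
    rw [Nat.choose_self]
    push_cast
    ring
  rw [hCss, mul_one] at hqd
  have hnegq : (-1 : F) ^ (q + s) = -(-1 : F) ^ s := by
    rw [pow_add]
    have : (-1 : F) ^ q = -1 := Odd.neg_one_pow (by rw [hq]; exact hodd.pow)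
    rw [this]
    ring
  rw [hnegq] at hqd
  -- case split on ℓ₂
  have hspar : (ℓ₂ = q ∧ s % 2 = 1) ∨ (ℓ₂ = q - 1 ∧ s % 2 = 0) := by
    rcases hℓ₂val with hcase | hcase
    · -- ℓ₂ = q : B (j₀ + s) = B (q + k0) = β (q + k0)
      left
      refine ⟨hcase, ?_⟩
      have hidx3 : j₀ + s = q + k0 := by omega
      rw [hidx3, hBne (q + k0) (by omega)] at hqd
      by_contra hsodd
      have hseven : Even s := by
        rcases Nat.even_or_odd s with h' | h'
        · exact h'
        · exact absurd (Nat.odd_iff.mp h') hsodd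
      rw [hseven.neg_one_pow] at hqd
      -- 0 = γs*δ + γs*(γ - δ) = γs * γ
      have : β (q + s) * β (q + k0) = 0 := by linear_combination -hqd
      rcases mul_eq_zero.mp this with h' | h'
      · exact hstrail h'
      · exact hγ h'
    · -- ℓ₂ = q - 1 : B (j₀ + s) = B (q + k0 - 1) = 0
      right
      refine ⟨hcase, ?_⟩
      have hidx3 : j₀ + s = q + k0 - 1 := by omega
      have hB0 : B (j₀ + s) = 0 := by
        rw [hidx3, hBne (q + k0 - 1) (by omega)]
        exact hfz (q + k0 - 1) (by omega) (by omega)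
      rw [hB0, mul_zero, zero_add] at hqd
      by_contra hsev
      have hsodd : Odd s := by
        rcases Nat.even_or_odd s with h' | h'
        · exact absurd (Nat.even_iff.mp h') hsev
        · exact h'
      rw [hsodd.neg_one_pow] at hqd
      -- 0 = γs*δ + γs*δ = 2 γs δ
      have h2' : (2 : F) * (β (q + s) * β (q + k0 + ℓ₂)) = 0 := by linear_combination -hqd
      rcases mul_eq_zero.mp h2' with h' | h'
      · exact h2F h'
      · rcases mul_eq_zero.mp h' with h'' | h''
        · exact hstrail h''
        · exact hδ h''
  ----------------------------------------------------------------
  -- STEP 3 : final arithmetic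
  ----------------------------------------------------------------
  have htodd : t % 2 = 1 := by
    rcases hspar with ⟨h1, h2⟩ | ⟨h1, h2⟩ <;> omega
  refine ⟨Int.odd_iff.mpr htodd, by omega, by omega, ?_, ?_⟩
  · intro hcontra
    omega
  · refine ⟨((q : ℤ) - t) / 2, ?_, ?_⟩ <;> omega
end

section
/- Let F be a field, n > 1 an integer, and L an algebra of type n over F with nonzero sequence (β_i) and first constituent length ℓ. Let r ≥ n be an integer such that β_{ℓ+j} = 0 for all j with 0 < j ≤ r − n. Define g(x) = Σ_{i=0}^{n−1} β_{ℓ−i} x^i ∈ F[x]. Then the coefficient of x^j in (x−1)^{ℓ−n+1} g(x) is zero for every integer j with ℓ − r < j ≤ ℓ − n. -/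
open Finset Polynomial

lemma alt_sum_succ {R : Type*} [CommRing R] (k : ℕ) (f : ℕ → R) :
    ∑ t ∈ Finset.range (k+2), (-1:R)^t * ((k+1).choose t : R) * f t
      = ∑ t ∈ Finset.range (k+1), (-1:R)^t * (k.choose t : R) * f t
        - ∑ t ∈ Finset.range (k+1), (-1:R)^t * (k.choose t : R) * f (t+1) := by
  rw [Finset.sum_range_succ' (fun t => (-1:R)^t * ((k+1).choose t : R) * f t) (k+1),
      Finset.sum_range_succ' (fun t => (-1:R)^t * ((k).choose t : R) * f t) k]
  have h : ∀ t ∈ Finset.range (k+1), (-1:R)^(t+1) * ((k+1).choose (t+1) : R) * f (t+1)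
      = ((-1:R)^(t+1) * (k.choose (t+1) : R) * f (t+1))
        + (-((-1:R)^t * (k.choose t : R) * f (t+1))) := by
    intro t _
    rw [Nat.choose_succ_succ]
    push_cast
    ring
  rw [Finset.sum_congr rfl h, Finset.sum_add_distrib]
  have h2 : ∑ t ∈ Finset.range (k+1), (-1:R)^(t+1) * (k.choose (t+1) : R) * f (t+1)
      = ∑ t ∈ Finset.range k, (-1:R)^(t+1) * (k.choose (t+1) : R) * f (t+1) := by
    rw [Finset.sum_range_succ, Nat.choose_succ_self]
    simp
  rw [h2]
  simp only [Nat.choose_zero_right, Nat.cast_one, Finset.sum_neg_distrib]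
  ring

lemma coeff_X_sub_one_pow' {F : Type*} [CommRing F] (k t : ℕ) :
    ((X - 1 : F[X])^k).coeff t = if t ≤ k then (-1:F)^(t+k) * (k.choose t) else 0 := by
  rw [sub_pow, Polynomial.finset_sum_coeff]
  have key : ∀ m, ((-1:F[X])^(m+k) * X^m * 1^(k-m) * (k.choose m : F[X])).coeff t
      = (-1:F)^(m+k) * (k.choose m) * (if t = m then 1 else 0) := by
    intro m
    have h1 : ((-1:F[X])^(m+k) * X^m * 1^(k-m) * (k.choose m : F[X]))
        = Polynomial.C ((-1:F)^(m+k) * (k.choose m)) * X^m := by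
      simp only [one_pow, mul_one, map_mul, map_pow, map_neg, map_one, Polynomial.C_eq_natCast]
      ring
    rw [h1, Polynomial.coeff_C_mul, Polynomial.coeff_X_pow]
  rw [Finset.sum_congr rfl (fun m _ => key m)]
  split_ifs with h
  · rw [Finset.sum_eq_single t (fun m _ hm => by simp [Ne.symm hm])
      (fun ht => absurd (Finset.mem_range.mpr (by omega)) ht)]
    simp
  · apply Finset.sum_eq_zero
    intro m hm
    rw [Finset.mem_range] at hm
    rw [if_neg (by omega)]
    simp


/-- **Main argument (vanishing coefficients of `(x−1)^{ℓ−n+1} g(x)`).**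
Let `F` be a field, `n > 1`, and `L` an algebra of type `n` over `F` with nonzero
sequence `β` and first constituent length `ℓ`.  Let `r ≥ n` be such that
`β (ℓ+j) = 0` for `0 < j ≤ r − n`, and set `g(x) = Σ_{i=0}^{n−1} β (ℓ−i) x^i`.
Then the coefficient of `x^j` in `(x−1)^{ℓ−n+1} g(x)` vanishes for
`ℓ − r < j ≤ ℓ − n`. -/
theorem coeff_vanishing_from_second_constituent
    {F : Type*} [Field F]
    (n : ℕ) (hn1 : 1 < n)
    {L : Type*} [LieRing L] [LieAlgebra F L]
    (Lc : ℕ → Submodule F L)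
    (hinternal : DirectSum.IsInternal Lc)
    (h0 : Lc 0 = ⊥)
    (hgrade : ∀ i j : ℕ, ∀ x ∈ Lc i, ∀ y ∈ Lc j, ⁅x, y⁆ ∈ Lc (i + j))
    (hdim1 : Module.finrank F (Lc 1) = 1)
    (hmid : ∀ i : ℕ, 1 < i → i < n → Lc i = ⊥)
    (hdimn : ∀ i : ℕ, n ≤ i → Module.finrank F (Lc i) = 1)
    (hgen : ∀ i : ℕ, n ≤ i →
      Lc (i + 1) = Submodule.span F {w : L | ∃ x ∈ Lc i, ∃ u ∈ Lc 1, w = ⁅x, u⁆})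
    (z : L) (hz : z ∈ Lc 1) (hz0 : z ≠ 0)
    (e : ℕ → L) (hen : e n ∈ Lc n) (hen0 : e n ≠ 0)
    (hrec : ∀ i : ℕ, n ≤ i → e (i + 1) = ⁅e i, z⁆)
    (β : ℕ → F) (hβ : ∀ i : ℕ, n < i → ⁅e i, e n⁆ = β i • e (i + n))
    (hne : ∃ i : ℕ, n < i ∧ β i ≠ 0)
    (ℓ : ℕ) (hℓ2n : 2 * n ≤ ℓ)
    (hfz : ∀ i : ℕ, n < i → i + n ≤ ℓ → β i = 0)
    (hfl : β (ℓ - n + 1) ≠ 0)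
    (r : ℕ) (hr : n ≤ r)
    (hrz : ∀ j : ℕ, 0 < j → j + n ≤ r → β (ℓ + j) = 0)
    (g : Polynomial F)
    (hg : g = ∑ i ∈ Finset.range n, Polynomial.C (β (ℓ - i)) * Polynomial.X ^ i) :
    ∀ j : ℕ, ℓ < j + r → j + n ≤ ℓ →
      ((Polynomial.X - 1) ^ (ℓ - n + 1) * g).coeff j = 0 := by
  classical
  -- spanning from 1-dimensionality
  have key : ∀ (W : Submodule F L) (v : L), v ∈ W → v ≠ 0 → Module.finrank F W = 1 →
      ∀ x ∈ W, ∃ a : F, x = a • v := by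
    intro W v hv hv0 hW x hx
    obtain ⟨a, ha⟩ := (finrank_eq_one_iff_of_nonzero' (⟨v, hv⟩ : W)
      (by simp [Subtype.ext_iff, hv0])).mp hW ⟨x, hx⟩
    exact ⟨a, by simpa [Subtype.ext_iff] using ha.symm⟩
  have hz1 : ∀ x ∈ Lc 1, ∃ a : F, x = a • z := key _ z hz hz0 hdim1
  -- the elements e i for i ≥ n span Lc i and are nonzero
  have he : ∀ i, n ≤ i → e i ∈ Lc i ∧ e i ≠ 0 ∧ (∀ x ∈ Lc i, ∃ a : F, x = a • e i) := by
    intro i hi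
    induction i, hi using Nat.le_induction with
    | base => exact ⟨hen, hen0, key _ _ hen hen0 (hdimn n le_rfl)⟩
    | succ i hi ih =>
      obtain ⟨hmem, hne0, hspan⟩ := ih
      have hmem' : e (i+1) ∈ Lc (i+1) := by
        rw [hrec i hi]; exact hgrade i 1 _ hmem _ hz
      have hspan' : ∀ x ∈ Lc (i+1), ∃ a : F, x = a • e (i+1) := by
        intro x hx
        rw [hgen i hi] at hx
        refine Submodule.span_induction ?_ ?_ ?_ ?_ hx
        · rintro w ⟨x', hx', u, hu, rfl⟩
          obtain ⟨a, rfl⟩ := hspan x' hx'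
          obtain ⟨b, rfl⟩ := hz1 u hu
          exact ⟨a*b, by rw [hrec i hi, smul_lie, lie_smul, mul_smul]⟩
        · exact ⟨0, by simp⟩
        · rintro x y - - ⟨a, rfl⟩ ⟨b, rfl⟩
          exact ⟨a + b, by rw [add_smul]⟩
        · rintro t x - ⟨a, rfl⟩
          exact ⟨t * a, by rw [mul_smul]⟩
      have hne0' : e (i+1) ≠ 0 := by
        intro h
        have hbot : Lc (i+1) = ⊥ := by
          rw [Submodule.eq_bot_iff]
          intro x hx
          obtain ⟨a, rfl⟩ := hspan' x hx
          rw [h, smul_zero]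
        have := hdimn (i+1) (by omega)
        rw [hbot] at this
        simp at this
      exact ⟨hmem', hne0', hspan'⟩
  -- structure constants
  have hexist : ∀ i m : ℕ, ∃ a : F, n ≤ i → n ≤ m → ⁅e i, e m⁆ = a • e (i+m) := by
    intro i m
    by_cases hi : n ≤ i
    · by_cases hm : n ≤ m
      · have hmem : ⁅e i, e m⁆ ∈ Lc (i+m) := hgrade i m _ (he i hi).1 _ (he m hm).1
        obtain ⟨a, ha⟩ := (he (i+m) (by omega)).2.2 _ hmem
        exact ⟨a, fun _ _ => ha⟩
      · exact ⟨0, fun _ h => absurd h hm⟩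
    · exact ⟨0, fun h _ => absurd h hi⟩
  choose c hc using hexist
  have uniq : ∀ q, n ≤ q → ∀ a b : F, a • e q = b • e q → a = b := by
    intro q hq a b hab
    have h1 : (a - b) • e q = 0 := by rw [sub_smul, hab, sub_self]
    rcases smul_eq_zero.mp h1 with h | h
    · exact sub_eq_zero.mp h
    · exact absurd h (he q hq).2.1
  have hcn : ∀ i, n < i → c i n = β i := by
    intro i hi
    exact uniq (i+n) (by omega) _ _ ((hc i n (by omega) le_rfl).symm.trans (hβ i hi))
  have hcnn : c n n = 0 := by
    have h1 : ⁅e n, e n⁆ = c n n • e (n+n) := hc n n le_rfl le_rfl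
    rw [lie_self] at h1
    exact uniq (n+n) (by omega) _ 0 (by rw [zero_smul, ← h1])
  have hanti : ∀ i m, n ≤ i → n ≤ m → c i m = - c m i := by
    intro i m hi hm
    have h2 : ⁅e m, e i⁆ = c m i • e (i+m) := by
      rw [hc m i hm hi, show m+i = i+m from by omega]
    apply uniq (i+m) (by omega)
    rw [← hc i m hi hm, ← lie_skew, h2, neg_smul]
  have hrec2 : ∀ i m, n ≤ i → n ≤ m → c i (m+1) = c i m - c (i+1) m := by
    intro i m hi hm
    have hjac : ⁅e i, e (m+1)⁆ = ⁅⁅e i, e m⁆, z⁆ + ⁅e m, ⁅e i, z⁆⁆ := by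
      rw [hrec m hm, leibniz_lie]
    have h1 : ⁅⁅e i, e m⁆, z⁆ = c i m • e (i+(m+1)) := by
      rw [hc i m hi hm, smul_lie, ← hrec (i+m) (by omega), show i+m+1 = i+(m+1) from by omega]
    have h2 : ⁅e m, ⁅e i, z⁆⁆ = (- c (i+1) m) • e (i+(m+1)) := by
      rw [← hrec i hi, hc m (i+1) hm (by omega), show m+(i+1) = i+(m+1) from by omega,
          hanti m (i+1) hm (by omega)]
    apply uniq (i+(m+1)) (by omega)
    rw [← hc i (m+1) hi (by omega), hjac, h1, h2, sub_smul, neg_smul, ← sub_eq_add_neg]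
  have hbinom : ∀ k, ∀ i, n ≤ i →
      c i (n+k) = ∑ t ∈ Finset.range (k+1), (-1:F)^t * (k.choose t) * c (i+t) n := by
    intro k
    induction k with
    | zero => intro i hi; simp
    | succ k ih =>
      intro i hi
      rw [show n+(k+1) = (n+k)+1 from by omega, hrec2 i (n+k) hi (by omega), ih i hi,
          ih (i+1) (by omega), show k+1+1 = k+2 from rfl, alt_sum_succ k (fun t => c (i+t) n)]
      congr 1
      apply Finset.sum_congr rfl
      intro t _
      rw [show i+1+t = i+(t+1) from by omega]
  -- vanishing values of c in the relevant ranges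
  have hcvan1 : ∀ m, n ≤ m → m ≤ ℓ - n → c m n = 0 := by
    intro m hm1 hm2
    rcases eq_or_lt_of_le hm1 with h | h
    · rw [← h]; exact hcnn
    · rw [hcn m h]; exact hfz m h (by omega)
  have hcvan2 : ∀ t, 0 < t → t + n ≤ r → c (ℓ + t) n = 0 := by
    intro t ht1 ht2
    rw [hcn (ℓ + t) (by omega)]
    exact hrz t ht1 ht2
  intro j hj1 hj2
  set k := ℓ - n + 1 with hk
  have hnk : n + k = ℓ + 1 := by omega
  -- the key alternating sum vanishes
  have hT : ∑ t ∈ Finset.range (k+1), (-1:F)^t * (k.choose t : F) * c (ℓ - j + t) n = 0 := by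
    rw [← hbinom k (ℓ - j) (by omega), hnk, hanti (ℓ - j) (ℓ + 1) (by omega) (by omega),
        neg_eq_zero, show ℓ - j = n + (ℓ - j - n) from by omega,
        hbinom (ℓ - j - n) (ℓ + 1) (by omega)]
    apply Finset.sum_eq_zero
    intro t ht
    rw [Finset.mem_range] at ht
    rw [show ℓ + 1 + t = ℓ + (t + 1) from by omega, hcvan2 (t+1) (by omega) (by omega), mul_zero]
  -- express the target coefficient
  have hcoeffg : ((X - 1 : F[X])^k * g).coeff j
      = ∑ i ∈ Finset.range n,
          (if i ≤ j then (-1:F)^((j-i)+k) * (k.choose (j-i) : F) * β (ℓ - i) else 0) := by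
    rw [hg, Finset.mul_sum, Polynomial.finset_sum_coeff]
    apply Finset.sum_congr rfl
    intro i _
    rw [show (X - 1 : F[X])^k * (C (β (ℓ - i)) * X ^ i)
          = ((X - 1 : F[X])^k * C (β (ℓ - i))) * X ^ i from by ring,
        Polynomial.coeff_mul_X_pow', Polynomial.coeff_mul_C, coeff_X_sub_one_pow']
    split_ifs with h1 h2
    · ring
    · exfalso; omega
    · rfl
  rw [hcoeffg]
  -- identify with the alternating sum via the bijection i ↦ j - i
  have hmain : ∑ i ∈ Finset.range n,
        (if i ≤ j then (-1:F)^((j-i)+k) * (k.choose (j-i) : F) * β (ℓ - i) else 0)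
      = (-1:F)^k * ∑ t ∈ Finset.range (k+1), (-1:F)^t * (k.choose t : F) * c (ℓ - j + t) n := by
    rw [Finset.mul_sum, ← Finset.sum_filter]
    have hshrink : ∑ t ∈ Finset.range (k+1),
          (-1:F)^k * ((-1:F)^t * (k.choose t : F) * c (ℓ - j + t) n)
        = ∑ t ∈ (Finset.range (k+1)).filter (fun t => t ≤ j ∧ j < n + t),
          (-1:F)^k * ((-1:F)^t * (k.choose t : F) * c (ℓ - j + t) n) := by
      symm
      apply Finset.sum_subset (Finset.filter_subset _ _)
      intro t ht hnt
      rw [Finset.mem_range] at ht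
      rw [Finset.mem_filter, Finset.mem_range] at hnt
      by_cases h1 : t ≤ j
      · have h2 : ¬ (j < n + t) := by tauto
        rw [hcvan1 (ℓ - j + t) (by omega) (by omega), mul_zero, mul_zero]
      · rw [show ℓ - j + t = ℓ + (t - j) from by omega,
            hcvan2 (t - j) (by omega) (by omega), mul_zero, mul_zero]
    rw [hshrink]
    symm
    apply Finset.sum_nbij' (fun t => j - t) (fun i => j - i)
    · intro t ht
      rw [Finset.mem_filter, Finset.mem_range] at ht
      rw [Finset.mem_filter, Finset.mem_range]
      omega
    · intro i hi
      rw [Finset.mem_filter, Finset.mem_range] at hi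
      rw [Finset.mem_filter, Finset.mem_range]
      omega
    · intro t ht
      rw [Finset.mem_filter, Finset.mem_range] at ht
      omega
    · intro i hi
      rw [Finset.mem_filter, Finset.mem_range] at hi
      omega
    · intro t ht
      rw [Finset.mem_filter, Finset.mem_range] at ht
      rw [show j - (j - t) = t from by omega, show ℓ - (j - t) = ℓ - j + t from by omega,
          ← hcn (ℓ - j + t) (by omega), pow_add]
      ring
  rw [hmain, hT, mul_zero]
end

section
/- Let L be a Lie ring (equivalently, a Lie algebra over ℤ or over any commutative ring), let a, b, c ∈ L, and let i be a non-negative integer. Writing [x, c^j] for the left-normed iterated bracket [[…[[x, c], c], …], c] with j occurrences of c, the generalized Jacobi identity holds: [a, [b, c^i]] = Σ_{j=0}^{i} (−1)^j C(i, j) [[[a, c^j], b], c^{i−j}], where C(i, j) is the binomial coefficient acting by integer scalar multiplication on L. -/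
/-- The left-normed iterated bracket `[x, c^j]`: `[x, c^0] = x` and
`[x, c^j] = [[x, c^{j−1}], c]`. -/
def iterBracket {L : Type*} [LieRing L] (x c : L) : ℕ → L
  | 0 => x
  | j + 1 => ⁅iterBracket x c j, c⁆

lemma iterBracket_lie_base {L : Type*} [LieRing L] (x c : L) (j : ℕ) :
    iterBracket ⁅x, c⁆ c j = iterBracket x c (j + 1) := by
  induction j with
  | zero => rfl
  | succ j ih => show ⁅iterBracket ⁅x, c⁆ c j, c⁆ = _; rw [ih]; rfl

/-- **The generalized Jacobi identity.**
In any Lie ring `L`, for `a b c ∈ L` and `i ≥ 0`: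
`[a, [b, c^i]] = Σ_{j=0}^{i} (−1)^j C(i, j) [[[a, c^j], b], c^{i−j}]`. -/
theorem generalized_jacobi_identity
    {L : Type*} [LieRing L] (a b c : L) (i : ℕ) :
    ⁅a, iterBracket b c i⁆ =
      ∑ j ∈ Finset.range (i + 1),
        ((-1 : ℤ) ^ j * (i.choose j : ℤ)) •
          iterBracket ⁅iterBracket a c j, b⁆ c (i - j) := by
  induction i generalizing a with
  | zero => simp [iterBracket]
  | succ i ih =>
    set g : ℕ → L := fun j => iterBracket ⁅iterBracket a c j, b⁆ c (i + 1 - j) with hg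
    have h1 : ⁅a, iterBracket b c (i + 1)⁆ =
        ⁅⁅a, iterBracket b c i⁆, c⁆ - ⁅⁅a, c⁆, iterBracket b c i⁆ := by
      show ⁅a, ⁅iterBracket b c i, c⁆⁆ = _
      rw [leibniz_lie, ← lie_skew (iterBracket b c i) ⁅a, c⁆, sub_eq_add_neg]
    have hsum : ∀ (s : Finset ℕ) (f : ℕ → L), ⁅∑ j ∈ s, f j, c⁆ = ∑ j ∈ s, ⁅f j, c⁆ :=
      fun s f => map_sum (⟨⟨fun x => ⁅x, c⁆, zero_lie c⟩, fun x y => add_lie x y c⟩ : L →+ L) f s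
    rw [h1, ih a, ih ⁅a, c⁆, hsum]
    have e1 : ∀ j ∈ Finset.range (i + 1),
        ⁅((-1 : ℤ) ^ j * (i.choose j : ℤ)) •
          iterBracket ⁅iterBracket a c j, b⁆ c (i - j), c⁆ =
        ((-1 : ℤ) ^ j * (i.choose j : ℤ)) • g j := by
      intro j hj
      rw [smul_lie]
      congr 1
      show iterBracket ⁅iterBracket a c j, b⁆ c (i - j + 1) = _
      rw [hg]
      have := Finset.mem_range.mp hj
      congr 1
      omega
    have e2 : ∀ j ∈ Finset.range (i + 1),
        ((-1 : ℤ) ^ j * (i.choose j : ℤ)) •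
          iterBracket ⁅iterBracket ⁅a, c⁆ c j, b⁆ c (i - j) =
        ((-1 : ℤ) ^ j * (i.choose j : ℤ)) • g (j + 1) := by
      intro j hj
      have := Finset.mem_range.mp hj
      congr 1
      rw [iterBracket_lie_base, hg]
      show _ = iterBracket ⁅iterBracket a c (j + 1), b⁆ c (i + 1 - (j + 1))
      congr 1
      omega
    rw [Finset.sum_congr rfl e1, Finset.sum_congr rfl e2]
    -- split off j = 0 from first sum, j = i from shifted index of second
    rw [Finset.sum_range_succ' (fun j => ((-1 : ℤ) ^ j * (i.choose j : ℤ)) • g j),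
      Finset.sum_range_succ' (fun j => ((-1 : ℤ) ^ j * ((i+1).choose j : ℤ)) • g j)]
    simp only [pow_zero, Nat.choose_zero_right, Nat.cast_one, one_mul, one_smul]
    have e3 : ∀ j ∈ Finset.range i,
        ((-1 : ℤ) ^ (j+1) * (i.choose (j+1) : ℤ)) • g (j+1) =
        ((-1 : ℤ) ^ (j+1) * (i.choose (j+1) : ℤ)) • g (j+1) := fun _ _ => rfl
    -- extend first sum from range i to range (i+1): extra term is zero
    have e4 : ∑ j ∈ Finset.range i, ((-1 : ℤ) ^ (j+1) * (i.choose (j+1) : ℤ)) • g (j+1)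
        = ∑ j ∈ Finset.range (i+1), ((-1 : ℤ) ^ (j+1) * (i.choose (j+1) : ℤ)) • g (j+1) := by
      rw [Finset.sum_range_succ, Nat.choose_succ_self]
      simp
    rw [e4, add_sub_right_comm, ← Finset.sum_sub_distrib]
    have e5 : ∀ j ∈ Finset.range (i+1),
        ((-1 : ℤ) ^ (j+1) * (i.choose (j+1) : ℤ)) • g (j+1)
          - ((-1 : ℤ) ^ j * (i.choose j : ℤ)) • g (j+1)
        = ((-1 : ℤ) ^ (j+1) * ((i+1).choose (j+1) : ℤ)) • g (j+1) := by
      intro j hj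
      rw [← sub_smul]
      congr 1
      rw [Nat.choose_succ_succ]
      push_cast
      ring
    rw [Finset.sum_congr rfl e5]
end
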